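/- arXiv:math/0511122 — 5 statements merged into one kernel-verified Lean document; each statement's English description precedes it below -/
import Mathlib

section
/- Let g be a holomorphic automorphism of ℂ^N, let K ⊂ ℂ^N be compact, and let K' ⊂ ℂ^N be a compact set with K contained in the interior of K'. Then for every ε > 0 there exists δ > 0 such that every holomorphic automorphism φ of ℂ^N satisfying sup_{z∈K'} |φ(z) − g(z)| < δ also satisfies sup_{w∈g(K)} |φ⁻¹(w) − g⁻¹(w)| < ε. -/
open Metric Set

/-- A holomorphic automorphism of ℂ^N: a bijection that is holomorphic with
holomorphic inverse. -/
def IsAutomorphism {N : ℕ} (Φ : (Fin N → ℂ) → (Fin N → ℂ)) : Prop :=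
  Differentiable ℂ Φ ∧ ∃ Ψ : (Fin N → ℂ) → (Fin N → ℂ),
    Differentiable ℂ Ψ ∧ (∀ z, Ψ (Φ z) = z) ∧ (∀ w, Φ (Ψ w) = w)

/-- A discrete sequence without repetitions in ℂ^N. -/
def DiscreteSeq {N : ℕ} (a : ℕ → (Fin N → ℂ)) : Prop :=
  Function.Injective a ∧
  ∀ K : Set (Fin N → ℂ), IsCompact K → {j : ℕ | a j ∈ K}.Finite

/-- A sequence in ℂ^N is tame if some holomorphic automorphism sends `a j`
to `e j = (j, 0, …, 0)` for every `j`. -/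
def Tame {N : ℕ} (a : ℕ → (Fin N → ℂ)) : Prop :=
  ∃ Φ : (Fin N → ℂ) → (Fin N → ℂ), IsAutomorphism Φ ∧
    ∀ j : ℕ, Φ (a j) = fun i : Fin N => if (i : ℕ) = 0 then (j : ℂ) else 0

/-- A closed complex subvariety of ℂ^N: locally the common zero set of a family
of holomorphic functions. -/
def IsClosedSubvariety {N : ℕ} (X : Set (Fin N → ℂ)) : Prop :=
  IsClosed X ∧ ∀ p : Fin N → ℂ, ∃ U : Set (Fin N → ℂ), IsOpen U ∧ p ∈ U ∧
    ∃ F : Set ((Fin N → ℂ) → ℂ), (∀ f ∈ F, DifferentiableOn ℂ f U) ∧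
      X ∩ U = {z ∈ U | ∀ f ∈ F, f z = 0}

/-- Polynomial convexity: `K` equals its polynomial hull. -/
def PolyConvex {N : ℕ} (K : Set (Fin N → ℂ)) : Prop :=
  K = {z : Fin N → ℂ | ∀ p : MvPolynomial (Fin N) ℂ,
    ‖MvPolynomial.eval z p‖ ≤ ⨆ w ∈ K, ‖MvPolynomial.eval w p‖}

/-- `Φ` is a biholomorphic map from the open set `Ω` onto all of ℂ^N. -/
def BiholoOnto {N : ℕ} (Ω : Set (Fin N → ℂ)) (Φ : (Fin N → ℂ) → (Fin N → ℂ)) : Prop :=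
  DifferentiableOn ℂ Φ Ω ∧ ∃ Ψ : (Fin N → ℂ) → (Fin N → ℂ),
    Differentiable ℂ Ψ ∧ (∀ z ∈ Ω, Ψ (Φ z) = z) ∧ (∀ w, Ψ w ∈ Ω ∧ Φ (Ψ w) = w)

/-- Approximation of an automorphism on a slightly larger compact set forces
approximation of the inverse on the image of the smaller set. -/
theorem stmt_6 {N : ℕ}
    (g ginv : (Fin N → ℂ) → (Fin N → ℂ))
    (hg : Differentiable ℂ g) (hginv : Differentiable ℂ ginv)
    (hgl : ∀ z, ginv (g z) = z) (hgr : ∀ w, g (ginv w) = w)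
    (K K' : Set (Fin N → ℂ)) (hK : IsCompact K) (hK' : IsCompact K')
    (hKK' : K ⊆ interior K')
    (ε : ℝ) (hε : 0 < ε) :
    ∃ δ : ℝ, 0 < δ ∧
      ∀ φ φinv : (Fin N → ℂ) → (Fin N → ℂ),
        Differentiable ℂ φ → Differentiable ℂ φinv →
        (∀ z, φinv (φ z) = z) → (∀ w, φ (φinv w) = w) →
        (∀ z ∈ K', ‖φ z - g z‖ < δ) →
        ∀ w ∈ g '' K, ‖φinv w - ginv w‖ < ε := by
  rcases N.eq_zero_or_pos with hN | hN
  · subst hN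
    refine ⟨1, one_pos, fun φ φinv _ _ _ _ _ w _ => ?_⟩
    have h : φinv w = ginv w := Subsingleton.elim _ _
    rw [h, sub_self, norm_zero]; exact hε
  rcases Set.eq_empty_or_nonempty K with hKe | hKe
  · exact ⟨1, one_pos, fun φ φinv _ _ _ _ _ w hw => by simp [hKe] at hw⟩
  haveI : Nonempty (Fin N) := ⟨⟨0, hN⟩⟩
  obtain ⟨r0, hr0, hthick⟩ := hK.exists_thickening_subset_open isOpen_interior hKK'
  set r : ℝ := min (r0 / 2) (ε / 2) with hrdef
  have hrpos : 0 < r := lt_min (by linarith) (by linarith)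
  have hrlt : r < r0 := lt_of_le_of_lt (min_le_left _ _) (by linarith)
  have hrε : r < ε := lt_of_le_of_lt (min_le_right _ _) (by linarith)
  have hball : ∀ z ∈ K, closedBall z r ⊆ K' := by
    intro z hz x hx
    have hx' : x ∈ thickening r0 K := by
      rw [Metric.mem_thickening_iff]
      exact ⟨z, hz, lt_of_le_of_lt (mem_closedBall.1 hx) hrlt⟩
    exact interior_subset (hthick hx')
  -- minimum of ‖g (z + v) - g z‖ over z ∈ K, ‖v‖ = r
  have hsph : IsCompact (K ×ˢ sphere (0 : Fin N → ℂ) r) :=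
    hK.prod (isCompact_sphere _ _)
  have hsphne : (K ×ˢ sphere (0 : Fin N → ℂ) r).Nonempty :=
    hKe.prod (NormedSpace.sphere_nonempty.2 hrpos.le)
  have hcont : Continuous fun p : (Fin N → ℂ) × (Fin N → ℂ) => ‖g (p.1 + p.2) - g p.1‖ :=
    ((hg.continuous.comp (continuous_fst.add continuous_snd)).sub
      (hg.continuous.comp continuous_fst)).norm
  obtain ⟨⟨z0, v0⟩, hmem0, hmin⟩ := hsph.exists_isMinOn hsphne hcont.continuousOn
  set c : ℝ := ‖g (z0 + v0) - g z0‖ with hcdef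
  have hv0 : v0 ≠ 0 := by
    have := mem_sphere_zero_iff_norm.1 hmem0.2
    intro h; rw [h, norm_zero] at this; exact (ne_of_gt hrpos) this.symm
  have hginj : Function.Injective g := fun a b h => by
    have := congrArg ginv h; rwa [hgl, hgl] at this
  have hcpos : 0 < c := by
    rw [hcdef, norm_sub_pos_iff]
    intro h
    have h2 : z0 + v0 = z0 := hginj h
    exact hv0 (by simpa using h2)
  refine ⟨c / 2, by linarith, fun φ φinv hφ hφinv hl hr' hclose w hw => ?_⟩
  obtain ⟨z, hz, rfl⟩ := hw
  -- key sphere estimate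
  have hkey : ∀ x, dist x z = r → c ≤ ‖g x - g z‖ := by
    intro x hx
    have hm : (z, x - z) ∈ K ×ˢ sphere (0 : Fin N → ℂ) r :=
      ⟨hz, mem_sphere_zero_iff_norm.2 (by rw [← dist_eq_norm]; exact hx)⟩
    have := hmin hm
    simpa [isMinOn_iff] using this
  -- no point of the ball B(g z, c/2) has φ-preimage on the sphere
  have hnosphere : ∀ y ∈ ball (g z) (c / 2), dist (φinv y) z ≠ r := by
    intro y hy hsp
    have h1 : φinv y ∈ K' := hball z hz (mem_closedBall.2 (le_of_eq hsp))
    have h2 : c ≤ ‖g (φinv y) - g z‖ := hkey _ hsp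
    have h3 : ‖φ (φinv y) - g (φinv y)‖ < c / 2 := hclose _ h1
    rw [hr' y] at h3
    have h4 : ‖y - g z‖ < c / 2 := mem_ball_iff_norm.1 hy
    have h5 : ‖g (φinv y) - g z‖ ≤ ‖g (φinv y) - y‖ + ‖y - g z‖ :=
      norm_sub_le_norm_sub_add_norm_sub _ _ _
    rw [norm_sub_rev] at h3
    linarith
  -- connectedness argument
  have hpre : IsPreconnected (ball (g z) (c / 2)) :=
    (convex_ball (g z) (c / 2)).isPreconnected
  have hcover : ball (g z) (c / 2) ⊆
      (φinv ⁻¹' (ball z r)) ∪ (φinv ⁻¹' ((closedBall z r)ᶜ)) := by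
    intro y hy
    rcases lt_trichotomy (dist (φinv y) z) r with h | h | h
    · exact Or.inl (mem_preimage.2 (mem_ball.2 h))
    · exact absurd h (hnosphere y hy)
    · exact Or.inr (mem_preimage.2 fun hc => absurd (mem_closedBall.1 hc) (not_le.2 h))
  have hφz : φ z ∈ ball (g z) (c / 2) := by
    rw [mem_ball, dist_eq_norm]; exact hclose z (hball z hz (mem_closedBall_self hrpos.le))
  have hφzU : φ z ∈ φinv ⁻¹' (ball z r) := by
    rw [mem_preimage, hl z]; exact mem_ball_self hrpos
  have hVempty : ball (g z) (c / 2) ∩ (φinv ⁻¹' ((closedBall z r)ᶜ)) = ∅ := by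
    by_contra hne
    obtain ⟨y, hy⟩ := hpre _ _ (isOpen_ball.preimage hφinv.continuous)
      ((isOpen_compl_iff.2 Metric.isClosed_closedBall).preimage hφinv.continuous) hcover
      ⟨φ z, hφz, hφzU⟩ (Set.nonempty_iff_ne_empty.2 hne)
    exact hy.2.2 (ball_subset_closedBall hy.2.1)
  have hwB : g z ∈ ball (g z) (c / 2) := mem_ball_self (by linarith)
  have hwV : g z ∉ φinv ⁻¹' ((closedBall z r)ᶜ) := fun h => by
    rw [← Set.mem_empty_iff_false (g z)]; rw [← hVempty]; exact ⟨hwB, h⟩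
  have hwcb : φinv (g z) ∈ closedBall z r := not_not.1 (fun h => hwV h)
  have hlt : dist (φinv (g z)) z < r :=
    lt_of_le_of_ne (mem_closedBall.1 hwcb) (hnosphere _ hwB)
  rw [hgl z, ← dist_eq_norm]
  exact lt_trans hlt hrε
end

section
/- Let (Φ_k)_{k∈ℕ} be a sequence of holomorphic automorphisms of ℂ^N and let (r_k)_{k∈ℕ} be radii with r_{k+1} ≥ r_k + 1 for all k (so r_k → ∞). Let B_k denote the open ball of radius r_k centered at 0, and assume that for every k, |Φ_{k+1}(z) − Φ_k(z)| < 2^{−k} for all z ∈ Φ_k⁻¹(B_k). Then the set Ω := ⋃_{k∈ℕ} Φ_k⁻¹(B_k) is open, the sequence (Φ_k) converges uniformly on every compact subset of Ω to a holomorphic map Φ, and Φ is a biholomorphic map of Ω onto all of ℂ^N. Moreover, Ω is exactly the set of points z ∈ ℂ^N for which the sequence (Φ_k(z))_{k∈ℕ} is bounded. -/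
open Metric Set

open Filter Topology


lemma fb_half_pos (m : ℕ) : (0:ℝ) < (2:ℝ)⁻¹ ^ m := by positivity

lemma fb_half_le_one (m : ℕ) : (2:ℝ)⁻¹ ^ m ≤ 1 := by
  apply pow_le_one₀ <;> norm_num

lemma fb_half_anti {n m : ℕ} (h : n ≤ m) : (2:ℝ)⁻¹ ^ m ≤ (2:ℝ)⁻¹ ^ n := by
  apply pow_le_pow_of_le_one (by norm_num) (by norm_num) h

lemma fb_exists_N (c : ℝ) {ε : ℝ} (hε : 0 < ε) (k : ℕ) :
    ∃ n : ℕ, k ≤ n ∧ c * (2:ℝ)⁻¹ ^ n < ε := by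
  have h0 : Tendsto (fun n : ℕ => c * (2:ℝ)⁻¹ ^ n) atTop (𝓝 0) := by
    simpa using (tendsto_pow_atTop_nhds_zero_of_lt_one (by norm_num : (0:ℝ) ≤ 2⁻¹)
      (by norm_num : (2:ℝ)⁻¹ < 1)).const_mul c
  have h1 := (h0.eventually_lt_const hε).and (eventually_ge_atTop k)
  obtain ⟨n, hn1, hn2⟩ := h1.exists
  exact ⟨n, hn2, hn1⟩

lemma fb_tele {E : Type*} [NormedAddCommGroup E] {u : ℕ → E} {c : ℝ} {k : ℕ}
    (h : ∀ m, k ≤ m → ‖u (m+1) - u m‖ ≤ c * (2:ℝ)⁻¹ ^ m) :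
    ∀ n, k ≤ n → ∀ m, n ≤ m →
      ‖u m - u n‖ ≤ c * (2 * (2:ℝ)⁻¹ ^ n - 2 * (2:ℝ)⁻¹ ^ m) := by
  intro n hn m hm
  induction m, hm using Nat.le_induction with
  | base => simp
  | succ m hm ih =>
    have h1 := h m (hn.trans hm)
    have h2 : u (m+1) - u n = (u (m+1) - u m) + (u m - u n) := by abel
    calc ‖u (m+1) - u n‖ ≤ ‖u (m+1) - u m‖ + ‖u m - u n‖ := by
          rw [h2]; exact norm_add_le _ _
      _ ≤ c * (2:ℝ)⁻¹ ^ m + c * (2 * (2:ℝ)⁻¹ ^ n - 2 * (2:ℝ)⁻¹ ^ m) :=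
          add_le_add h1 ih
      _ = c * (2 * (2:ℝ)⁻¹ ^ n - 2 * (2:ℝ)⁻¹ ^ (m+1)) := by ring

lemma fb_tele' {E : Type*} [NormedAddCommGroup E] {u : ℕ → E} {c : ℝ} {k : ℕ} (hc : 0 ≤ c)
    (h : ∀ m, k ≤ m → ‖u (m+1) - u m‖ ≤ c * (2:ℝ)⁻¹ ^ m) :
    ∀ n, k ≤ n → ∀ m, n ≤ m → ‖u m - u n‖ ≤ c * (2 * (2:ℝ)⁻¹ ^ n) := by
  intro n hn m hm
  refine (fb_tele h n hn m hm).trans ?_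
  have := fb_half_pos m
  nlinarith

lemma fb_cauchy_of_tele {E : Type*} [NormedAddCommGroup E] {u : ℕ → E} {c : ℝ} {k : ℕ}
    (hc : 0 ≤ c) (h : ∀ m, k ≤ m → ‖u (m+1) - u m‖ ≤ c * (2:ℝ)⁻¹ ^ m) :
    CauchySeq u := by
  rw [Metric.cauchySeq_iff']
  intro ε hε
  obtain ⟨n0, hn0k, hn0⟩ := fb_exists_N (c * 2) hε k
  refine ⟨n0, fun n hn => ?_⟩
  calc dist (u n) (u n0) = ‖u n - u n0‖ := dist_eq_norm _ _
    _ ≤ c * (2 * (2:ℝ)⁻¹ ^ n0) := fb_tele' hc h n0 hn0k n hn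
    _ = c * 2 * (2:ℝ)⁻¹ ^ n0 := by ring
    _ < ε := hn0

lemma fb_ucauchy_of_tele {γ : Type*} {E : Type*} [NormedAddCommGroup E] {F : ℕ → γ → E}
    {s : Set γ} {c : ℝ} {k : ℕ} (hc : 0 ≤ c)
    (h : ∀ m, k ≤ m → ∀ x ∈ s, ‖F (m+1) x - F m x‖ ≤ c * (2:ℝ)⁻¹ ^ m) :
    UniformCauchySeqOn F atTop s := by
  rw [Metric.uniformCauchySeqOn_iff]
  intro ε hε
  obtain ⟨n0, hn0k, hn0⟩ := fb_exists_N (c * 2) hε k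
  refine ⟨n0, fun m hm n hn x hx => ?_⟩
  have key : ∀ a b : ℕ, n0 ≤ a → a ≤ b → dist (F b x) (F a x) < ε := by
    intro a b ha hab
    calc dist (F b x) (F a x) = ‖F b x - F a x‖ := dist_eq_norm _ _
      _ ≤ c * (2 * (2:ℝ)⁻¹ ^ a) :=
          fb_tele' (u := fun n => F n x) hc (fun m hm => h m hm x hx) a (hn0k.trans ha) b hab
      _ = c * 2 * (2:ℝ)⁻¹ ^ a := by ring
      _ ≤ c * 2 * (2:ℝ)⁻¹ ^ n0 := by
          have := fb_half_anti ha
          nlinarith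
      _ < ε := hn0
  rcases le_total m n with hmn | hmn
  · rw [dist_comm]; exact key m n hm hmn
  · exact key n m hn hmn

lemma fb_ptCauchy {γ : Type*} {E : Type*} [NormedAddCommGroup E] {F : ℕ → γ → E}
    {s : Set γ} (h : UniformCauchySeqOn F atTop s) {x : γ} (hx : x ∈ s) :
    CauchySeq fun n => F n x := by
  rw [Metric.uniformCauchySeqOn_iff] at h
  rw [Metric.cauchySeq_iff]
  intro ε hε
  obtain ⟨n0, hn0⟩ := h ε hε
  exact ⟨n0, fun m hm n hn => hn0 m hm n hn x hx⟩


lemma fb_CE {N : ℕ} {F : (Fin N → ℂ) → (Fin N → ℂ)} (hF : Differentiable ℂ F)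
    {z0 : Fin N → ℂ} {R ε : ℝ} (hR : 0 < R) (hε : 0 < ε)
    (hb : ∀ y ∈ ball z0 R, ‖F y‖ ≤ ε) : ‖fderiv ℂ F z0‖ ≤ 3 * ε / R := by
  refine ContinuousLinearMap.opNorm_le_bound _ (by positivity) (fun u => ?_)
  rcases eq_or_ne u 0 with rfl | hu
  · simp
  have hun : (0:ℝ) < ‖u‖ := norm_pos_iff.2 hu
  set R₁ : ℝ := R / ‖u‖ with hR₁def
  have hR₁ : 0 < R₁ := by positivity
  set g : ℂ → (Fin N → ℂ) := fun ζ => F (z0 + ζ • u) with hg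
  have hmem : ∀ ζ : ℂ, ζ ∈ ball (0:ℂ) R₁ → z0 + ζ • u ∈ ball z0 R := by
    intro ζ hζ
    rw [mem_ball] at hζ ⊢
    have : dist (z0 + ζ • u) z0 = ‖ζ‖ * ‖u‖ := by
      rw [dist_eq_norm]
      simp [norm_smul]
    rw [this]
    have hζ' : ‖ζ‖ < R₁ := by simpa [dist_eq_norm] using hζ
    calc ‖ζ‖ * ‖u‖ < R₁ * ‖u‖ := by exact mul_lt_mul_of_pos_right hζ' hun
      _ = R := div_mul_cancel₀ R hun.ne'
  have hgd : Differentiable ℂ g :=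
    hF.comp ((differentiable_id.smul_const u).const_add z0)
  have hmaps : MapsTo g (ball (0:ℂ) R₁) (ball (g 0) (3 * ε)) := by
    intro ζ hζ
    rw [mem_ball]
    have h1 : ‖g ζ‖ ≤ ε := hb _ (hmem ζ hζ)
    have h2 : ‖g 0‖ ≤ ε := by
      apply hb
      simpa using hmem 0 (by simpa [dist_eq_norm] using hR₁)
    calc dist (g ζ) (g 0) ≤ ‖g ζ‖ + ‖g 0‖ := by
          rw [dist_eq_norm]; exact norm_sub_le _ _
      _ ≤ ε + ε := add_le_add h1 h2
      _ < 3 * ε := by linarith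
  have hder : HasDerivAt g (fderiv ℂ F z0 u) 0 := by
    have h1 : HasDerivAt (fun ζ : ℂ => z0 + ζ • u) u 0 := by
      simpa using ((hasDerivAt_id (0:ℂ)).smul_const u).const_add z0
    have h2 : HasFDerivAt F (fderiv ℂ F z0) (z0 + (0:ℂ) • u) := by
      simpa using (hF z0).hasFDerivAt
    exact h2.comp_hasDerivAt (0:ℂ) h1
  have hSch := Complex.norm_deriv_le_div_of_mapsTo_ball hgd.differentiableOn (hmaps.mono_right ball_subset_closedBall) hR₁
  rw [hder.deriv] at hSch
  calc ‖fderiv ℂ F z0 u‖ ≤ 3 * ε / R₁ := hSch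
    _ = 3 * ε / R * ‖u‖ := by rw [hR₁def]; field_simp

lemma fb_fderiv_ucauchy {N : ℕ} {F : ℕ → (Fin N → ℂ) → (Fin N → ℂ)}
    (hF : ∀ n, Differentiable ℂ (F n)) {s t : Set (Fin N → ℂ)} {R c : ℝ} {k : ℕ}
    (hR : 0 < R) (hc : 0 < c)
    (hsub : ∀ y ∈ t, ball y R ⊆ s)
    (hclose : ∀ n, k ≤ n → ∀ m, n ≤ m → ∀ x ∈ s, ‖F m x - F n x‖ ≤ c * (2:ℝ)⁻¹ ^ n) :
    UniformCauchySeqOn (fun n => fderiv ℂ (F n)) atTop t := by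
  rw [Metric.uniformCauchySeqOn_iff]
  intro ε hε
  obtain ⟨n0, hn0k, hn0⟩ := fb_exists_N (3 * c / R) hε k
  refine ⟨n0, fun m hm n hn y hy => ?_⟩
  have key : ∀ a b : ℕ, n0 ≤ a → a ≤ b → dist (fderiv ℂ (F b) y) (fderiv ℂ (F a) y) < ε := by
    intro a b ha hab
    have hdiff : Differentiable ℂ (fun x => F b x - F a x) := (hF b).sub (hF a)
    have hbd : ∀ x ∈ ball y R, ‖F b x - F a x‖ ≤ c * (2:ℝ)⁻¹ ^ a := fun x hx =>
      hclose a (hn0k.trans ha) b hab x (hsub y hy hx)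
    have hce := fb_CE hdiff hR (by positivity) hbd
    have heq : fderiv ℂ (fun x => F b x - F a x) y = fderiv ℂ (F b) y - fderiv ℂ (F a) y :=
      fderiv_sub ((hF b) y) ((hF a) y)
    rw [dist_eq_norm, ← heq]
    calc ‖fderiv ℂ (fun x => F b x - F a x) y‖ ≤ 3 * (c * (2:ℝ)⁻¹ ^ a) / R := hce
      _ = 3 * c / R * (2:ℝ)⁻¹ ^ a := by ring
      _ ≤ 3 * c / R * (2:ℝ)⁻¹ ^ n0 := by
          have := fb_half_anti ha
          have h3 : 0 < 3 * c / R := by positivity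
          nlinarith
      _ < ε := hn0
  rcases le_total m n with hmn | hmn
  · rw [dist_comm]; exact key m n hm hmn
  · exact key n m hn hmn


section
variable {N : ℕ} {Φs : ℕ → (Fin N → ℂ) → (Fin N → ℂ)} {r : ℕ → ℝ}

lemma fb_rmono (hr : ∀ k, r k + 1 ≤ r (k + 1)) : Monotone r := by
  apply monotone_nat_of_le_succ
  intro k
  linarith [hr k]

lemma fb_rtop (hr : ∀ k, r k + 1 ≤ r (k + 1)) (x : ℝ) : ∃ k, 2 ≤ k ∧ x < r k := by
  have hge : ∀ k : ℕ, r 0 + k ≤ r k := by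
    intro k
    induction k with
    | zero => simp
    | succ k ih =>
      have := hr k
      push_cast
      linarith
  obtain ⟨k0, hk0⟩ := exists_nat_gt (x - r 0)
  refine ⟨max k0 2, le_max_right _ _, ?_⟩
  have h1 := hge (max k0 2)
  have h2 : (k0 : ℝ) ≤ (max k0 2 : ℕ) := by exact_mod_cast Nat.cast_le.mpr (le_max_left _ _)
  linarith

variable (happrox : ∀ k, ∀ z : Fin N → ℂ, Φs k z ∈ ball (0 : Fin N → ℂ) (r k) →
      ‖Φs (k + 1) z - Φs k z‖ < (2 : ℝ)⁻¹ ^ k)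

lemma fb_ball_iff {k : ℕ} {z : Fin N → ℂ} :
    Φs k z ∈ ball (0 : Fin N → ℂ) (r k) ↔ ‖Φs k z‖ < r k := mem_ball_zero_iff

include happrox in
lemma fb_succ (hr : ∀ k, r k + 1 ≤ r (k + 1)) {k : ℕ} {z : Fin N → ℂ}
    (hz : ‖Φs k z‖ < r k) : ‖Φs (k+1) z‖ < r (k+1) := by
  have h1 := happrox k z (fb_ball_iff.2 hz)
  have h2 : ‖Φs (k+1) z‖ ≤ ‖Φs (k+1) z - Φs k z‖ + ‖Φs k z‖ := by
    simpa using norm_add_le (Φs (k+1) z - Φs k z) (Φs k z)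
  have := fb_half_le_one k
  have := hr k
  linarith

include happrox in
lemma fb_mem_mono (hr : ∀ k, r k + 1 ≤ r (k + 1)) {k m : ℕ} (hkm : k ≤ m) {z : Fin N → ℂ}
    (hz : ‖Φs k z‖ < r k) : ‖Φs m z‖ < r m := by
  induction m, hkm using Nat.le_induction with
  | base => exact hz
  | succ m hm ih => exact fb_succ happrox hr ih

include happrox in
lemma fb_diff_succ (hr : ∀ k, r k + 1 ≤ r (k + 1)) {k : ℕ} {z : Fin N → ℂ}
    (hz : ‖Φs k z‖ < r k) :
    ∀ m, k ≤ m → ‖Φs (m+1) z - Φs m z‖ ≤ 1 * (2:ℝ)⁻¹ ^ m := by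
  intro m hm
  rw [one_mul]
  exact (happrox m z (fb_ball_iff.2 (fb_mem_mono happrox hr hm hz))).le

include happrox in
lemma fb_close (hr : ∀ k, r k + 1 ≤ r (k + 1)) {k : ℕ} {z : Fin N → ℂ}
    (hz : ‖Φs k z‖ < r k) :
    ∀ n, k ≤ n → ∀ m, n ≤ m → ‖Φs m z - Φs n z‖ ≤ 2 * (2:ℝ)⁻¹ ^ n := by
  intro n hn m hm
  have := fb_tele' (u := fun n => Φs n z) (by norm_num)
    (fb_diff_succ happrox hr hz) n hn m hm
  linarith [this]


noncomputable def fbLim (Φs : ℕ → (Fin N → ℂ) → (Fin N → ℂ)) : (Fin N → ℂ) → (Fin N → ℂ) :=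
  fun z => limUnder atTop fun n => Φs n z

include happrox in
lemma fb_tendsto (hr : ∀ k, r k + 1 ≤ r (k + 1)) {k : ℕ} {z : Fin N → ℂ}
    (hz : ‖Φs k z‖ < r k) :
    Tendsto (fun n => Φs n z) atTop (𝓝 (fbLim Φs z)) :=
  (fb_cauchy_of_tele (by norm_num) (fb_diff_succ happrox hr hz)).tendsto_limUnder

include happrox in
lemma fb_limclose (hr : ∀ k, r k + 1 ≤ r (k + 1)) {k : ℕ} {z : Fin N → ℂ}
    (hz : ‖Φs k z‖ < r k) :
    ∀ n, k ≤ n → ‖fbLim Φs z - Φs n z‖ ≤ 2 * (2:ℝ)⁻¹ ^ n := by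
  intro n hn
  have h1 : Tendsto (fun m => ‖Φs m z - Φs n z‖) atTop (𝓝 ‖fbLim Φs z - Φs n z‖) :=
    ((fb_tendsto happrox hr hz).sub_const (Φs n z)).norm
  apply le_of_tendsto h1
  filter_upwards [eventually_ge_atTop n] with m hm
  exact fb_close happrox hr hz n hn m hm

variable (hΦs : ∀ k, IsAutomorphism (Φs k))

noncomputable def fbInv (hΦs : ∀ k, IsAutomorphism (Φs k)) (k : ℕ) :
    (Fin N → ℂ) → (Fin N → ℂ) := (hΦs k).2.choose

lemma fb_inv_diff (k : ℕ) : Differentiable ℂ (fbInv hΦs k) := (hΦs k).2.choose_spec.1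

lemma fb_inv_left (k : ℕ) (z : Fin N → ℂ) : fbInv hΦs k (Φs k z) = z :=
  (hΦs k).2.choose_spec.2.1 z

lemma fb_inv_right (k : ℕ) (w : Fin N → ℂ) : Φs k (fbInv hΦs k w) = w :=
  (hΦs k).2.choose_spec.2.2 w

include happrox hΦs in
lemma fb_A {j : ℕ} (hrj : 2 ≤ r j) {z : Fin N → ℂ}
    (hz : ‖Φs (j+1) z‖ < r j - (2:ℝ)⁻¹ ^ j) : ‖Φs j z‖ < r j := by
  set V : Set (Fin N → ℂ) := Φs (j+1) ⁻¹' ball 0 (r j - (2:ℝ)⁻¹ ^ j) with hV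
  have hVim : V = fbInv hΦs (j+1) '' ball 0 (r j - (2:ℝ)⁻¹ ^ j) := by
    ext x
    constructor
    · intro hx
      exact ⟨Φs (j+1) x, hx, fb_inv_left hΦs (j+1) x⟩
    · rintro ⟨w, hw, rfl⟩
      simpa [V, mem_preimage, fb_inv_right hΦs (j+1) w] using hw
  have hVconn : IsPreconnected V := by
    rw [hVim]
    exact (convex_ball _ _).isPreconnected.image _
      (fb_inv_diff hΦs (j+1)).continuous.continuousOn
  set u : Set (Fin N → ℂ) := Φs j ⁻¹' ball 0 (r j) with hu
  set v : Set (Fin N → ℂ) := {x | (2:ℝ)⁻¹ ^ j < ‖Φs j x‖ - ‖Φs (j+1) x‖} with hv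
  have huo : IsOpen u := isOpen_ball.preimage (hΦs j).1.continuous
  have hvo : IsOpen v := by
    have hc : Continuous fun x => ‖Φs j x‖ - ‖Φs (j+1) x‖ :=
      ((hΦs j).1.continuous.norm.sub (hΦs (j+1)).1.continuous.norm)
    exact isOpen_lt continuous_const hc
  have hdisj : Disjoint u v := by
    rw [Set.disjoint_left]
    intro x hxu hxv
    have h1 := happrox j x (by simpa [u, mem_preimage] using hxu)
    have h2 : ‖Φs j x‖ - ‖Φs (j+1) x‖ ≤ ‖Φs (j+1) x - Φs j x‖ := by
      have := norm_sub_norm_le (Φs j x) (Φs (j+1) x)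
      have := norm_sub_rev (Φs j x) (Φs (j+1) x)
      linarith [norm_sub_norm_le (Φs j x) (Φs (j+1) x), (norm_sub_rev (Φs j x) (Φs (j+1) x))]
    have hxv' : (2:ℝ)⁻¹ ^ j < ‖Φs j x‖ - ‖Φs (j+1) x‖ := hxv
    linarith
  have hsub : V ⊆ u ∪ v := by
    intro x hx
    have hx' : ‖Φs (j+1) x‖ < r j - (2:ℝ)⁻¹ ^ j := by
      simpa [V, mem_preimage, mem_ball_zero_iff] using hx
    by_cases hxu : ‖Φs j x‖ < r j
    · exact Or.inl (by simpa [u, mem_preimage, mem_ball_zero_iff] using hxu)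
    · refine Or.inr ?_
      have : r j ≤ ‖Φs j x‖ := not_lt.1 hxu
      show (2:ℝ)⁻¹ ^ j < ‖Φs j x‖ - ‖Φs (j+1) x‖
      linarith
  have hne : (V ∩ u).Nonempty := by
    refine ⟨fbInv hΦs j 0, ?_, ?_⟩
    · have h0 : ‖Φs j (fbInv hΦs j 0)‖ < r j := by
        rw [fb_inv_right hΦs j 0]
        simpa using lt_of_lt_of_le (by norm_num : (0:ℝ) < 2) hrj
      have h1 := happrox j (fbInv hΦs j 0) (mem_ball_zero_iff.2 h0)
      rw [fb_inv_right hΦs j 0, sub_zero] at h1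
      have h2 := fb_half_le_one j
      have h3 := fb_half_pos j
      simp only [V, mem_preimage, mem_ball_zero_iff]
      linarith
    · simp only [u, mem_preimage, mem_ball_zero_iff, fb_inv_right hΦs j 0]
      simpa using lt_of_lt_of_le (by norm_num : (0:ℝ) < 2) hrj
  have hVu : V ⊆ u := hVconn.subset_left_of_subset_union huo hvo hdisj hsub hne
  have hzV : z ∈ V := by simpa [V, mem_preimage, mem_ball_zero_iff] using hz
  simpa [u, mem_preimage, mem_ball_zero_iff] using hVu hzV


include happrox hΦs in
lemma fb_down (hr : ∀ k, r k + 1 ≤ r (k + 1)) {k : ℕ} (hrk : 2 ≤ r k) :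
    ∀ m, k ≤ m → ∀ z : Fin N → ℂ, ‖Φs m z‖ < r k - 2 + 2 * (2:ℝ)⁻¹ ^ m →
      ‖Φs k z‖ < r k - 2 + 2 * (2:ℝ)⁻¹ ^ k := by
  intro m hm
  induction m, hm using Nat.le_induction with
  | base => intro z hz; exact hz
  | succ m hm ih =>
    intro z hz
    have hrm : r k ≤ r m := fb_rmono hr hm
    have hrm2 : 2 ≤ r m := le_trans hrk hrm
    have h1 : ‖Φs (m+1) z‖ < r m - (2:ℝ)⁻¹ ^ m := by
      have e1 : 2 * (2:ℝ)⁻¹ ^ (m+1) = (2:ℝ)⁻¹ ^ m := by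
        rw [pow_succ]; ring
      rw [e1] at hz
      have := fb_half_le_one m
      have := fb_half_pos m
      linarith
    have h2 : ‖Φs m z‖ < r m := fb_A happrox hΦs hrm2 h1
    have h3 := happrox m z (mem_ball_zero_iff.2 h2)
    have h4 : ‖Φs m z‖ ≤ ‖Φs (m+1) z - Φs m z‖ + ‖Φs (m+1) z‖ := by
      have := norm_sub_le (Φs (m+1) z - Φs m z) (Φs (m+1) z)
      calc ‖Φs m z‖ = ‖(Φs (m+1) z - Φs m z) - Φs (m+1) z‖ := by
            rw [sub_sub_cancel_left, norm_neg]
        _ ≤ ‖Φs (m+1) z - Φs m z‖ + ‖Φs (m+1) z‖ := norm_sub_le _ _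
    apply ih z
    have e1 : 2 * (2:ℝ)⁻¹ ^ (m+1) = (2:ℝ)⁻¹ ^ m := by rw [pow_succ]; ring
    rw [e1] at hz
    have : 2 * (2:ℝ)⁻¹ ^ m = (2:ℝ)⁻¹ ^ m + (2:ℝ)⁻¹ ^ m := by ring
    linarith

include happrox hΦs in
lemma fb_inv_mem (hr : ∀ k, r k + 1 ≤ r (k + 1)) {k : ℕ} (hk : 1 ≤ k) (hrk : 2 ≤ r k)
    {m : ℕ} (hm : k ≤ m) {w : Fin N → ℂ} (hw : ‖w‖ < r k - 2) :
    ‖Φs k (fbInv hΦs m w)‖ ≤ r k - 1 := by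
  have h0 : ‖Φs m (fbInv hΦs m w)‖ < r k - 2 + 2 * (2:ℝ)⁻¹ ^ m := by
    rw [fb_inv_right hΦs m w]
    have := fb_half_pos m
    linarith
  have h1 := fb_down happrox hΦs hr hrk m hm _ h0
  have h2 : 2 * (2:ℝ)⁻¹ ^ k ≤ 1 := by
    calc 2 * (2:ℝ)⁻¹ ^ k ≤ 2 * (2:ℝ)⁻¹ ^ 1 := by
          have := fb_half_anti hk; linarith
      _ = 1 := by norm_num
  linarith

include hΦs in
lemma fb_Ck_compact (k : ℕ) (s : ℝ) : IsCompact (Φs k ⁻¹' closedBall (0 : Fin N → ℂ) s) := by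
  have him : Φs k ⁻¹' closedBall (0 : Fin N → ℂ) s
      = fbInv hΦs k '' closedBall (0 : Fin N → ℂ) s := by
    ext x
    constructor
    · intro hx
      exact ⟨Φs k x, hx, fb_inv_left hΦs k x⟩
    · rintro ⟨w, hw, rfl⟩
      simpa [mem_preimage, fb_inv_right hΦs k w] using hw
  rw [him]
  exact (isCompact_closedBall _ _).image (fb_inv_diff hΦs k).continuous

include happrox hΦs in
lemma fb_lip (hr : ∀ k, r k + 1 ≤ r (k + 1)) {k : ℕ} (hk : 1 ≤ k) (hrk : 2 ≤ r k)
    {M : ℝ} (hM : ∀ x, ‖Φs k x‖ ≤ r k - 1 → ‖x‖ ≤ M)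
    {m : ℕ} (hm : k ≤ m) {w1 w2 : Fin N → ℂ} (hw1 : ‖w1‖ < r k - 3) (hd : ‖w2 - w1‖ < 1) :
    ‖fbInv hΦs m w2 - fbInv hΦs m w1‖ ≤ (2*M+1) * ‖w2 - w1‖ := by
  have hM0 : 0 ≤ M := by
    have h0 : ‖Φs k (fbInv hΦs k 0)‖ ≤ r k - 1 := by
      rw [fb_inv_right hΦs k 0, norm_zero]; linarith
    exact le_trans (norm_nonneg _) (hM _ h0)
  rcases eq_or_ne w2 w1 with rfl | hne
  · simp
  set u : Fin N → ℂ := w2 - w1 with hu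
  have hun : (0:ℝ) < ‖u‖ := norm_pos_iff.2 (sub_ne_zero.2 hne)
  set R₁ : ℝ := 1 / ‖u‖ with hR₁
  have hR₁pos : 0 < R₁ := by positivity
  set g : ℂ → (Fin N → ℂ) := fun ζ => fbInv hΦs m (w1 + ζ • u) with hg
  have hgd : Differentiable ℂ g :=
    (fb_inv_diff hΦs m).comp ((differentiable_id.smul_const u).const_add w1)
  have hmemC : ∀ ζ : ℂ, ζ ∈ ball (0:ℂ) R₁ → ‖g ζ‖ ≤ M := by
    intro ζ hζ
    have hζ' : ‖ζ‖ < R₁ := by simpa [dist_eq_norm] using hζ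
    have harg : ‖w1 + ζ • u‖ < r k - 2 := by
      calc ‖w1 + ζ • u‖ ≤ ‖w1‖ + ‖ζ‖ * ‖u‖ := by
            simpa [norm_smul] using norm_add_le w1 (ζ • u)
        _ < (r k - 3) + R₁ * ‖u‖ := by
            apply add_lt_add_of_lt_of_le hw1
            exact le_of_lt (mul_lt_mul_of_pos_right hζ' hun)
        _ = r k - 3 + 1 := by rw [hR₁, one_div_mul_cancel hun.ne']
        _ = r k - 2 := by ring
    exact hM _ (fb_inv_mem happrox hΦs hr hk hrk hm harg)
  have hmaps : MapsTo g (ball (0:ℂ) R₁) (ball (g 0) (2*M+1)) := by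
    intro ζ hζ
    rw [mem_ball]
    have h0 : (0:ℂ) ∈ ball (0:ℂ) R₁ := by simpa using hR₁pos
    calc dist (g ζ) (g 0) ≤ ‖g ζ‖ + ‖g 0‖ := by rw [dist_eq_norm]; exact norm_sub_le _ _
      _ ≤ M + M := add_le_add (hmemC ζ hζ) (hmemC 0 h0)
      _ < 2*M+1 := by linarith
  have h1m : (1:ℂ) ∈ ball (0:ℂ) R₁ := by
    have : (1:ℝ) < R₁ := by
      rw [hR₁]
      rw [lt_div_iff₀ hun]
      linarith
    simpa [dist_eq_norm] using this
  have hSch := Complex.dist_le_div_mul_dist_of_mapsTo_ball hgd.differentiableOn (hmaps.mono_right ball_subset_closedBall) h1m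
  have hg1 : g 1 = fbInv hΦs m w2 := by
    rw [hg]
    simp [hu]
  have hg0 : g 0 = fbInv hΦs m w1 := by rw [hg]; simp
  rw [hg1, hg0] at hSch
  have hdist : dist (1:ℂ) 0 = 1 := by simp
  rw [hdist, mul_one] at hSch
  calc ‖fbInv hΦs m w2 - fbInv hΦs m w1‖ = dist (fbInv hΦs m w2) (fbInv hΦs m w1) :=
        (dist_eq_norm _ _).symm
    _ ≤ (2*M+1) / R₁ := hSch
    _ = (2*M+1) * ‖u‖ := by rw [hR₁]; field_simp

include happrox hΦs in
lemma fb_inv_succ (hr : ∀ k, r k + 1 ≤ r (k + 1)) {k : ℕ} (hk : 1 ≤ k) (hrk : 2 ≤ r k)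
    {M : ℝ} (hM : ∀ x, ‖Φs k x‖ ≤ r k - 1 → ‖x‖ ≤ M)
    {m : ℕ} (hm : k ≤ m) {w : Fin N → ℂ} (hw : ‖w‖ < r k - 3) :
    ‖fbInv hΦs (m+1) w - fbInv hΦs m w‖ ≤ (2*M+1) * (2:ℝ)⁻¹ ^ m := by
  have hM0 : 0 ≤ M := by
    have h0 : ‖Φs k (fbInv hΦs k 0)‖ ≤ r k - 1 := by
      rw [fb_inv_right hΦs k 0, norm_zero]; linarith
    exact le_trans (norm_nonneg _) (hM _ h0)
  set z : Fin N → ℂ := fbInv hΦs m w with hz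
  have hzm : ‖Φs m z‖ < r m := by
    rw [hz, fb_inv_right hΦs m w]
    have : r k ≤ r m := fb_rmono hr hm
    linarith
  have hstep := happrox m z (mem_ball_zero_iff.2 hzm)
  rw [hz, fb_inv_right hΦs m w] at hstep
  set w' : Fin N → ℂ := Φs (m+1) z with hw'
  have hinv : fbInv hΦs (m+1) w' = z := by rw [hw']; exact fb_inv_left hΦs (m+1) z
  have hd1 : ‖w' - w‖ < 1 := lt_of_lt_of_le hstep (fb_half_le_one m)
  have hlip := fb_lip happrox hΦs hr hk hrk hM (le_trans hm (Nat.le_succ m)) hw hd1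
  have heq : fbInv hΦs (m+1) w - fbInv hΦs m w
      = -(fbInv hΦs (m+1) w' - fbInv hΦs (m+1) w) := by
    rw [hinv]; abel
  rw [heq, norm_neg]
  calc ‖fbInv hΦs (m+1) w' - fbInv hΦs (m+1) w‖ ≤ (2*M+1) * ‖w' - w‖ := hlip
    _ ≤ (2*M+1) * (2:ℝ)⁻¹ ^ m := by
        apply mul_le_mul_of_nonneg_left hstep.le
        linarith


end

/-- Fatou–Bieberbach construction: a push-out sequence of automorphisms converges
on the set of points with bounded orbits to a biholomorphism onto ℂ^N. -/
theorem stmt_8 {N : ℕ}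
    (Φs : ℕ → (Fin N → ℂ) → (Fin N → ℂ))
    (hΦs : ∀ k, IsAutomorphism (Φs k))
    (r : ℕ → ℝ) (hr : ∀ k, r k + 1 ≤ r (k + 1))
    (happrox : ∀ k, ∀ z : Fin N → ℂ, Φs k z ∈ ball (0 : Fin N → ℂ) (r k) →
      ‖Φs (k + 1) z - Φs k z‖ < (2 : ℝ)⁻¹ ^ k) :
    IsOpen (⋃ k : ℕ, Φs k ⁻¹' ball (0 : Fin N → ℂ) (r k)) ∧
    ∃ Φ : (Fin N → ℂ) → (Fin N → ℂ),
      (∀ K : Set (Fin N → ℂ),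
        K ⊆ (⋃ k : ℕ, Φs k ⁻¹' ball (0 : Fin N → ℂ) (r k)) → IsCompact K →
        TendstoUniformlyOn Φs Φ Filter.atTop K) ∧
      BiholoOnto (⋃ k : ℕ, Φs k ⁻¹' ball (0 : Fin N → ℂ) (r k)) Φ ∧
      (⋃ k : ℕ, Φs k ⁻¹' ball (0 : Fin N → ℂ) (r k)) =
        {z : Fin N → ℂ | Bornology.IsBounded (Set.range fun k => Φs k z)} := by
  classical
  set Ω : Set (Fin N → ℂ) := ⋃ k : ℕ, Φs k ⁻¹' ball (0 : Fin N → ℂ) (r k) with hΩdef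
  have hΩmem : ∀ z, z ∈ Ω ↔ ∃ k, ‖Φs k z‖ < r k := by
    intro z
    simp [hΩdef, mem_iUnion, mem_preimage, mem_ball_zero_iff]
  -- openness
  have hopen : IsOpen Ω :=
    isOpen_iUnion fun k => isOpen_ball.preimage (hΦs k).1.continuous
  -- the limit map
  set Φ : (Fin N → ℂ) → (Fin N → ℂ) := fbLim Φs with hΦdef
  have hOk : ∀ k, ∀ z : Fin N → ℂ, z ∈ Φs k ⁻¹' ball (0 : Fin N → ℂ) (r k) ↔ ‖Φs k z‖ < r k := by
    intro k z; simp [mem_preimage, mem_ball_zero_iff]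
  have hucΦ : ∀ k, UniformCauchySeqOn Φs atTop (Φs k ⁻¹' ball (0 : Fin N → ℂ) (r k)) := by
    intro k
    refine fb_ucauchy_of_tele (c := 1) (k := k) (by norm_num) ?_
    intro m hm x hx
    exact fb_diff_succ happrox hr ((hOk k x).1 hx) m hm
  have hunifk : ∀ k, TendstoUniformlyOn Φs Φ atTop (Φs k ⁻¹' ball (0 : Fin N → ℂ) (r k)) := by
    intro k
    exact (hucΦ k).tendstoUniformlyOn_of_tendsto
      (fun x hx => fb_tendsto happrox hr ((hOk k x).1 hx))
  -- uniform convergence on compact subsets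
  have hcompact : ∀ K : Set (Fin N → ℂ), K ⊆ Ω → IsCompact K →
      TendstoUniformlyOn Φs Φ Filter.atTop K := by
    intro K hKΩ hK
    obtain ⟨t, ht⟩ := hK.elim_finite_subcover
      (fun k => Φs k ⁻¹' ball (0 : Fin N → ℂ) (r k))
      (fun k => isOpen_ball.preimage (hΦs k).1.continuous) (by rwa [← hΩdef])
    set k0 : ℕ := t.sup id with hk0
    have hsubk0 : K ⊆ Φs k0 ⁻¹' ball (0 : Fin N → ℂ) (r k0) := by
      intro z hz
      obtain ⟨j, hjt, hj⟩ := mem_iUnion₂.1 (ht hz)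
      rw [hOk]
      exact fb_mem_mono happrox hr (Finset.le_sup (f := id) hjt) ((hOk j z).1 hj)
    exact (hunifk k0).mono hsubk0
  -- pointwise convergence on Ω
  have hptΦ : ∀ z ∈ Ω, Tendsto (fun n => Φs n z) atTop (𝓝 (Φ z)) := by
    intro z hz
    obtain ⟨k, hk⟩ := (hΩmem z).1 hz
    exact fb_tendsto happrox hr hk
  -- differentiability of Φ on Ω
  set A : (Fin N → ℂ) → ((Fin N → ℂ) →L[ℂ] (Fin N → ℂ)) :=
    fun z => limUnder atTop fun n => fderiv ℂ (Φs n) z with hAdef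
  have hlocΦ : TendstoLocallyUniformlyOn (fun n => fderiv ℂ (Φs n)) A atTop Ω := by
    intro uu huu x hx
    obtain ⟨k, hk⟩ := (hΩmem x).1 hx
    have hko : IsOpen (Φs k ⁻¹' ball (0 : Fin N → ℂ) (r k)) :=
      isOpen_ball.preimage (hΦs k).1.continuous
    obtain ⟨ε, hε, hball⟩ := Metric.isOpen_iff.1 hko x ((hOk k x).2 hk)
    set R : ℝ := ε / 2 with hRdef
    have hR : 0 < R := by positivity
    have hsub : ∀ y ∈ ball x R, ball y R ⊆ Φs k ⁻¹' ball (0 : Fin N → ℂ) (r k) := by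
      intro y hy w hw
      apply hball
      rw [mem_ball] at *
      calc dist w x ≤ dist w y + dist y x := dist_triangle _ _ _
        _ < R + R := add_lt_add hw hy
        _ = ε := by rw [hRdef]; ring
    have hclose : ∀ n, k ≤ n → ∀ m, n ≤ m →
        ∀ x' ∈ Φs k ⁻¹' ball (0 : Fin N → ℂ) (r k),
          ‖Φs m x' - Φs n x'‖ ≤ 2 * (2:ℝ)⁻¹ ^ n := by
      intro n hn m hm x' hx'
      exact fb_close happrox hr ((hOk k x').1 hx') n hn m hm
    have huc2 : UniformCauchySeqOn (fun n => fderiv ℂ (Φs n)) atTop (ball x R) :=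
      fb_fderiv_ucauchy (fun n => (hΦs n).1) hR (by norm_num) hsub hclose
    have hptd : ∀ y ∈ ball x R, Tendsto (fun n => fderiv ℂ (Φs n) y) atTop (𝓝 (A y)) :=
      fun y hy => (fb_ptCauchy huc2 hy).tendsto_limUnder
    have htu : TendstoUniformlyOn (fun n => fderiv ℂ (Φs n)) A atTop (ball x R) :=
      huc2.tendstoUniformlyOn_of_tendsto hptd
    exact ⟨ball x R, mem_nhdsWithin_of_mem_nhds (ball_mem_nhds x hR), htu uu huu⟩
  have hΦder : ∀ x ∈ Ω, HasFDerivAt Φ (A x) x := fun x hx =>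
    hasFDerivAt_of_tendstoLocallyUniformlyOn hopen hlocΦ
      (fun n y _ => ((hΦs n).1 y).hasFDerivAt) hptΦ hx
  have hΦdiffOn : DifferentiableOn ℂ Φ Ω := fun x hx =>
    (hΦder x hx).differentiableAt.differentiableWithinAt
  -- the inverse map
  set Γ : ℕ → (Fin N → ℂ) → (Fin N → ℂ) := fbInv hΦs with hΓdef
  set Ψ : (Fin N → ℂ) → (Fin N → ℂ) := fun w => limUnder atTop fun m => Γ m w with hΨdef
  have hchoose : ∀ x : ℝ, ∃ k, 2 ≤ k ∧ 2 ≤ r k ∧ x < r k - 3 := by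
    intro x
    obtain ⟨k, hk2, hk⟩ := fb_rtop hr (max x (-1) + 3)
    refine ⟨k, hk2, ?_, ?_⟩
    · have := le_max_right x (-1); linarith
    · have := le_max_left x (-1); linarith
  have hMex : ∀ k, ∃ M : ℝ, 0 ≤ M ∧ ∀ x : Fin N → ℂ, ‖Φs k x‖ ≤ r k - 1 → ‖x‖ ≤ M := by
    intro k
    obtain ⟨M, hM⟩ := (fb_Ck_compact hΦs k (r k - 1)).isBounded.subset_closedBall 0
    refine ⟨max M 0, le_max_right _ _, fun x hx => ?_⟩
    have hxm : x ∈ Φs k ⁻¹' closedBall (0 : Fin N → ℂ) (r k - 1) := by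
      simp only [mem_preimage, mem_closedBall_zero_iff]; exact hx
    have := hM hxm
    rw [mem_closedBall_zero_iff] at this
    exact le_trans this (le_max_left _ _)
  have hΨpt : ∀ w, Tendsto (fun m => Γ m w) atTop (𝓝 (Ψ w)) := by
    intro w
    obtain ⟨k, hk2, hrk, hw⟩ := hchoose ‖w‖
    obtain ⟨M, hM0, hM⟩ := hMex k
    refine (fb_cauchy_of_tele (c := 2*M+1) (k := k) (by linarith) ?_).tendsto_limUnder
    intro m hm
    exact fb_inv_succ happrox hΦs hr (by omega) hrk hM hm hw
  -- Ψ is a right inverse with values in Ω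
  have hΨprop : ∀ w, Ψ w ∈ Ω ∧ Φ (Ψ w) = w := by
    intro w
    obtain ⟨k, hk2, hrk, hw⟩ := hchoose ‖w‖
    have hw2 : ‖w‖ < r k - 2 := by linarith
    have hC : IsClosed (Φs k ⁻¹' closedBall (0 : Fin N → ℂ) (r k - 1)) :=
      (fb_Ck_compact hΦs k (r k - 1)).isClosed
    have hmemm : ∀ᶠ m in atTop, Γ m w ∈ Φs k ⁻¹' closedBall (0 : Fin N → ℂ) (r k - 1) := by
      filter_upwards [eventually_ge_atTop k] with m hm
      simp only [mem_preimage, mem_closedBall_zero_iff]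
      exact fb_inv_mem happrox hΦs hr (by omega) hrk hm hw2
    have hΨC : Ψ w ∈ Φs k ⁻¹' closedBall (0 : Fin N → ℂ) (r k - 1) :=
      hC.mem_of_tendsto (hΨpt w) hmemm
    have hΨΩ : Ψ w ∈ Ω := by
      rw [hΩmem]
      refine ⟨k, ?_⟩
      have : ‖Φs k (Ψ w)‖ ≤ r k - 1 := by
        simpa only [mem_preimage, mem_closedBall_zero_iff] using hΨC
      linarith
    refine ⟨hΨΩ, ?_⟩
    have h1 : Tendsto (fun m => Φ (Γ m w)) atTop (𝓝 (Φ (Ψ w))) :=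
      ((hΦder _ hΨΩ).differentiableAt.continuousAt.tendsto).comp (hΨpt w)
    have h2 : Tendsto (fun m => Φ (Γ m w)) atTop (𝓝 w) := by
      rw [tendsto_iff_norm_sub_tendsto_zero]
      have hb : Tendsto (fun m : ℕ => 2 * (2:ℝ)⁻¹ ^ m) atTop (𝓝 0) := by
        simpa using (tendsto_pow_atTop_nhds_zero_of_lt_one
          (by norm_num : (0:ℝ) ≤ 2⁻¹) (by norm_num : (2:ℝ)⁻¹ < 1)).const_mul 2
      refine squeeze_zero_norm' ?_ hb
      filter_upwards [eventually_ge_atTop k] with m hm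
      have hzm : ‖Φs k (Γ m w)‖ < r k := by
        have := fb_inv_mem happrox hΦs hr (by omega) hrk hm hw2
        linarith
      have := fb_limclose happrox hr hzm m hm
      rw [fb_inv_right hΦs m w] at this
      simpa [norm_norm] using this
    exact tendsto_nhds_unique h1 h2
  -- Ψ is a left inverse on Ω
  have hΨΦ : ∀ z ∈ Ω, Ψ (Φ z) = z := by
    intro z hz
    obtain ⟨k0, hk0⟩ := (hΩmem z).1 hz
    obtain ⟨k1, hk12, hrk1, hw1⟩ := hchoose ‖Φ z‖
    set k : ℕ := max k1 k0 with hkdef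
    have hk2 : 2 ≤ k := le_trans hk12 (le_max_left _ _)
    have hrmono := fb_rmono hr
    have hrk : 2 ≤ r k := le_trans hrk1 (hrmono (le_max_left _ _))
    have hwk : ‖Φ z‖ < r k - 3 := by
      have := hrmono (le_max_left k1 k0)
      linarith
    obtain ⟨M, hM0, hM⟩ := hMex k
    have h1 : Tendsto (fun m => Γ m (Φ z)) atTop (𝓝 (Ψ (Φ z))) := hΨpt (Φ z)
    have h2 : Tendsto (fun m => Γ m (Φ z)) atTop (𝓝 z) := by
      rw [tendsto_iff_norm_sub_tendsto_zero]
      have hb : Tendsto (fun m : ℕ => (2*M+1) * (2 * (2:ℝ)⁻¹ ^ m)) atTop (𝓝 0) := by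
        have h0 : Tendsto (fun m : ℕ => (2:ℝ)⁻¹ ^ m) atTop (𝓝 0) :=
          tendsto_pow_atTop_nhds_zero_of_lt_one (by norm_num) (by norm_num)
        simpa using (h0.const_mul ((2*M+1)*2)).congr (fun m => (mul_assoc _ _ _ : ((2*M+1)*2) * (2:ℝ)⁻¹ ^ m = (2*M+1) * (2 * (2:ℝ)⁻¹ ^ m)))
      refine squeeze_zero_norm' ?_ hb
      filter_upwards [eventually_ge_atTop k] with m hm
      have hmk0 : k0 ≤ m := le_trans (le_max_right k1 k0) hm
      have hclose := fb_limclose happrox hr hk0 m hmk0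
      have hd : ‖Φs m z - Φ z‖ < 1 := by
        rw [norm_sub_rev]
        have h3 : 2 * (2:ℝ)⁻¹ ^ m ≤ 2 * (2:ℝ)⁻¹ ^ 2 := by
          have := fb_half_anti (le_trans hk2 hm); linarith
        calc ‖Φ z - Φs m z‖ ≤ 2 * (2:ℝ)⁻¹ ^ m := hclose
          _ ≤ 2 * (2:ℝ)⁻¹ ^ 2 := h3
          _ < 1 := by norm_num
      have hlip := fb_lip happrox hΦs hr (by omega) hrk hM hm hwk hd
      rw [fb_inv_left hΦs m z] at hlip
      have : ‖Γ m (Φ z) - z‖ ≤ (2*M+1) * (2 * (2:ℝ)⁻¹ ^ m) := by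
        rw [norm_sub_rev] at hlip ⊢
        calc ‖z - Γ m (Φ z)‖ ≤ (2*M+1) * ‖Φs m z - Φ z‖ := by
              rw [norm_sub_rev] at hlip
              exact hlip
          _ ≤ (2*M+1) * (2 * (2:ℝ)⁻¹ ^ m) := by
              apply mul_le_mul_of_nonneg_left _ (by linarith)
              rw [norm_sub_rev]
              exact hclose
      simpa using this
    exact tendsto_nhds_unique h1 h2
  -- differentiability of Ψ
  have hΨdiff : Differentiable ℂ Ψ := by
    intro w0
    obtain ⟨k, hk2, hrk, hw0⟩ := hchoose (‖w0‖ + 2)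
    obtain ⟨M, hM0, hM⟩ := hMex k
    have hsub : ∀ y ∈ ball w0 1, ball y 1 ⊆ ball (0 : Fin N → ℂ) (r k - 3) := by
      intro y hy w hw
      rw [mem_ball] at hy hw
      rw [mem_ball_zero_iff]
      calc ‖w‖ = dist w 0 := by simp [dist_eq_norm]
        _ ≤ dist w y + dist y w0 + dist w0 0 := dist_triangle4 _ _ _ _
        _ < 1 + 1 + ‖w0‖ := by
            have h5 : dist w0 0 = ‖w0‖ := by simp [dist_eq_norm]
            linarith
        _ < r k - 3 := by linarith
    have hGclose : ∀ n, k ≤ n → ∀ m, n ≤ m → ∀ x ∈ ball (0 : Fin N → ℂ) (r k - 3),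
        ‖Γ m x - Γ n x‖ ≤ ((2*M+1)*2) * (2:ℝ)⁻¹ ^ n := by
      intro n hn m hm x hx
      have hx' : ‖x‖ < r k - 3 := mem_ball_zero_iff.1 hx
      have := fb_tele' (u := fun m => Γ m x) (c := 2*M+1) (k := k) (by linarith)
        (fun m' hm' => fb_inv_succ happrox hΦs hr (by omega) hrk hM hm' hx') n hn m hm
      calc ‖Γ m x - Γ n x‖ ≤ (2*M+1) * (2 * (2:ℝ)⁻¹ ^ n) := this
        _ = ((2*M+1)*2) * (2:ℝ)⁻¹ ^ n := by ring
    have hucd : UniformCauchySeqOn (fun m => fderiv ℂ (Γ m)) atTop (ball w0 1) :=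
      fb_fderiv_ucauchy (fun m => fb_inv_diff hΦs m) one_pos (by linarith) hsub hGclose
    set B : (Fin N → ℂ) → ((Fin N → ℂ) →L[ℂ] (Fin N → ℂ)) :=
      fun y => limUnder atTop fun m => fderiv ℂ (Γ m) y with hBdef
    have hptd : ∀ y ∈ ball w0 1, Tendsto (fun m => fderiv ℂ (Γ m) y) atTop (𝓝 (B y)) :=
      fun y hy => (fb_ptCauchy hucd hy).tendsto_limUnder
    have hloc : TendstoLocallyUniformlyOn (fun m => fderiv ℂ (Γ m)) B atTop (ball w0 1) :=
      (hucd.tendstoUniformlyOn_of_tendsto hptd).tendstoLocallyUniformlyOn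
    have hfd : HasFDerivAt Ψ (B w0) w0 :=
      hasFDerivAt_of_tendstoLocallyUniformlyOn isOpen_ball hloc
        (fun m y _ => ((fb_inv_diff hΦs m) y).hasFDerivAt)
        (fun y _ => hΨpt y) (mem_ball_self one_pos)
    exact hfd.differentiableAt
  -- bounded orbit characterization
  have hbdd : Ω = {z : Fin N → ℂ | Bornology.IsBounded (Set.range fun k => Φs k z)} := by
    ext z
    simp only [mem_setOf_eq]
    constructor
    · intro hz
      obtain ⟨k, hk⟩ := (hΩmem z).1 hz
      have hsub : (Set.range fun m => Φs m z) ⊆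
          ((fun m => Φs m z) '' Iio k) ∪ closedBall (0 : Fin N → ℂ) (r k + 2) := by
        rintro y ⟨m, rfl⟩
        rcases lt_or_ge m k with hmk | hmk
        · exact Or.inl ⟨m, hmk, rfl⟩
        · refine Or.inr ?_
          rw [mem_closedBall_zero_iff]
          have h1 := fb_close happrox hr hk k le_rfl m hmk
          have h2 : ‖Φs m z‖ ≤ ‖Φs m z - Φs k z‖ + ‖Φs k z‖ := by
            simpa using norm_add_le (Φs m z - Φs k z) (Φs k z)
          have := fb_half_le_one k
          linarith
      exact (((Set.finite_Iio k).image _).isBounded.union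
        (isBounded_closedBall)).subset hsub
    · intro hb
      obtain ⟨R, hR⟩ := hb.subset_closedBall 0
      obtain ⟨k, _, hk⟩ := fb_rtop hr R
      rw [hΩmem]
      refine ⟨k, ?_⟩
      have : Φs k z ∈ closedBall (0 : Fin N → ℂ) R := hR ⟨k, rfl⟩
      rw [mem_closedBall_zero_iff] at this
      linarith
  exact ⟨hopen, Φ, hcompact, ⟨hΦdiffOn, Ψ, hΨdiff, hΨΦ, hΨprop⟩, hbdd⟩
end

section
/- Let N > 1 and let {a_j}_{j∈ℕ} be a tame discrete sequence without repetitions in ℂ^N. If {a'_j}_{j∈ℕ} is a sequence in ℂ^N without repetitions such that a'_j = a_j for all but finitely many j, then {a'_j}_{j∈ℕ} is again a tame discrete sequence without repetitions in ℂ^N. -/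
open Metric Set

section AuxTame

open Complex Finset

variable {N : ℕ}

/-- the standard sequence `e j` -/
noncomputable def eeT (N : ℕ) (j : ℕ) : Fin N → ℂ := fun i => if (i : ℕ) = 0 then (j : ℂ) else 0

/-- zero out coordinate `i` -/
def clsT (i : Fin N) (z : Fin N → ℂ) : Fin N → ℂ := fun l => if l = i then 0 else z l

/-- shear in direction `i` -/
def shT (i : Fin N) (F : (Fin N → ℂ) → ℂ) : (Fin N → ℂ) → (Fin N → ℂ) :=
  fun z l => if l = i then z l + F z else z l

lemma shT_apply_ne {i l : Fin N} (F : (Fin N → ℂ) → ℂ) (z : Fin N → ℂ) (h : l ≠ i) :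
    shT i F z l = z l := if_neg h

lemma shT_apply_eq (i : Fin N) (F : (Fin N → ℂ) → ℂ) (z : Fin N → ℂ) :
    shT i F z i = z i + F z := if_pos rfl

lemma clsT_shT (i : Fin N) (F : (Fin N → ℂ) → ℂ) (z : Fin N → ℂ) :
    clsT i (shT i F z) = clsT i z := by
  funext l
  by_cases h : l = i <;> simp [clsT, shT, h]

lemma diff_proj (l : Fin N) : Differentiable ℂ (fun z : Fin N → ℂ => z l) :=
  differentiable_pi.mp differentiable_id l

lemma clsT_diff (i : Fin N) : Differentiable ℂ (clsT i) := by
  apply differentiable_pi.mpr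
  intro l
  by_cases h : l = i
  · simp only [clsT, if_pos h]; exact differentiable_const 0
  · simp only [clsT, if_neg h]; exact diff_proj l

lemma shT_diff (i : Fin N) (F : (Fin N → ℂ) → ℂ) (hF : Differentiable ℂ F) :
    Differentiable ℂ (shT i F) := by
  apply differentiable_pi.mpr
  intro l
  by_cases h : l = i
  · simp only [shT, h, if_pos rfl]
    exact (diff_proj i).add hF
  · simp only [shT, if_neg h]
    exact diff_proj l

lemma shT_auto (i : Fin N) (F : (Fin N → ℂ) → ℂ) (hF : Differentiable ℂ F)
    (hinv : ∀ z w, F (fun l => if l = i then w else z l) = F z) :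
    IsAutomorphism (shT i F) := by
  have key : ∀ (G : (Fin N → ℂ) → ℂ) z, F (shT i G z) = F z := by
    intro G z
    have : shT i G z = fun l => if l = i then z i + G z else z l := by
      funext l; by_cases h : l = i <;> simp [shT, h]
    rw [this, hinv]
  refine ⟨shT_diff i F hF, shT i (fun z => -F z), shT_diff i _ hF.neg, ?_, ?_⟩
  · intro z
    funext l
    by_cases h : l = i
    · subst h
      rw [shT_apply_eq, shT_apply_eq, key]
      ring
    · rw [shT_apply_ne _ _ h, shT_apply_ne _ _ h]
  · intro w
    funext l
    by_cases h : l = i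
    · subst h
      rw [shT_apply_eq, shT_apply_eq, key]
      ring
    · rw [shT_apply_ne _ _ h, shT_apply_ne _ _ h]

lemma auto_comp {Φ₁ Φ₂ : (Fin N → ℂ) → (Fin N → ℂ)} (h1 : IsAutomorphism Φ₁)
    (h2 : IsAutomorphism Φ₂) : IsAutomorphism (Φ₂ ∘ Φ₁) := by
  obtain ⟨d1, Ψ₁, dΨ1, l1, r1⟩ := h1
  obtain ⟨d2, Ψ₂, dΨ2, l2, r2⟩ := h2
  exact ⟨d2.comp d1, Ψ₁ ∘ Ψ₂, dΨ1.comp dΨ2,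
    fun z => by simp [Function.comp, l2, l1],
    fun w => by simp [Function.comp, r1, r2]⟩

lemma auto_inj {Φ : (Fin N → ℂ) → (Fin N → ℂ)} (h : IsAutomorphism Φ) :
    Function.Injective Φ := by
  obtain ⟨_, Ψ, _, l, _⟩ := h
  exact Function.LeftInverse.injective l

/-- interpolation by an entire function at finitely many points -/
lemma interpT (hN : 0 < N) (X : Finset (Fin N → ℂ)) (c : (Fin N → ℂ) → ℂ) :
    ∃ Q : (Fin N → ℂ) → ℂ, Differentiable ℂ Q ∧ ∀ x ∈ X, Q x = c x := by
  classical
  have hex : ∀ x y : Fin N → ℂ, x ≠ y → ∃ i, x i ≠ y i := fun x y h => Function.ne_iff.mp h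
  let idx : (Fin N → ℂ) → (Fin N → ℂ) → Fin N := fun x y =>
    if h : x ≠ y then (hex x y h).choose else ⟨0, hN⟩
  have hidx : ∀ x y : Fin N → ℂ, x ≠ y → x (idx x y) ≠ y (idx x y) := by
    intro x y h
    show x (if h : x ≠ y then (hex x y h).choose else ⟨0, hN⟩) ≠
      y (if h : x ≠ y then (hex x y h).choose else ⟨0, hN⟩)
    rw [dif_pos h]
    exact (hex x y h).choose_spec
  let L : (Fin N → ℂ) → (Fin N → ℂ) → ℂ := fun x z =>
    ∏ y ∈ X.erase x, (z (idx x y) - y (idx x y)) / (x (idx x y) - y (idx x y))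
  have hLdef : ∀ x z, L x z = ∏ y ∈ X.erase x,
      (z (idx x y) - y (idx x y)) / (x (idx x y) - y (idx x y)) := fun x z => rfl
  refine ⟨fun z => ∑ x ∈ X, c x * L x z, ?_, ?_⟩
  · apply Differentiable.fun_sum
    intro x _
    apply Differentiable.const_mul
    show Differentiable ℂ fun z : Fin N → ℂ =>
      ∏ y ∈ X.erase x, (z (idx x y) - y (idx x y)) / (x (idx x y) - y (idx x y))
    have hgen : ∀ s : Finset (Fin N → ℂ), Differentiable ℂ fun z : Fin N → ℂ =>
        ∏ y ∈ s, (z (idx x y) - y (idx x y)) / (x (idx x y) - y (idx x y)) := by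
      intro s
      induction s using Finset.induction_on with
      | empty => simp only [Finset.prod_empty]; exact differentiable_const (1 : ℂ)
      | @insert a s hni ih =>
        simp only [Finset.prod_insert hni]
        have h1 : Differentiable ℂ fun z : Fin N → ℂ =>
            (z (idx x a) - a (idx x a)) / (x (idx x a) - a (idx x a)) :=
          by
            simp only [div_eq_mul_inv]
            exact ((diff_proj (idx x a)).sub
              (differentiable_const (a (idx x a)))).mul (differentiable_const _)
        exact h1.mul ih
    exact hgen _
  · intro x₀ hx₀
    show ∑ x ∈ X, c x * L x x₀ = c x₀
    rw [Finset.sum_eq_single x₀]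
    · have : L x₀ x₀ = 1 := by
        rw [hLdef]
        apply Finset.prod_eq_one
        intro y hy
        have hne : x₀ ≠ y := (Finset.ne_of_mem_erase hy).symm
        exact div_self (sub_ne_zero.mpr (hidx _ _ hne))
      rw [this, mul_one]
    · intro x hx hne
      have : L x x₀ = 0 := by
        rw [hLdef]
        apply Finset.prod_eq_zero (Finset.mem_erase.mpr ⟨(Ne.symm hne), hx₀⟩)
        rw [sub_self, zero_div]
      rw [this, mul_zero]
    · intro h; exact absurd hx₀ h

/-- labelling of a finite set by positive integers -/
noncomputable def labT (X : Finset (Fin N → ℂ)) (y : Fin N → ℂ) : ℕ :=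
  if h : y ∈ X then (X.equivFin ⟨y, h⟩ : ℕ) + 1 else 0

lemma labT_pos {X : Finset (Fin N → ℂ)} {y : Fin N → ℂ} (h : y ∈ X) : 0 < labT X y := by
  simp [labT, dif_pos h]

lemma labT_inj {X : Finset (Fin N → ℂ)} {y y' : Fin N → ℂ} (h : y ∈ X) (h' : y' ∈ X)
    (he : labT X y = labT X y') : y = y' := by
  simp only [labT, dif_pos h, dif_pos h'] at he
  have hv : X.equivFin ⟨y, h⟩ = X.equivFin ⟨y', h'⟩ := by
    apply Fin.ext; omega
  have := X.equivFin.injective hv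
  exact Subtype.ext_iff.mp this

lemma gamT_diff (M : ℕ) (i : Fin N) :
    Differentiable ℂ (fun z : Fin N → ℂ => (Complex.Gamma ((M : ℂ) - z i))⁻¹) :=
  Complex.differentiable_one_div_Gamma.comp ((differentiable_const _).sub (diff_proj i))

lemma gamT_zero {M k : ℕ} (hk : M ≤ k) : (Complex.Gamma ((M : ℂ) - (k : ℕ)))⁻¹ = 0 := by
  rw [(Complex.Gamma_eq_zero_iff _).mpr ⟨k - M, by push_cast [Nat.cast_sub hk]; ring⟩, inv_zero]

lemma gamT_ne {M : ℕ} {z : ℂ} (h : ¬ ∃ k : ℕ, M ≤ k ∧ z = (k : ℂ)) :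
    Complex.Gamma ((M : ℂ) - z) ≠ 0 := by
  intro h0
  obtain ⟨m, hm⟩ := (Complex.Gamma_eq_zero_iff _).mp h0
  exact h ⟨M + m, Nat.le_add_right _ _, by push_cast; linear_combination -hm⟩

end AuxTame

section MainT

open Complex Finset

lemma mainT {N : ℕ} (hN : 1 < N) (M : ℕ) (b : ℕ → (Fin N → ℂ))
    (hb : Function.Injective b) (htail : ∀ k, M ≤ k → b k = eeT N k) :
    ∃ T, IsAutomorphism T ∧ ∀ j, T (b j) = eeT N j := by
  classical
  have hN0 : 0 < N := by omega
  set i0 : Fin N := ⟨0, by omega⟩ with hi0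
  set i1 : Fin N := ⟨1, hN⟩ with hi1
  have hi01 : i0 ≠ i1 := by simp [hi0, hi1, Fin.ext_iff]
  have hval0 : ∀ l : Fin N, l = i0 ↔ (l : ℕ) = 0 := by
    intro l; simp [Fin.ext_iff, hi0]
  have hee0 : ∀ k : ℕ, eeT N k i0 = (k : ℂ) := fun k => by simp [eeT, hi0]
  have heel : ∀ (k : ℕ) (l : Fin N), l ≠ i0 → eeT N k l = 0 := by
    intro k l hl
    have : (l : ℕ) ≠ 0 := fun h => hl ((hval0 l).mpr h)
    simp [eeT, this]
  have hclsee : ∀ k : ℕ, clsT i0 (eeT N k) = 0 := by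
    intro k; funext l
    by_cases h : l = i0
    · simp [clsT, h]
    · simp only [clsT, if_neg h]; rw [heel k l h]; rfl
  -- Bd z : z is a natural number ≥ M
  set Bd : ℂ → Prop := fun z => ∃ k : ℕ, M ≤ k ∧ z = (k : ℂ) with hBd
  have hBdnat : ∀ j : ℕ, j < M → ¬ Bd ((j : ℂ)) := by
    rintro j hj ⟨k, hk, he⟩
    rw [Nat.cast_inj] at he
    omega
  have honaxis : ∀ j, j < M → clsT i0 (b j) = 0 → ¬ Bd (b j i0) := by
    rintro j hj hcls ⟨k, hk, he⟩
    have : b j = b k := by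
      rw [htail k hk]
      funext l
      by_cases h : l = i0
      · rw [h, he, hee0]
      · have := congrFun hcls l
        simp only [clsT, if_neg h] at this
        rw [this, heel k l h]; rfl
    exact absurd (hb this) (by omega)
  ---------------------------------------------------------------- Phase 0
  set X0 : Finset (Fin N → ℂ) := (Finset.range M).image fun j => clsT i0 (b j) with hX0
  obtain ⟨s, hs⟩ := Infinite.exists_notMem_finset
    ((Finset.range M).image fun j => -((b j i0).im) / (labT X0 (clsT i0 (b j))))
  set c0 : (Fin N → ℂ) → ℂ := fun y =>
    if y = 0 then 0 else (s : ℂ) * Complex.I * (labT X0 y : ℕ) with hc0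
  obtain ⟨Q0, hQ0d, hQ0⟩ := interpT hN0 (insert 0 X0) c0
  set F0 : (Fin N → ℂ) → ℂ := fun z => Q0 (clsT i0 z) with hF0
  have hF0inv : ∀ z w, F0 (fun l => if l = i0 then w else z l) = F0 z := by
    intro z w
    simp only [hF0]
    congr 1
    funext l
    by_cases h : l = i0 <;> simp [clsT, h]
  have hσ0 : IsAutomorphism (shT i0 F0) := shT_auto _ _ (hQ0d.comp (clsT_diff i0)) hF0inv
  set b1 : ℕ → Fin N → ℂ := fun j => shT i0 F0 (b j) with hb1
  have hb1inj : Function.Injective b1 := (auto_inj hσ0).comp hb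
  have hb1l : ∀ j (l : Fin N), l ≠ i0 → b1 j l = b j l := fun j l hl => shT_apply_ne _ _ hl
  have hb1tail : ∀ k, M ≤ k → b1 k = eeT N k := by
    intro k hk
    have h1 : b1 k = shT i0 F0 (eeT N k) := by
      show shT i0 F0 (b k) = _
      rw [htail k hk]
    rw [h1]
    funext l
    by_cases h : l = i0
    · rw [h, shT_apply_eq, hF0]
      show eeT N k i0 + Q0 (clsT i0 (eeT N k)) = eeT N k i0
      rw [hclsee, hQ0 0 (Finset.mem_insert_self _ _), hc0]
      simp
    · exact shT_apply_ne _ _ h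
  have hb1bad : ∀ j, j < M → ¬ Bd (b1 j i0) := by
    intro j hj
    have hmem : clsT i0 (b j) ∈ insert 0 X0 :=
      Finset.mem_insert_of_mem (Finset.mem_image.mpr ⟨j, Finset.mem_range.mpr hj, rfl⟩)
    have hco : b1 j i0 = b j i0 + c0 (clsT i0 (b j)) := by
      show b j i0 + F0 (b j) = _
      show b j i0 + Q0 (clsT i0 (b j)) = _
      rw [hQ0 _ hmem]
    by_cases hy : clsT i0 (b j) = 0
    · have hz : c0 (clsT i0 (b j)) = 0 := by rw [hy]; simp [hc0]
      rw [hco, hz, add_zero]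
      exact honaxis j hj hy
    · rintro ⟨k, hk, he⟩
      rw [hco] at he
      simp only [hc0, if_neg hy] at he
      set n : ℕ := labT X0 (clsT i0 (b j)) with hn
      have hnpos : 0 < n := labT_pos (Finset.mem_image.mpr ⟨j, Finset.mem_range.mpr hj, rfl⟩)
      have him := congrArg Complex.im he
      simp only [Complex.add_im, Complex.mul_im, Complex.mul_re, Complex.ofReal_re,
        Complex.ofReal_im, Complex.I_re, Complex.I_im, Complex.natCast_im, Complex.natCast_re,
        mul_zero, mul_one, zero_mul, sub_zero, zero_add, add_zero, zero_sub, neg_zero] at him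
      -- him : (b j i0).im + s * n = 0
      apply hs
      apply Finset.mem_image.mpr
      refine ⟨j, Finset.mem_range.mpr hj, ?_⟩
      rw [← hn]
      have hnne : (n : ℝ) ≠ 0 := Nat.cast_ne_zero.mpr hnpos.ne'
      field_simp
      linarith
  ---------------------------------------------------------------- Phase 1
  set X1 : Finset (Fin N → ℂ) := (Finset.range M).image fun j => clsT i1 (b1 j) with hX1
  set lb : ℕ → ℂ := fun j => ((labT X1 (clsT i1 (b1 j)) : ℕ) : ℂ) with hlb
  have hlbne : ∀ j, j < M → lb j ≠ 0 := by
    intro j hj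
    have : 0 < labT X1 (clsT i1 (b1 j)) :=
      labT_pos (Finset.mem_image.mpr ⟨j, Finset.mem_range.mpr hj, rfl⟩)
    exact_mod_cast Nat.cast_ne_zero.mpr this.ne'
  obtain ⟨t, ht⟩ := Infinite.exists_notMem_finset
    ((((Finset.range M) ×ˢ (Finset.range M)).image fun jj =>
      (b1 jj.2 i1 - b1 jj.1 i1) / (lb jj.1 - lb jj.2)) ∪
     ((Finset.range M).image fun j => -(b1 j i1) / lb j))
  set c1 : (Fin N → ℂ) → ℂ := fun y =>
    t * ((labT X1 y : ℕ) : ℂ) * Complex.Gamma ((M : ℂ) - y i0) with hc1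
  obtain ⟨Q1, hQ1d, hQ1⟩ := interpT hN0 X1 c1
  set F1 : (Fin N → ℂ) → ℂ :=
    fun z => (Complex.Gamma ((M : ℂ) - z i0))⁻¹ * Q1 (clsT i1 z) with hF1
  have hF1inv : ∀ z w, F1 (fun l => if l = i1 then w else z l) = F1 z := by
    intro z w
    have h1 : clsT i1 (fun l => if l = i1 then w else z l) = clsT i1 z := by
      funext l; by_cases h : l = i1 <;> simp [clsT, h]
    show (Complex.Gamma ((M : ℂ) - (if i0 = i1 then w else z i0)))⁻¹ *
      Q1 (clsT i1 fun l => if l = i1 then w else z l) = _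
    rw [h1, if_neg hi01]
  have hσ1 : IsAutomorphism (shT i1 F1) :=
    shT_auto _ _ ((gamT_diff M i0).mul (hQ1d.comp (clsT_diff i1))) hF1inv
  set b2 : ℕ → Fin N → ℂ := fun j => shT i1 F1 (b1 j) with hb2
  have hb2l : ∀ j (l : Fin N), l ≠ i1 → b2 j l = b1 j l := fun j l hl => shT_apply_ne _ _ hl
  have hb2tail : ∀ k, M ≤ k → b2 k = eeT N k := by
    intro k hk
    have h1 : b2 k = shT i1 F1 (eeT N k) := by
      show shT i1 F1 (b1 k) = _
      rw [hb1tail k hk]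
    rw [h1]
    funext l
    by_cases h : l = i1
    · rw [h, shT_apply_eq, hF1]
      show eeT N k i1 + (Complex.Gamma ((M : ℂ) - eeT N k i0))⁻¹ * Q1 (clsT i1 (eeT N k)) = _
      rw [hee0, gamT_zero hk, zero_mul, add_zero]
    · exact shT_apply_ne _ _ h
  have hb2co : ∀ j, j < M → b2 j i1 = b1 j i1 + t * lb j := by
    intro j hj
    have hmem : clsT i1 (b1 j) ∈ X1 := Finset.mem_image.mpr ⟨j, Finset.mem_range.mpr hj, rfl⟩
    have hcl0 : (clsT i1 (b1 j)) i0 = b1 j i0 := if_neg hi01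
    have hΓ : Complex.Gamma ((M : ℂ) - b1 j i0) ≠ 0 := gamT_ne (hb1bad j hj)
    have heq : b2 j i1 = b1 j i1 +
        (Complex.Gamma ((M : ℂ) - b1 j i0))⁻¹ * c1 (clsT i1 (b1 j)) := by
      show b1 j i1 + F1 (b1 j) = _
      show b1 j i1 + (Complex.Gamma ((M : ℂ) - b1 j i0))⁻¹ * Q1 (clsT i1 (b1 j)) = _
      rw [hQ1 _ hmem]
    rw [heq]
    simp only [hc1, hcl0]
    have hkey : (Complex.Gamma ((M : ℂ) - b1 j i0))⁻¹ *
        (t * ((labT X1 (clsT i1 (b1 j)) : ℕ) : ℂ) * Complex.Gamma ((M : ℂ) - b1 j i0)) =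
        t * ((labT X1 (clsT i1 (b1 j)) : ℕ) : ℂ) := by
      field_simp
    rw [hkey, hlb]
  have hb2sep : ∀ j j', j < M → j' < M → j ≠ j' → b2 j i1 ≠ b2 j' i1 := by
    intro j j' hj hj' hne heq
    rw [hb2co j hj, hb2co j' hj'] at heq
    by_cases hl : lb j = lb j'
    · have hlab : labT X1 (clsT i1 (b1 j)) = labT X1 (clsT i1 (b1 j')) := by
        have h2 : ((labT X1 (clsT i1 (b1 j)) : ℕ) : ℂ) =
            ((labT X1 (clsT i1 (b1 j')) : ℕ) : ℂ) := hl
        exact Nat.cast_inj.mp h2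
      have hclseq : clsT i1 (b1 j) = clsT i1 (b1 j') :=
        labT_inj (Finset.mem_image.mpr ⟨j, Finset.mem_range.mpr hj, rfl⟩)
          (Finset.mem_image.mpr ⟨j', Finset.mem_range.mpr hj', rfl⟩) hlab
      have hco : b1 j i1 = b1 j' i1 := by
        rw [hl] at heq
        exact add_right_cancel heq
      have : b1 j = b1 j' := by
        funext l
        by_cases h : l = i1
        · rw [h]; exact hco
        · have := congrFun hclseq l
          simpa only [clsT, if_neg h] using this
      exact hne (hb1inj this)
    · apply ht
      apply Finset.mem_union_left
      apply Finset.mem_image.mpr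
      refine ⟨(j, j'), Finset.mem_product.mpr ⟨Finset.mem_range.mpr hj, Finset.mem_range.mpr hj'⟩, ?_⟩
      have hd : lb j - lb j' ≠ 0 := sub_ne_zero.mpr hl
      field_simp
      linear_combination -heq
  have hb2ne : ∀ j, j < M → b2 j i1 ≠ 0 := by
    intro j hj heq
    rw [hb2co j hj] at heq
    apply ht
    apply Finset.mem_union_right
    apply Finset.mem_image.mpr
    refine ⟨j, Finset.mem_range.mpr hj, ?_⟩
    have := hlbne j hj
    field_simp
    linear_combination -heq
  have hb2bad : ∀ j, j < M → ¬ Bd (b2 j i0) := by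
    intro j hj
    rw [hb2l j i0 hi01]
    exact hb1bad j hj
  ---------------------------------------------------------------- Phase 2
  set X2 : Finset (Fin N → ℂ) :=
    insert 0 ((Finset.range M).image fun j => clsT i0 (b2 j)) with hX2
  set c2 : (Fin N → ℂ) → ℂ := fun y =>
    if y = 0 then 0 else
      if h : ∃ j, j < M ∧ clsT i0 (b2 j) = y then ((h.choose : ℂ) - b2 h.choose i0) else 0
    with hc2
  obtain ⟨Q2, hQ2d, hQ2⟩ := interpT hN0 X2 c2
  set F2 : (Fin N → ℂ) → ℂ := fun z => Q2 (clsT i0 z) with hF2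
  have hF2inv : ∀ z w, F2 (fun l => if l = i0 then w else z l) = F2 z := by
    intro z w
    simp only [hF2]
    congr 1
    funext l
    by_cases h : l = i0 <;> simp [clsT, h]
  have hσ2 : IsAutomorphism (shT i0 F2) := shT_auto _ _ (hQ2d.comp (clsT_diff i0)) hF2inv
  set b3 : ℕ → Fin N → ℂ := fun j => shT i0 F2 (b2 j) with hb3
  have hb3l : ∀ j (l : Fin N), l ≠ i0 → b3 j l = b2 j l := fun j l hl => shT_apply_ne _ _ hl
  have hb3tail : ∀ k, M ≤ k → b3 k = eeT N k := by
    intro k hk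
    have h1 : b3 k = shT i0 F2 (eeT N k) := by
      show shT i0 F2 (b2 k) = _
      rw [hb2tail k hk]
    rw [h1]
    funext l
    by_cases h : l = i0
    · rw [h, shT_apply_eq, hF2]
      show eeT N k i0 + Q2 (clsT i0 (eeT N k)) = _
      rw [hclsee, hQ2 0 (Finset.mem_insert_self _ _), hc2]
      simp
    · exact shT_apply_ne _ _ h
  have hy2ne : ∀ j, j < M → clsT i0 (b2 j) ≠ 0 := by
    intro j hj heq
    have := congrFun heq i1
    simp only [clsT, if_neg (Ne.symm hi01)] at this
    exact hb2ne j hj (by simpa using this)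
  have hb30 : ∀ j, j < M → b3 j i0 = (j : ℂ) := by
    intro j hj
    have hmem : clsT i0 (b2 j) ∈ X2 :=
      Finset.mem_insert_of_mem (Finset.mem_image.mpr ⟨j, Finset.mem_range.mpr hj, rfl⟩)
    have hco : b3 j i0 = b2 j i0 + c2 (clsT i0 (b2 j)) := by
      show b2 j i0 + F2 (b2 j) = _
      show b2 j i0 + Q2 (clsT i0 (b2 j)) = _
      rw [hQ2 _ hmem]
    have hex : ∃ j', j' < M ∧ clsT i0 (b2 j') = clsT i0 (b2 j) := ⟨j, hj, rfl⟩
    have hch := hex.choose_spec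
    have hjj : hex.choose = j := by
      by_contra hne
      apply hb2sep hex.choose j hch.1 hj hne
      have := congrFun hch.2 i1
      simpa only [clsT, if_neg (Ne.symm hi01)] using this
    rw [hco]
    simp only [hc2, if_neg (hy2ne j hj), dif_pos hex, hjj]
    ring
  ---------------------------------------------------------------- Clearing
  have clear : ∀ n : ℕ, ∃ T, IsAutomorphism T ∧ (∀ k, M ≤ k → T (b k) = eeT N k) ∧
      (∀ j, j < M → T (b j) i0 = (j : ℂ)) ∧
      (∀ j, j < M → ∀ l : Fin N, l ≠ i0 → (l : ℕ) ≤ n → T (b j) l = 0) := by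
    intro n
    induction n with
    | zero =>
      refine ⟨(shT i0 F2) ∘ (shT i1 F1) ∘ (shT i0 F0), auto_comp (auto_comp hσ0 hσ1) hσ2,
        fun k hk => hb3tail k hk, fun j hj => hb30 j hj, ?_⟩
      intro j hj l hl hl0
      exact absurd ((hval0 l).mpr (Nat.le_zero.mp hl0)) hl
    | succ n ih =>
      obtain ⟨T, hT, hTtail, hT0, hTl⟩ := ih
      by_cases hn : n + 1 < N
      · set i : Fin N := ⟨n + 1, hn⟩ with hidef
        have hii0 : i ≠ i0 := by simp [hidef, hi0, Fin.ext_iff]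
        set cs : ℕ → Fin N → ℂ := fun j => T (b j) with hcs
        have hT0c : ∀ j', j' < M → cs j' i0 = (j' : ℂ) := hT0
        set Xc : Finset (Fin N → ℂ) := (Finset.range M).image fun j => clsT i (cs j) with hXc
        set cc : (Fin N → ℂ) → ℂ := fun y =>
          if h : ∃ j, j < M ∧ clsT i (cs j) = y then
            -(cs h.choose i) * Complex.Gamma ((M : ℂ) - y i0) else 0 with hcc
        obtain ⟨Qc, hQcd, hQc⟩ := interpT hN0 Xc cc
        set Fc : (Fin N → ℂ) → ℂ :=
          fun z => (Complex.Gamma ((M : ℂ) - z i0))⁻¹ * Qc (clsT i z) with hFc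
        have hFcinv : ∀ z w, Fc (fun l => if l = i then w else z l) = Fc z := by
          intro z w
          have h1 : clsT i (fun l => if l = i then w else z l) = clsT i z := by
            funext l; by_cases h : l = i <;> simp [clsT, h]
          show (Complex.Gamma ((M : ℂ) - (if i0 = i then w else z i0)))⁻¹ *
            Qc (clsT i fun l => if l = i then w else z l) = _
          rw [h1, if_neg (Ne.symm hii0)]
        have hσc : IsAutomorphism (shT i Fc) :=
          shT_auto _ _ ((gamT_diff M i0).mul (hQcd.comp (clsT_diff i))) hFcinv
        refine ⟨(shT i Fc) ∘ T, auto_comp hT hσc, ?_, ?_, ?_⟩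
        · intro k hk
          show shT i Fc (T (b k)) = eeT N k
          rw [hTtail k hk]
          funext l
          by_cases h : l = i
          · rw [h, shT_apply_eq, hFc]
            show eeT N k i + (Complex.Gamma ((M : ℂ) - eeT N k i0))⁻¹ * Qc (clsT i (eeT N k)) = _
            rw [hee0, gamT_zero hk, zero_mul, add_zero]
          · exact shT_apply_ne _ _ h
        · intro j hj
          show shT i Fc (T (b j)) i0 = _
          rw [shT_apply_ne _ _ (Ne.symm hii0)]
          exact hT0 j hj
        · intro j hj l hl hln
          by_cases h : l = i
          · rw [h]
            have hmem : clsT i (cs j) ∈ Xc :=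
              Finset.mem_image.mpr ⟨j, Finset.mem_range.mpr hj, rfl⟩
            have hcl0 : (clsT i (cs j)) i0 = cs j i0 := if_neg (Ne.symm hii0)
            have hcsj0 : cs j i0 = (j : ℂ) := hT0c j hj
            have hex : ∃ j', j' < M ∧ clsT i (cs j') = clsT i (cs j) := ⟨j, hj, rfl⟩
            have hch := hex.choose_spec
            have hjj : hex.choose = j := by
              have h1 := congrFun hch.2 i0
              simp only [clsT, if_neg (Ne.symm hii0)] at h1
              rw [hT0c hex.choose hch.1, hcsj0] at h1
              exact_mod_cast h1
            have hΓ : Complex.Gamma ((M : ℂ) - (j : ℂ)) ≠ 0 := gamT_ne (hBdnat j hj)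
            show shT i Fc (cs j) i = 0
            rw [shT_apply_eq]
            show cs j i + (Complex.Gamma ((M : ℂ) - cs j i0))⁻¹ * Qc (clsT i (cs j)) = 0
            rw [hQc _ hmem]
            simp only [hcc, dif_pos hex, hjj, hcl0, hcsj0]
            field_simp
            ring
          · have hlne : (l : ℕ) ≠ n + 1 := by
              intro hv
              exact h (Fin.ext (by simp [hidef, hv]))
            have hlle : (l : ℕ) ≤ n := by omega
            show shT i Fc (T (b j)) l = 0
            rw [shT_apply_ne _ _ h]
            exact hTl j hj l hl hlle
      · refine ⟨T, hT, hTtail, hT0, ?_⟩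
        intro j hj l hl hln
        exact hTl j hj l hl (by omega)
  obtain ⟨T, hT, hTtail, hT0, hTl⟩ := clear N
  refine ⟨T, hT, ?_⟩
  intro j
  rcases lt_or_ge j M with hj | hj
  · funext l
    by_cases h : l = i0
    · rw [h, hT0 j hj, hee0]
    · rw [hTl j hj l h l.isLt.le, heel j l h]

  · exact hTtail j hj

end MainT


/-- A modification of a tame discrete sequence in finitely many terms is again
a tame discrete sequence. -/
theorem stmt_9 {N : ℕ} (hN : 1 < N)
    (a : ℕ → (Fin N → ℂ)) (ha : DiscreteSeq a) (haTame : Tame a)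
    (a' : ℕ → (Fin N → ℂ)) (ha'inj : Function.Injective a')
    (hfin : {j : ℕ | a' j ≠ a j}.Finite) :
    DiscreteSeq a' ∧ Tame a' := by
  classical
  obtain ⟨hainj, haK⟩ := ha
  constructor
  · refine ⟨ha'inj, fun K hK => ((haK K hK).union hfin).subset ?_⟩
    intro j hj
    by_cases h : a' j = a j
    · exact Or.inl (by simpa [← h] using hj)
    · exact Or.inr h
  · obtain ⟨Φ₀, hΦ₀auto, hΦ₀⟩ := haTame
    set M : ℕ := (hfin.toFinset.sup id) + 1 with hM
    have hMk : ∀ k, M ≤ k → a' k = a k := by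
      intro k hk
      by_contra h
      have h1 : k ∈ hfin.toFinset := hfin.mem_toFinset.mpr h
      have h2 := Finset.le_sup (f := id) h1
      simp only [id] at h2
      omega
    set b : ℕ → Fin N → ℂ := fun j => Φ₀ (a' j) with hb
    have hbinj : Function.Injective b := (auto_inj hΦ₀auto).comp ha'inj
    have htail : ∀ k, M ≤ k → b k = eeT N k := by
      intro k hk
      show Φ₀ (a' k) = _
      rw [hMk k hk, hΦ₀ k]
      rfl
    obtain ⟨T, hTauto, hT⟩ := mainT hN M b hbinj htail
    refine ⟨T ∘ Φ₀, auto_comp hΦ₀auto hTauto, fun j => ?_⟩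
    show T (Φ₀ (a' j)) = _
    exact hT j
end

section
/- Let N > 1 and let {a_j}_{j∈ℕ} be a discrete sequence without repetitions in ℂ^N that is contained in a proper affine complex subspace of ℂ^N (i.e. in a set of the form v + W where W is a complex linear subspace of ℂ^N with W ≠ ℂ^N). Then {a_j}_{j∈ℕ} is tame in ℂ^N. -/
open Metric Set
open scoped NNReal

namespace Stmt10

lemma diff_coord {N : ℕ} (i : Fin N) : Differentiable ℂ fun z : Fin N → ℂ => z i :=
  (ContinuousLinearMap.proj (R := ℂ) (φ := fun _ : Fin N => ℂ) i).differentiable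

/-- In `Fin N → ℂ` the sup norm is attained. -/
lemma exists_norm_le {N : ℕ} (x : Fin N → ℂ) (hx : x ≠ 0) : ∃ i, ‖x‖ ≤ ‖x i‖ := by
  rcases Nat.eq_zero_or_pos N with h | h
  · exact absurd (funext fun i => absurd i.isLt (by omega) : x = 0) hx
  · have hne : (Finset.univ : Finset (Fin N)).Nonempty := ⟨⟨0, h⟩, Finset.mem_univ _⟩
    obtain ⟨i, -, hi⟩ := Finset.exists_mem_eq_sup Finset.univ hne fun i => (‖x i‖₊ : ℝ≥0)
    refine ⟨i, le_of_eq ?_⟩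
    have h2 : ‖x‖₊ = ‖x i‖₊ := by rw [Pi.nnnorm_def, hi]
    rw [← coe_nnnorm x, ← coe_nnnorm (x i), h2]

noncomputable def Pf {N : ℕ} (b : ℕ → Fin N → ℂ) (n : ℕ) (z : Fin N → ℂ) : ℂ :=
  ∏ k ∈ Finset.range n,
    if h : ∃ i, b k i ≠ b n i then
      (z h.choose - b k h.choose) / (b n h.choose - b k h.choose) else 1

noncomputable def Phif {N : ℕ} (b : ℕ → Fin N → ℂ) (n : ℕ) (z : Fin N → ℂ) : ℂ :=
  if h : ∃ i, ‖b n‖ ≤ ‖b n i‖ then z h.choose / b n h.choose else 1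

lemma Pf_self {N : ℕ} (b : ℕ → Fin N → ℂ) (n : ℕ) : Pf b n (b n) = 1 := by
  refine Finset.prod_eq_one fun k _ => ?_
  by_cases h : ∃ i, b k i ≠ b n i
  · rw [dif_pos h]
    exact div_self (sub_ne_zero.mpr (Ne.symm h.choose_spec))
  · rw [dif_neg h]

lemma Pf_earlier {N : ℕ} {b : ℕ → Fin N → ℂ} (hb : Function.Injective b) {m n : ℕ}
    (hmn : m < n) : Pf b n (b m) = 0 := by
  have h : ∃ i, b m i ≠ b n i := by
    by_contra hc
    push_neg at hc
    exact absurd (hb (funext hc)) (by omega)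
  refine Finset.prod_eq_zero (Finset.mem_range.mpr hmn) ?_
  rw [dif_pos h, sub_self, zero_div]

lemma diff_prod_range {N : ℕ} {g : ℕ → (Fin N → ℂ) → ℂ} (hg : ∀ k, Differentiable ℂ (g k))
    (m : ℕ) : Differentiable ℂ (fun z => ∏ k ∈ Finset.range m, g k z) := by
  induction m with
  | zero => simpa using differentiable_const (1 : ℂ)
  | succ m ih => simpa [Finset.prod_range_succ] using ih.fun_mul (hg m)

lemma Pf_diff {N : ℕ} (b : ℕ → Fin N → ℂ) (n : ℕ) : Differentiable ℂ (Pf b n) := by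
  unfold Pf
  refine diff_prod_range (g := fun k z =>
    if h : ∃ i, b k i ≠ b n i then
      (z h.choose - b k h.choose) / (b n h.choose - b k h.choose) else 1) (fun k => ?_) n
  by_cases h : ∃ i, b k i ≠ b n i
  · simp only [dif_pos h, div_eq_mul_inv]
    exact ((diff_coord h.choose).sub_const _).mul_const _
  · simp only [dif_neg h]; exact differentiable_const _

lemma Phif_diff {N : ℕ} (b : ℕ → Fin N → ℂ) (n : ℕ) : Differentiable ℂ (Phif b n) := by
  unfold Phif
  by_cases h : ∃ i, ‖b n‖ ≤ ‖b n i‖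
  · simp only [dif_pos h, div_eq_mul_inv]
    exact (diff_coord h.choose).mul_const _
  · simp only [dif_neg h]; exact differentiable_const _

lemma Phif_self {N : ℕ} {b : ℕ → Fin N → ℂ} {n : ℕ} (hbn : b n ≠ 0) :
    Phif b n (b n) = 1 := by
  have h : ∃ i, ‖b n‖ ≤ ‖b n i‖ := exists_norm_le _ hbn
  rw [Phif, dif_pos h]
  refine div_self ?_
  have := h.choose_spec
  have h0 : 0 < ‖b n‖ := norm_pos_iff.mpr hbn
  intro hz
  rw [hz] at this
  simp only [norm_zero] at this
  linarith

lemma Phif_le {N : ℕ} {b : ℕ → Fin N → ℂ} {n : ℕ} (hbn : b n ≠ 0) (z : Fin N → ℂ) :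
    ‖Phif b n z‖ ≤ ‖z‖ / ‖b n‖ := by
  have h : ∃ i, ‖b n‖ ≤ ‖b n i‖ := exists_norm_le _ hbn
  have h0 : 0 < ‖b n‖ := norm_pos_iff.mpr hbn
  rw [Phif, dif_pos h, norm_div]
  exact div_le_div₀ (norm_nonneg z) (norm_le_pi_norm z _) h0 h.choose_spec

/-- Existence of the damping exponent. -/
lemma exK {N : ℕ} {F : Type*} [NormedAddCommGroup F] (b : ℕ → Fin N → ℂ) (n : ℕ)
    (hbn : b n ≠ 0) (d : F) :
    ∃ K : ℕ, ∀ z : Fin N → ℂ, ‖z‖ ≤ ‖b n‖ / 2 →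
      ‖Pf b n z * Phif b n z ^ K‖ * ‖d‖ ≤ (1 / 2 : ℝ) ^ n := by
  have h0 : 0 < ‖b n‖ := norm_pos_iff.mpr hbn
  obtain ⟨M, hM⟩ := (isCompact_closedBall (0 : Fin N → ℂ) (‖b n‖ / 2)).exists_bound_of_continuousOn
    (Pf_diff b n).continuous.continuousOn
  set M' : ℝ := max M 1 with hM'def
  have hM1 : 1 ≤ M' := le_max_right _ _
  have hM0 : 0 < M' := by linarith
  have hMb : ∀ z : Fin N → ℂ, ‖z‖ ≤ ‖b n‖ / 2 → ‖Pf b n z‖ ≤ M' := fun z hz =>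
    le_trans (hM z (by simpa [mem_closedBall, dist_eq_norm] using hz)) (le_max_left _ _)
  have hden : (0:ℝ) < M' * ‖d‖ + 1 := by positivity
  obtain ⟨K, hK⟩ := exists_pow_lt_of_lt_one
    (show (0:ℝ) < (1/2) ^ n / (M' * ‖d‖ + 1) by positivity)
    (show (1/2 : ℝ) < 1 by norm_num)
  refine ⟨K, fun z hz => ?_⟩
  have hd0 : (0:ℝ) ≤ ‖d‖ := norm_nonneg _
  have hφ : ‖Phif b n z‖ ≤ 1 / 2 := by
    refine (Phif_le hbn z).trans ?_
    rw [div_le_div_iff₀ h0 (by norm_num)]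
    linarith
  have hφK : ‖Phif b n z‖ ^ K ≤ (1/2 : ℝ) ^ K :=
    pow_le_pow_left₀ (norm_nonneg _) hφ K
  have h1 : ‖Pf b n z * Phif b n z ^ K‖ ≤ M' * (1/2) ^ K := by
    rw [norm_mul, norm_pow]
    exact mul_le_mul (hMb z hz) hφK (by positivity) (le_of_lt hM0)
  have h2 : ‖Pf b n z * Phif b n z ^ K‖ * ‖d‖ ≤ M' * (1/2) ^ K * ‖d‖ :=
    mul_le_mul_of_nonneg_right h1 hd0
  refine h2.trans ?_
  calc M' * (1/2:ℝ) ^ K * ‖d‖ = (M' * ‖d‖) * (1/2:ℝ)^K := by ring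
    _ ≤ (M' * ‖d‖) * ((1/2:ℝ)^n / (M' * ‖d‖ + 1)) :=
        mul_le_mul_of_nonneg_left (le_of_lt hK) (by positivity)
    _ = (1/2:ℝ)^n * ((M' * ‖d‖) / (M' * ‖d‖ + 1)) := by ring
    _ ≤ (1/2:ℝ)^n * 1 := by
        refine mul_le_mul_of_nonneg_left ?_ (by positivity)
        rw [div_le_one hden]; linarith
    _ = (1/2:ℝ)^n := mul_one _


variable {N : ℕ} {F : Type*} [NormedAddCommGroup F] [NormedSpace ℂ F] [CompleteSpace F]

noncomputable def DK (b : ℕ → Fin N → ℂ) (w : ℕ → F) : ℕ → F × ℕ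
  | n =>
    let d : F := w n - ∑ k ∈ (Finset.range n).attach,
      (Pf b k.1 (b n) * Phif b k.1 (b n) ^ (DK b w k.1).2) • (DK b w k.1).1
    (d, if h : b n ≠ 0 then (exK b n h d).choose else 0)
decreasing_by exact Finset.mem_range.mp k.2

noncomputable def Tm (b : ℕ → Fin N → ℂ) (w : ℕ → F) (n : ℕ) (z : Fin N → ℂ) : F :=
  (Pf b n z * Phif b n z ^ (DK b w n).2) • (DK b w n).1

lemma DK_eq (b : ℕ → Fin N → ℂ) (w : ℕ → F) (n : ℕ) :
    DK b w n = (w n - ∑ k ∈ Finset.range n, Tm b w k (b n),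
      if h : b n ≠ 0 then
        (exK b n h (w n - ∑ k ∈ Finset.range n, Tm b w k (b n))).choose else 0) := by
  rw [DK]
  show ((w n - ∑ k ∈ (Finset.range n).attach, Tm b w k.1 (b n)),
    if h : b n ≠ 0 then
      (exK b n h (w n - ∑ k ∈ (Finset.range n).attach, Tm b w k.1 (b n))).choose else 0) = _
  rw [Finset.sum_attach (Finset.range n) (fun k => Tm b w k (b n))]

lemma DK_fst (b : ℕ → Fin N → ℂ) (w : ℕ → F) (n : ℕ) :
    (DK b w n).1 = w n - ∑ k ∈ Finset.range n, Tm b w k (b n) := by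
  rw [DK_eq]

lemma Tm_diff (b : ℕ → Fin N → ℂ) (w : ℕ → F) (n : ℕ) : Differentiable ℂ (Tm b w n) :=
  ((Pf_diff b n).mul ((Phif_diff b n).pow _)).smul_const _

lemma Tm_small {b : ℕ → Fin N → ℂ} (w : ℕ → F) {n : ℕ} (hbn : b n ≠ 0) :
    ∀ z : Fin N → ℂ, ‖z‖ ≤ ‖b n‖ / 2 → ‖Tm b w n z‖ ≤ (1/2 : ℝ)^n := by
  intro z hz
  have hK : (DK b w n).2 = (exK b n hbn ((DK b w n).1)).choose := by
    conv_lhs => rw [DK_eq]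
    rw [dif_pos hbn]
    congr 1
    rw [DK_eq]
  have h2 := (exK b n hbn ((DK b w n).1)).choose_spec z hz
  rw [Tm, norm_smul, hK]
  exact h2

lemma Tm_self (b : ℕ → Fin N → ℂ) (w : ℕ → F) (n : ℕ) : Tm b w n (b n) = (DK b w n).1 := by
  rw [Tm, Pf_self]
  rcases eq_or_ne (b n) 0 with h | h
  · have hK : (DK b w n).2 = 0 := by
      rw [DK_eq]
      exact dif_neg (fun hc => hc h)
    rw [hK]
    simp
  · rw [Phif_self h]
    simp

lemma Tm_earlier {b : ℕ → Fin N → ℂ} (w : ℕ → F) (hb : Function.Injective b) {m n : ℕ}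
    (hmn : m < n) : Tm b w n (b m) = 0 := by
  rw [Tm, Pf_earlier hb hmn, zero_mul, zero_smul]

/-- Cauchy-type estimate via the Schwarz lemma. -/
lemma fderiv_norm_le {E F' : Type*} [NormedAddCommGroup E] [NormedSpace ℂ E]
    [NormedAddCommGroup F'] [NormedSpace ℂ F'] [CompleteSpace F'] {q : E → F'}
    (hq : Differentiable ℂ q) {x : E} {C : ℝ}
    (hC : ∀ z, ‖z - x‖ ≤ 1 → ‖q z‖ ≤ C) : ‖fderiv ℂ q x‖ ≤ 2 * C := by
  have hC0 : 0 ≤ C := le_trans (norm_nonneg _) (hC x (by simp))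
  refine ContinuousLinearMap.opNorm_le_bound _ (by positivity) fun v => ?_
  rcases eq_or_ne v 0 with rfl | hv
  · simp
  have hvn : 0 < ‖v‖ := norm_pos_iff.mpr hv
  have hgd : ∀ t : ℂ, HasDerivAt (fun t : ℂ => q (x + t • v)) (fderiv ℂ q (x + t • v) v) t := by
    intro t
    have h1 : HasDerivAt (fun t : ℂ => x + t • v) v t := by
      simpa using ((hasDerivAt_id t).smul_const v).const_add x
    exact (hq _).hasFDerivAt.comp_hasDerivAt t h1
  have key : ∀ ε > (0:ℝ), ‖fderiv ℂ q x v‖ ≤ (2*C + ε) * ‖v‖ := by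
    intro ε hε
    set g : ℂ → F' := fun t => q (x + t • v) with hgdef
    have hg0 : g 0 = q x := by simp [hgdef]
    have hmaps : MapsTo g (ball (0:ℂ) ‖v‖⁻¹) (ball (g 0) (2*C + ε)) := by
      intro t ht
      simp only [mem_ball, dist_eq_norm, sub_zero] at ht ⊢
      have hb1 : ‖(x + t • v) - x‖ ≤ 1 := by
        rw [add_sub_cancel_left, norm_smul]
        calc ‖t‖ * ‖v‖ ≤ ‖v‖⁻¹ * ‖v‖ := mul_le_mul_of_nonneg_right ht.le hvn.le
          _ = 1 := inv_mul_cancel₀ hvn.ne'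
      have h2 := hC _ hb1
      have h3 : ‖q x‖ ≤ C := hC x (by simp)
      calc ‖g t - g 0‖ ≤ ‖g t‖ + ‖g 0‖ := norm_sub_le _ _
        _ ≤ C + C := by rw [hg0]; exact add_le_add h2 h3
        _ < 2*C + ε := by linarith
    have hdiff : DifferentiableOn ℂ g (ball 0 ‖v‖⁻¹) := fun t _ =>
      ((hgd t).differentiableAt).differentiableWithinAt
    have hS := Complex.norm_deriv_le_div_of_mapsTo_ball hdiff (hmaps.mono_right ball_subset_closedBall) (by positivity)
    have hd0 : deriv g 0 = fderiv ℂ q x v := by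
      have h4 := (hgd 0).deriv
      simpa using h4
    rw [hd0] at hS
    calc ‖fderiv ℂ q x v‖ ≤ (2*C+ε) / ‖v‖⁻¹ := hS
      _ = (2*C+ε) * ‖v‖ := by rw [div_eq_mul_inv, inv_inv]
  by_contra hcon
  push_neg at hcon
  have h5 := key ((‖fderiv ℂ q x v‖ - 2*C*‖v‖) / (2*‖v‖)) (by
    have : 0 < ‖fderiv ℂ q x v‖ - 2*C*‖v‖ := by linarith
    positivity)
  have h6 : (2*C + (‖fderiv ℂ q x v‖ - 2*C*‖v‖) / (2*‖v‖)) * ‖v‖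
      = 2*C*‖v‖ + (‖fderiv ℂ q x v‖ - 2*C*‖v‖)/2 := by
    field_simp
  rw [h6] at h5
  linarith

theorem interp (b : ℕ → Fin N → ℂ) (hb : Function.Injective b)
    (hfin : ∀ R : ℝ, {j | ‖b j‖ ≤ R}.Finite) (w : ℕ → F) :
    ∃ h : (Fin N → ℂ) → F, Differentiable ℂ h ∧ ∀ j, h (b j) = w j := by
  have hev : ∀ R : ℝ, ∃ n₀ : ℕ, ∀ n, n₀ ≤ n → R ≤ ‖b n‖ := by
    intro R
    obtain ⟨m, hm⟩ := (hfin R).bddAbove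
    refine ⟨m + 1, fun n hn => le_of_not_ge fun hc => ?_⟩
    have : n ≤ m := hm (by simp only [Set.mem_setOf_eq]; exact hc)
    omega
  have hgeo : Summable fun n : ℕ => (1/2 : ℝ)^n :=
    summable_geometric_of_lt_one (by norm_num) (by norm_num)
  have hsm : ∀ z : Fin N → ℂ, Summable fun n => Tm b w n z := by
    intro z
    obtain ⟨n₀, hn₀⟩ := hev (2 * ‖z‖ + 2)
    rw [← summable_nat_add_iff n₀]
    refine Summable.of_norm_bounded (g := fun n => (1/2:ℝ)^(n + n₀)) ?_ ?_
    · exact (summable_nat_add_iff n₀).mpr hgeo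
    · intro n
      have hbn : 2 * ‖z‖ + 2 ≤ ‖b (n + n₀)‖ := hn₀ _ (by omega)
      have hne : b (n + n₀) ≠ 0 := by
        intro h
        rw [h, norm_zero] at hbn
        have := norm_nonneg z
        linarith
      exact Tm_small w hne z (by linarith)
  refine ⟨fun z => ∑' n, Tm b w n z, ?_, ?_⟩
  · intro z₀
    set R : ℝ := ‖z₀‖ + 1 with hR
    obtain ⟨n₀, hn₀⟩ := hev (2 * R + 2)
    have hsplit : (fun z : Fin N → ℂ => ∑' n, Tm b w n z) =
        fun z => (∑ k ∈ Finset.range n₀, Tm b w k z) + ∑' n, Tm b w (n + n₀) z := by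
      funext z
      exact (Summable.sum_add_tsum_nat_add n₀ (hsm z)).symm
    rw [hsplit]
    have hRpos : (0:ℝ) < R := by positivity
    refine DifferentiableAt.add ?_ ?_
    · exact (Differentiable.fun_sum fun k _ => Tm_diff b w k) z₀
    · have hball : z₀ ∈ ball (0 : Fin N → ℂ) R := by
        simp only [mem_ball, dist_eq_norm, sub_zero, hR]
        linarith
      have hTv : ∀ (n : ℕ) (x : Fin N → ℂ), x ∈ ball (0 : Fin N → ℂ) R →
          ∀ z, ‖z - x‖ ≤ 1 → ‖Tm b w (n + n₀) z‖ ≤ (1/2:ℝ)^(n+n₀) := by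
        intro n x hx z hz
        have hbn : 2 * R + 2 ≤ ‖b (n + n₀)‖ := hn₀ _ (by omega)
        have hne : b (n + n₀) ≠ 0 := by
          intro h
          rw [h, norm_zero] at hbn
          linarith
        refine Tm_small w hne z ?_
        simp only [mem_ball, dist_eq_norm, sub_zero] at hx
        have : ‖z‖ ≤ ‖x‖ + 1 := by
          calc ‖z‖ = ‖x + (z - x)‖ := by ring_nf
            _ ≤ ‖x‖ + ‖z - x‖ := norm_add_le _ _
            _ ≤ ‖x‖ + 1 := by linarith
        linarith
      have hfd : ∀ (n : ℕ) (x : Fin N → ℂ), x ∈ ball (0:Fin N → ℂ) R →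
          ‖fderiv ℂ (Tm b w (n + n₀)) x‖ ≤ 2 * (1/2:ℝ)^(n+n₀) := fun n x hx =>
        fderiv_norm_le (Tm_diff b w (n + n₀)) (fun z hz => hTv n x hx z hz)
      have husum : Summable fun n : ℕ => 2 * (1/2:ℝ)^(n+n₀) :=
        (((summable_nat_add_iff n₀).mpr hgeo).mul_left 2)
      have hunif : TendstoUniformlyOn
          (fun (t : Finset ℕ) x => ∑ n ∈ t, fderiv ℂ (Tm b w (n + n₀)) x)
          (fun x => ∑' n, fderiv ℂ (Tm b w (n + n₀)) x) Filter.atTop (ball 0 R) :=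
        tendstoUniformlyOn_tsum husum hfd
      have hder := hasFDerivAt_of_tendstoUniformlyOn (x := z₀) isOpen_ball hunif
        (fun t x _ => HasFDerivAt.fun_sum fun n _ => ((Tm_diff b w (n + n₀)) x).hasFDerivAt)
        (fun x _ => (((summable_nat_add_iff n₀).mpr (hsm x)).hasSum)) hball
      exact hder.differentiableAt
  · intro j
    have hzero : ∀ n ∉ Finset.range (j+1), Tm b w n (b j) = 0 := by
      intro n hn
      rw [Finset.mem_range, not_lt] at hn
      exact Tm_earlier w hb (by omega)
    show (∑' n, Tm b w n (b j)) = w j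
    rw [tsum_eq_sum hzero, Finset.sum_range_succ, Tm_self, DK_fst]
    abel


end Stmt10

open Stmt10 in
/-- A discrete sequence contained in a proper affine complex subspace of ℂ^N
is tame. -/
theorem stmt_10 {N : ℕ} (hN : 1 < N)
    (a : ℕ → (Fin N → ℂ)) (ha : DiscreteSeq a)
    (v : Fin N → ℂ) (W : Submodule ℂ (Fin N → ℂ)) (hW : W ≠ ⊤)
    (haW : ∀ j, a j - v ∈ W) :
    Tame a := by
  classical
  obtain ⟨hainj, hacpt⟩ := ha
  -- an index whose basis vector is not in W
  have hi₀ : ∃ i : Fin N, Pi.single i (1:ℂ) ∉ W := by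
    by_contra h
    push_neg at h
    apply hW
    rw [eq_top_iff]
    intro x _
    have hx : x = ∑ i : Fin N, x i • (Pi.single i 1 : Fin N → ℂ) := by
      funext j
      simp [Pi.single_apply, Finset.sum_apply]
    rw [hx]
    exact Submodule.sum_mem W fun i _ => Submodule.smul_mem W _ (h i)
  obtain ⟨i₀, hi₀⟩ := hi₀
  set e : Fin N → ℂ := Pi.single i₀ 1 with he
  have he_i₀ : e i₀ = 1 := by simp [he]
  have he_ne : ∀ i, i ≠ i₀ → e i = 0 := fun i hi => by simp [he, Pi.single_apply, hi]
  have he_norm : ‖e‖ ≤ 1 := by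
    rw [pi_norm_le_iff_of_nonneg (by norm_num)]
    intro i
    rcases eq_or_ne i i₀ with rfl | hi
    · simp [he_i₀]
    · simp [he_ne i hi]
  have hWdiff : ∀ j k, a j - a k ∈ W := fun j k => by
    have := W.sub_mem (haW j) (haW k)
    simpa using this
  set b : ℕ → Fin N → ℂ := fun j => a j - (a j i₀) • e with hbdef
  have hb_i₀ : ∀ j, b j i₀ = 0 := fun j => by simp [hbdef, he_i₀]
  have hb_ne : ∀ j i, i ≠ i₀ → b j i = a j i := fun j i hi => by
    simp [hbdef, he_ne i hi]
  -- injectivity of b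
  have hbinj : Function.Injective b := by
    intro j k hjk
    have hdiff : a j - a k = (a j i₀ - a k i₀) • e := by
      funext i
      have := congrFun hjk i
      simp only [hbdef, Pi.sub_apply, Pi.smul_apply, smul_eq_mul] at this ⊢
      ring_nf
      linear_combination this
    by_cases ht : a j i₀ - a k i₀ = 0
    · apply hainj
      rw [ht, zero_smul] at hdiff
      exact sub_eq_zero.mp hdiff
    · exfalso
      apply hi₀
      have hmem : (a j i₀ - a k i₀) • e ∈ W := hdiff ▸ hWdiff j k
      have := W.smul_mem (a j i₀ - a k i₀)⁻¹ hmem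
      rwa [smul_smul, inv_mul_cancel₀ ht, one_smul] at this
  -- discreteness of b
  have hbfin : ∀ R : ℝ, {j | ‖b j‖ ≤ R}.Finite := by
    intro R
    by_contra hinf
    have hinf : {j | ‖b j‖ ≤ R}.Infinite := hinf
    have hR : (0:ℝ) ≤ R := by
      obtain ⟨j, hj⟩ := hinf.nonempty
      exact le_trans (norm_nonneg _) hj
    -- unbounded i₀ coordinates within the set
    have hub : ∀ M : ℝ, ∃ j, ‖b j‖ ≤ R ∧ M ≤ ‖a j i₀‖ := by
      intro M
      by_contra hc
      push_neg at hc
      have hsub : {j | ‖b j‖ ≤ R} ⊆ {j | a j ∈ closedBall 0 (R + max M 0)} := by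
        intro j hj
        simp only [Set.mem_setOf_eq, mem_closedBall, dist_eq_norm, sub_zero]
        have h1 : ‖a j‖ ≤ ‖b j‖ + ‖a j i₀‖ * ‖e‖ := by
          have heq : a j = b j + (a j i₀) • e := by simp [hbdef]
          calc ‖a j‖ = ‖b j + (a j i₀) • e‖ := by rw [← heq]
            _ ≤ ‖b j‖ + ‖(a j i₀) • e‖ := norm_add_le _ _
            _ = ‖b j‖ + ‖a j i₀‖ * ‖e‖ := by rw [norm_smul]
        have h2 : ‖a j i₀‖ ≤ max M 0 := le_trans (le_of_lt (hc j hj)) (le_max_left _ _)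
        have h3 : ‖a j i₀‖ * ‖e‖ ≤ ‖a j i₀‖ := by
          nlinarith [norm_nonneg (a j i₀)]
        simp only [Set.mem_setOf_eq] at hj
        linarith
      exact hinf (Set.Finite.subset (hacpt _ (isCompact_closedBall _ _)) hsub)
    -- get e ∈ W
    apply hi₀
    have hclosed : IsClosed (W : Set (Fin N → ℂ)) := Submodule.closed_of_finiteDimensional W
    suffices hcl : e ∈ closure (W : Set (Fin N → ℂ)) by
      rwa [hclosed.closure_eq] at hcl
    rw [Metric.mem_closure_iff]
    intro ε hε
    obtain ⟨j₀, hj₀⟩ := hinf.nonempty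
    obtain ⟨j, hjR, hjM⟩ := hub (2 * R / ε + 1 + ‖a j₀ i₀‖)
    set t : ℂ := a j i₀ - a j₀ i₀ with htdef
    have htn : 2 * R / ε + 1 ≤ ‖t‖ := by
      have := norm_sub_norm_le (a j i₀) (a j₀ i₀)
      simp only [htdef]
      linarith
    have ht0 : t ≠ 0 := by
      intro h
      rw [h, norm_zero] at htn
      have : (0:ℝ) ≤ 2 * R / ε := by positivity
      linarith
    refine ⟨t⁻¹ • (a j - a j₀), Submodule.smul_mem W _ (hWdiff j j₀), ?_⟩
    have hkey : e - t⁻¹ • (a j - a j₀) = -(t⁻¹ • (b j - b j₀)) := by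
      have hdec : a j - a j₀ = (b j - b j₀) + t • e := by
        simp only [hbdef, htdef]
        funext i
        simp only [Pi.sub_apply, Pi.add_apply, Pi.smul_apply, smul_eq_mul]
        ring
      rw [hdec, smul_add, smul_smul, inv_mul_cancel₀ ht0, one_smul]
      funext i
      simp only [Pi.sub_apply, Pi.neg_apply, Pi.smul_apply, Pi.add_apply, smul_eq_mul]
      ring
    rw [dist_eq_norm, hkey, norm_neg, norm_smul, norm_inv]
    have hbb : ‖b j - b j₀‖ ≤ 2 * R := by
      refine (norm_sub_le _ _).trans ?_
      simp only [Set.mem_setOf_eq] at hj₀ hjR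
      linarith
    have htpos : (0:ℝ) < ‖t‖ := by
      have : (0:ℝ) ≤ 2 * R / ε := by positivity
      linarith
    calc ‖t‖⁻¹ * ‖b j - b j₀‖ ≤ ‖t‖⁻¹ * (2 * R) :=
          mul_le_mul_of_nonneg_left hbb (by positivity)
      _ < ε := by
          rw [inv_mul_lt_iff₀ htpos]
          have hfe : ε * (2 * R / ε + 1) = 2 * R + ε := by field_simp
          nlinarith
  -- interpolation for the first shear
  obtain ⟨Fe, hFed, hFev⟩ := interp b hbinj hbfin (fun j => (j : ℂ) - a j i₀)
  -- interpolation for the second shear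
  have hcinj : Function.Injective (fun j : ℕ => (fun _ : Fin N => (j:ℂ))) := by
    intro j k hjk
    have := congrFun hjk i₀
    simp only at this
    exact_mod_cast this
  have hcfin : ∀ R : ℝ, {j : ℕ | ‖(fun _ : Fin N => (j:ℂ))‖ ≤ R}.Finite := by
    intro R
    refine Set.Finite.subset (Set.finite_Iic ⌈R⌉₊) ?_
    intro j hj
    simp only [Set.mem_setOf_eq] at hj
    have h1 : ‖((j:ℕ):ℂ)‖ ≤ R :=
      le_trans (norm_le_pi_norm (fun _ : Fin N => (j:ℂ)) i₀) hj
    have h2 : ((j:ℕ):ℝ) ≤ R := by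
      simpa using h1
    have h3 : ((j:ℕ):ℝ) ≤ (⌈R⌉₊ : ℝ) := le_trans h2 (Nat.le_ceil R)
    simp only [Set.mem_Iic]
    exact_mod_cast h3
  obtain ⟨G, hGd, hGv⟩ := interp (fun j : ℕ => (fun _ : Fin N => (j:ℂ))) hcinj hcfin b
  -- the maps
  set π : (Fin N → ℂ) → (Fin N → ℂ) := fun z => z - z i₀ • e with hπ
  set Φ₁ : (Fin N → ℂ) → (Fin N → ℂ) := fun z => z + Fe (π z) • e with hΦ₁
  set Ψ₁ : (Fin N → ℂ) → (Fin N → ℂ) := fun z => z - Fe (π z) • e with hΨ₁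
  set g : ℂ → (Fin N → ℂ) := fun t => G (fun _ => t) with hg
  set u : (Fin N → ℂ) → (Fin N → ℂ) := fun z => g (z i₀) - (g (z i₀) i₀) • e with hu
  set Φ₂ : (Fin N → ℂ) → (Fin N → ℂ) := fun z => z - u z with hΦ₂
  set Ψ₂ : (Fin N → ℂ) → (Fin N → ℂ) := fun z => z + u z with hΨ₂
  set z0 : Fin N := ⟨0, by omega⟩ with hz0
  set σ : Equiv.Perm (Fin N) := Equiv.swap z0 i₀ with hσ
  set Φ₃ : (Fin N → ℂ) → (Fin N → ℂ) := fun z i => z (σ i) with hΦ₃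
  -- π is insensitive to translations along e
  have hπe : ∀ (z : Fin N → ℂ) (t : ℂ), π (z + t • e) = π z := by
    intro z t
    funext i
    rcases eq_or_ne i i₀ with rfl | hi
    · simp [hπ, he_i₀]
    · simp [hπ, he_ne i hi, he_i₀]
  have hπe' : ∀ (z : Fin N → ℂ) (t : ℂ), π (z - t • e) = π z := by
    intro z t
    have := hπe z (-t)
    rwa [neg_smul, ← sub_eq_add_neg] at this
  -- u preserves/ignores the i₀ coordinate
  have hui₀ : ∀ z, u z i₀ = 0 := by
    intro z
    simp [hu, he_i₀]
  have hΦ₂i₀ : ∀ z, (Φ₂ z) i₀ = z i₀ := by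
    intro z
    simp [hΦ₂, hui₀]
  have hΨ₂i₀ : ∀ z, (Ψ₂ z) i₀ = z i₀ := by
    intro z
    simp [hΨ₂, hui₀]
  -- inverse identities
  have hinv₁ : ∀ z, Ψ₁ (Φ₁ z) = z := by
    intro z
    simp only [hΨ₁, hΦ₁, hπe]
    abel
  have hinv₁' : ∀ z, Φ₁ (Ψ₁ z) = z := by
    intro z
    simp only [hΨ₁, hΦ₁, hπe']
    abel
  have hinv₂ : ∀ z, Ψ₂ (Φ₂ z) = z := by
    intro z
    have : u (Φ₂ z) = u z := by
      simp only [hu, hΦ₂i₀ z]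
    simp only [hΨ₂, this]
    simp only [hΦ₂]
    abel
  have hinv₂' : ∀ z, Φ₂ (Ψ₂ z) = z := by
    intro z
    have : u (Ψ₂ z) = u z := by
      simp only [hu, hΨ₂i₀ z]
    simp only [hΦ₂, this]
    simp only [hΨ₂]
    abel
  have hinv₃ : ∀ z, Φ₃ (Φ₃ z) = z := by
    intro z
    funext i
    simp only [hΦ₃, hσ, Equiv.swap_apply_self]
  -- differentiability
  have hπd : Differentiable ℂ π := differentiable_id.sub ((diff_coord i₀).smul_const e)
  have hΦ₁d : Differentiable ℂ Φ₁ := differentiable_id.add ((hFed.comp hπd).smul_const e)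
  have hΨ₁d : Differentiable ℂ Ψ₁ := differentiable_id.sub ((hFed.comp hπd).smul_const e)
  have hgd : Differentiable ℂ g := hGd.comp (differentiable_pi.mpr fun _ => differentiable_id)
  have hud : Differentiable ℂ u := by
    have h1 : Differentiable ℂ fun z : Fin N → ℂ => g (z i₀) := hgd.comp (diff_coord i₀)
    exact h1.sub (((differentiable_pi.mp h1) i₀).smul_const e)
  have hΦ₂d : Differentiable ℂ Φ₂ := differentiable_id.sub hud
  have hΨ₂d : Differentiable ℂ Ψ₂ := differentiable_id.add hud
  have hΦ₃d : Differentiable ℂ Φ₃ := differentiable_pi.mpr fun i => diff_coord (σ i)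
  -- values
  have vb : ∀ j, π (a j) = b j := fun j => rfl
  have v1 : ∀ j, Φ₁ (a j) = a j + ((j:ℂ) - a j i₀) • e := by
    intro j
    simp only [hΦ₁, vb, hFev]
  have v1i₀ : ∀ j : ℕ, (Φ₁ (a j)) i₀ = (j:ℂ) := by
    intro j
    rw [v1]
    simp [he_i₀]
  have v2 : ∀ j : ℕ, g ((j:ℕ):ℂ) = b j := fun j => hGv j
  have vu : ∀ j : ℕ, u (Φ₁ (a j)) = b j := by
    intro j
    simp only [hu, v1i₀, v2, hb_i₀, zero_smul, sub_zero]
  have v3 : ∀ j : ℕ, Φ₂ (Φ₁ (a j)) = (j:ℂ) • e := by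
    intro j
    rw [hΦ₂]
    simp only []
    rw [vu, v1]
    funext i
    simp only [hbdef, Pi.sub_apply, Pi.add_apply, Pi.smul_apply, smul_eq_mul]
    ring
  have v4 : ∀ j : ℕ, Φ₃ ((j:ℂ) • e) = fun i : Fin N => if (i : ℕ) = 0 then (j : ℂ) else 0 := by
    intro j
    funext i
    simp only [hΦ₃, Pi.smul_apply, smul_eq_mul]
    rcases eq_or_ne i z0 with rfl | hi
    · rw [if_pos rfl]
      have : σ z0 = i₀ := Equiv.swap_apply_left _ _
      rw [this, he_i₀, mul_one]
    · have h1 : (i : ℕ) ≠ 0 := by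
        intro hc
        exact hi (Fin.ext hc)
      rw [if_neg h1]
      have h2 : σ i ≠ i₀ := by
        intro hc
        have : σ i = σ z0 := by rw [hc, hσ, Equiv.swap_apply_left]
        exact hi (σ.injective this)
      rw [he_ne _ h2, mul_zero]
  -- assemble
  refine ⟨fun z => Φ₃ (Φ₂ (Φ₁ z)), ⟨(hΦ₃d.comp (hΦ₂d.comp hΦ₁d) : _), 
    fun z => Ψ₁ (Ψ₂ (Φ₃ z)), (hΨ₁d.comp (hΨ₂d.comp hΦ₃d) : _), ?_, ?_⟩, ?_⟩
  · intro z
    show Ψ₁ (Ψ₂ (Φ₃ (Φ₃ (Φ₂ (Φ₁ z))))) = z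
    rw [hinv₃, hinv₂, hinv₁]
  · intro w
    show Φ₃ (Φ₂ (Φ₁ (Ψ₁ (Ψ₂ (Φ₃ w))))) = w
    rw [hinv₁', hinv₂', hinv₃]
  · intro j
    show Φ₃ (Φ₂ (Φ₁ (a j))) = _
    rw [v3, v4]
end

section
/- Let N > 1 and let {a_j}_{j∈ℕ} be a discrete sequence without repetitions in ℂ^N that is contained in a proper algebraic subvariety of ℂ^N (the common zero set of a family of polynomials in N complex variables which is not all of ℂ^N). Then {a_j}_{j∈ℕ} is tame in ℂ^N. -/
open Metric Set

section LimitLemma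

variable {E : Type*} [NormedAddCommGroup E] [NormedSpace ℂ E]

/-- Cauchy-type estimate via the Schwarz lemma: an entire function bounded by `C`
on `ball z 1` has `‖fderiv ℂ u z‖ ≤ 2*C`. -/
lemma norm_fderiv_le_of_bound {u : E → ℂ} (hu : Differentiable ℂ u) (z : E) {C : ℝ}
    (hC : ∀ y ∈ ball z 1, ‖u y‖ ≤ C) : ‖fderiv ℂ u z‖ ≤ 2 * C := by
  have hC0 : 0 ≤ C := le_trans (norm_nonneg _) (hC z (mem_ball_self one_pos))
  refine ContinuousLinearMap.opNorm_le_bound _ (by linarith) ?_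
  intro v
  rcases eq_or_ne v 0 with rfl | hv
  · simp
  · set vh : E := ‖v‖⁻¹ • v with hvh
    have hvh1 : ‖vh‖ = 1 := by
      rw [hvh, norm_smul, norm_inv, norm_norm, inv_mul_cancel₀ (norm_ne_zero_iff.2 hv)]
    set φ : ℂ → ℂ := fun t => u (z + t • vh) with hφ
    have hline : ∀ t : ℂ, HasDerivAt (fun s : ℂ => z + s • vh) vh t := by
      intro t
      simpa using ((hasDerivAt_id t).smul_const vh).const_add z
    have hφd : ∀ t : ℂ, HasDerivAt φ (fderiv ℂ u (z + t • vh) vh) t := fun t =>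
      ((hu _).hasFDerivAt.comp_hasDerivAt t (hline t))
    have hd0 : deriv φ 0 = fderiv ℂ u z vh := by
      have := (hφd 0).deriv
      simpa using this
    -- Schwarz estimate: for every ε > 0, ‖deriv φ 0‖ ≤ (2C + ε)
    have key : ∀ ε : ℝ, 0 < ε → ‖deriv φ 0‖ ≤ 2 * C + ε := by
      intro ε hε
      have hmem : ∀ t : ℂ, t ∈ ball (0 : ℂ) 1 → z + t • vh ∈ ball z 1 := by
        intro t ht
        simp only [mem_ball, dist_eq_norm] at ht ⊢
        rw [add_sub_cancel_left, norm_smul, hvh1, mul_one]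
        simpa using ht
      have hdφ : DifferentiableOn ℂ φ (ball (0:ℂ) 1) := by
        intro t _
        exact ((hφd t).differentiableAt).differentiableWithinAt
      have hmaps : MapsTo φ (ball (0:ℂ) 1) (ball (φ 0) (2 * C + ε)) := by
        intro t ht
        have h1 : ‖φ t‖ ≤ C := hC _ (hmem t ht)
        have h2 : ‖φ 0‖ ≤ C := hC _ (by simpa using hmem 0 (mem_ball_self one_pos))
        simp only [mem_ball, dist_eq_norm]
        calc ‖φ t - φ 0‖ ≤ ‖φ t‖ + ‖φ 0‖ := norm_sub_le _ _
        _ ≤ 2 * C := by linarith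
        _ < 2 * C + ε := by linarith
      have := Complex.norm_deriv_le_div_of_mapsTo_ball hdφ (hmaps.mono_right ball_subset_closedBall) one_pos
      simpa using this
    have hle : ‖fderiv ℂ u z vh‖ ≤ 2 * C := by
      rw [← hd0]
      by_contra h
      push_neg at h
      have := key ((‖deriv φ 0‖ - 2 * C) / 2) (by linarith)
      linarith
    have hvv : fderiv ℂ u z v = ‖v‖ • fderiv ℂ u z vh := by
      rw [hvh, (fderiv ℂ u z).map_smul_of_tower]
      rw [smul_smul]
      rw [mul_inv_cancel₀ (norm_ne_zero_iff.2 hv), one_smul]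
    rw [hvv, norm_smul, norm_norm, mul_comm]
    exact mul_le_mul hle le_rfl (norm_nonneg _) (by linarith)

/-- A series of entire functions whose terms are eventually dominated by `(1/2)^n`
on every ball sums to an entire function. -/
lemma differentiable_tsum_of_bound {g : ℕ → E → ℂ}
    (hg : ∀ n, Differentiable ℂ (g n))
    (hb : ∀ r : ℝ, 0 < r → ∃ n₀ : ℕ, ∀ n, n₀ ≤ n → ∀ z : E, ‖z‖ ≤ r → ‖g n z‖ ≤ (1/2)^n) :
    ∃ f : E → ℂ, Differentiable ℂ f ∧ ∀ z, HasSum (fun n => g n z) (f z) := by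
  have hsum : ∀ z : E, Summable (fun n => g n z) := by
    intro z
    obtain ⟨n₀, hn₀⟩ := hb (‖z‖ + 1) (by positivity)
    apply Summable.of_norm_bounded_eventually_nat
      (summable_geometric_of_lt_one (by norm_num : (0:ℝ) ≤ 1/2) (by norm_num))
    filter_upwards [Filter.eventually_ge_atTop n₀] with n hn
    exact hn₀ n hn z (by linarith)
  set f : E → ℂ := fun z => ∑' n, g n z with hf
  refine ⟨f, ?_, fun z => (hsum z).hasSum⟩
  -- partial sums
  set Sp : ℕ → E → ℂ := fun k z => ∑ n ∈ Finset.range k, g n z with hSp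
  have hSpdiff : ∀ k, Differentiable ℂ (Sp k) := by
    intro k
    exact Differentiable.fun_sum (fun i _ => hg i)
  have hSptendsto : ∀ z, Filter.Tendsto (fun k => Sp k z) Filter.atTop (nhds (f z)) :=
    fun z => (hsum z).hasSum.tendsto_sum_nat
  intro a
  -- work on s = ball 0 (‖a‖ + 2)
  obtain ⟨n₀, hn₀⟩ := hb (‖a‖ + 2) (by positivity)
  set s : Set E := ball (0 : E) (‖a‖ + 1) with hs
  have ha_mem : a ∈ s := by simp [hs, lt_add_one ‖a‖]
  -- uniform Cauchy of derivatives on s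
  have hcauchy : UniformCauchySeqOn (fun k z => fderiv ℂ (Sp k) z) Filter.atTop s := by
    rw [Metric.uniformCauchySeqOn_iff]
    intro ε hε
    obtain ⟨l₀, hl₀⟩ : ∃ l₀ : ℕ, 4 * (1/2:ℝ)^l₀ < ε := by
      obtain ⟨l₀, hl₀⟩ := exists_pow_lt_of_lt_one (show (0:ℝ) < ε/4 by linarith) (by norm_num : (1/2:ℝ) < 1)
      exact ⟨l₀, by linarith⟩
    refine ⟨max n₀ l₀, fun m hm k hk x hx => ?_⟩
    have hub : ∀ y ∈ ball x 1, ‖Sp m y - Sp k y‖ ≤ 2 * (1/2)^(max n₀ l₀) := by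
      intro y hy
      have hyb : ‖y‖ ≤ ‖a‖ + 2 := by
        have h1 : dist y x < 1 := mem_ball.mp hy
        have h2 : dist x 0 < ‖a‖ + 1 := mem_ball.mp hx
        have := dist_triangle y x 0
        simp only [dist_zero_right] at *
        linarith
      have key : ∀ p q : ℕ, max n₀ l₀ ≤ p → max n₀ l₀ ≤ q → q ≤ p →
          ‖Sp p y - Sp q y‖ ≤ 2 * (1/2)^(max n₀ l₀) := by
        intro p q hp hq hqp
        have : Sp p y - Sp q y = ∑ n ∈ Finset.Ico q p, g n y := by
          rw [hSp]
          rw [Finset.sum_Ico_eq_sub _ hqp]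
        rw [this]
        calc ‖∑ n ∈ Finset.Ico q p, g n y‖ ≤ ∑ n ∈ Finset.Ico q p, ‖g n y‖ :=
              norm_sum_le _ _
        _ ≤ ∑ n ∈ Finset.Ico q p, (1/2:ℝ)^n := by
              refine Finset.sum_le_sum fun n hn => ?_
              have hn' : n₀ ≤ n := le_trans (le_trans (le_max_left _ _) hq) (Finset.mem_Ico.mp hn).1
              exact hn₀ n hn' y hyb
        _ ≤ ∑' n : ℕ, (1/2:ℝ)^(q + n) := by
              rw [Finset.sum_Ico_eq_sum_range]
              refine Summable.sum_le_tsum _ (fun i _ => by positivity) ?_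
              apply Summable.comp_injective ?_ (add_right_injective q)
              exact summable_geometric_of_lt_one (by norm_num) (by norm_num)
        _ = (1/2:ℝ)^q * 2 := by
              rw [tsum_eq_tsum_of_hasSum_iff_hasSum (fun {s} => Iff.rfl)]
              have : ∀ n : ℕ, (1/2:ℝ)^(q+n) = (1/2)^q * (1/2)^n := fun n => pow_add _ _ _
              rw [tsum_congr this, tsum_mul_left, tsum_geometric_of_lt_one (by norm_num) (by norm_num)]
              norm_num
        _ ≤ 2 * (1/2)^(max n₀ l₀) := by
              have : (1/2:ℝ)^q ≤ (1/2)^(max n₀ l₀) :=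
                pow_le_pow_of_le_one (by norm_num) (by norm_num) hq
              linarith
      rcases le_total k m with h | h
      · exact key m k hm hk h
      · rw [norm_sub_rev]; exact key k m hk hm h
    have hdsub : Differentiable ℂ (fun y => Sp m y - Sp k y) := (hSpdiff m).sub (hSpdiff k)
    have := norm_fderiv_le_of_bound hdsub x hub
    have heq : fderiv ℂ (fun y => Sp m y - Sp k y) x = fderiv ℂ (Sp m) x - fderiv ℂ (Sp k) x := by
      rw [fderiv_fun_sub ((hSpdiff m) x) ((hSpdiff k) x)]
    rw [heq] at this
    rw [dist_eq_norm]
    calc ‖fderiv ℂ (Sp m) x - fderiv ℂ (Sp k) x‖ ≤ 2 * (2 * (1/2)^(max n₀ l₀)) := this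
    _ ≤ 4 * (1/2)^l₀ := by
          have : (1/2:ℝ)^(max n₀ l₀) ≤ (1/2)^l₀ :=
            pow_le_pow_of_le_one (by norm_num) (by norm_num) (le_max_right _ _)
          linarith
    _ < ε := hl₀
  -- pointwise limit of derivatives
  have hder_ptwise : ∀ x ∈ s, ∃ L : E →L[ℂ] ℂ,
      Filter.Tendsto (fun k => fderiv ℂ (Sp k) x) Filter.atTop (nhds L) := by
    intro x hx
    have : CauchySeq (fun k => fderiv ℂ (Sp k) x) := hcauchy.cauchySeq hx
    exact cauchySeq_tendsto_of_complete this
  choose! L hL using hder_ptwise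
  have huc : TendstoUniformlyOn (fun k z => fderiv ℂ (Sp k) z) L Filter.atTop s :=
    hcauchy.tendstoUniformlyOn_of_tendsto hL
  have := hasFDerivAt_of_tendstoUniformlyOn isOpen_ball huc
    (fun k x hx => ((hSpdiff k) x).hasFDerivAt)
    (fun x _ => hSptendsto x) ha_mem
  exact this.differentiableAt

end LimitLemma


section Interp
variable {E : Type*} [NormedAddCommGroup E] [NormedSpace ℂ E]

lemma differentiable_finset_prod {ι : Type*} (s : Finset ι) (f : ι → E → ℂ)
    (hf : ∀ i ∈ s, Differentiable ℂ (f i)) :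
    Differentiable ℂ (fun z => ∏ i ∈ s, f i z) := by
  classical
  induction s using Finset.induction with
  | empty => simpa using differentiable_const (1:ℂ)
  | @insert a s ha ih =>
      have : (fun z => ∏ i ∈ insert a s, f i z) = fun z => f a z * ∏ i ∈ s, f i z := by
        funext z; rw [Finset.prod_insert ha]
      rw [this]
      exact (hf a (Finset.mem_insert_self a s)).mul
        (ih fun i hi => hf i (Finset.mem_insert_of_mem hi))

/-- Entire interpolation at a discrete injective sequence of points. -/
lemma entire_interpolation (w : ℕ → E) (hinj : Function.Injective w)
    (hdisc : ∀ R : ℝ, {j : ℕ | ‖w j‖ ≤ R}.Finite) (v : ℕ → ℂ) :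
    ∃ f : E → ℂ, Differentiable ℂ f ∧ ∀ j, f (w j) = v j := by
  classical
  have hgd : ∀ n k : ℕ, ∃ g : E →L[ℂ] ℂ, ‖g‖ ≤ 1 ∧
      (w n ≠ w k → g (w n - w k) = (‖w n - w k‖ : ℂ)) := by
    intro n k
    by_cases h : w n = w k
    · exact ⟨0, by simp, fun h' => absurd h h'⟩
    · obtain ⟨g, hg1, hg2⟩ := exists_dual_vector ℂ (w n - w k) (norm_ne_zero_iff.2 (sub_ne_zero.2 h))
      exact ⟨g, le_of_eq hg1, fun _ => hg2⟩
  choose gd hgd1 hgd2 using hgd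
  have hφdex : ∀ n : ℕ, ∃ g : E →L[ℂ] ℂ, ‖g‖ ≤ 1 ∧ (w n ≠ 0 → g (w n) = (‖w n‖ : ℂ)) := by
    intro n
    by_cases h : w n = 0
    · exact ⟨0, by simp, fun h' => absurd h h'⟩
    · obtain ⟨g, hg1, hg2⟩ := exists_dual_vector ℂ (w n) (norm_ne_zero_iff.2 h)
      exact ⟨g, le_of_eq hg1, fun _ => hg2⟩
  choose φd hφd1 hφd2 using hφdex
  set ℓ : ℕ → ℕ → E → ℂ := fun n k z => gd n k (z - w k) / (‖w n - w k‖ : ℂ) with hℓdef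
  set φ : ℕ → E → ℂ := fun n z => if w n = 0 then 1 else φd n z / (‖w n‖ : ℂ) with hφdef
  have hℓdiff : ∀ n k, Differentiable ℂ (ℓ n k) := by
    intro n k
    simp only [hℓdef, div_eq_mul_inv]
    exact ((gd n k).differentiable.comp (differentiable_id.sub_const (w k))).mul_const _
  have hφdiff : ∀ n, Differentiable ℂ (φ n) := by
    intro n
    by_cases h : w n = 0
    · simp only [hφdef, h, if_true]; exact differentiable_const 1
    · simp only [hφdef, h, if_false, div_eq_mul_inv]
      exact ((φd n).differentiable).mul_const _
  have hne : ∀ n k : ℕ, k < n → w n ≠ w k := fun n k hk h => Nat.lt_irrefl k (hinj h ▸ hk)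
  have hℓ_self : ∀ n k, k < n → ℓ n k (w n) = 1 := by
    intro n k hk
    have hne' : (‖w n - w k‖ : ℂ) ≠ 0 := by
      simp only [ne_eq, Complex.ofReal_eq_zero, norm_eq_zero, sub_eq_zero]
      exact hne n k hk
    simp only [hℓdef, hgd2 n k (hne n k hk)]
    exact div_self hne'
  have hℓ_zero : ∀ n k, ℓ n k (w k) = 0 := by intro n k; simp [hℓdef]
  have hℓ_bound : ∀ n k z, ‖ℓ n k z‖ ≤ (‖z‖ + ‖w k‖) / ‖w n - w k‖ := by
    intro n k z
    have h1 : ‖gd n k (z - w k)‖ ≤ ‖z‖ + ‖w k‖ := by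
      calc ‖gd n k (z - w k)‖ ≤ ‖gd n k‖ * ‖z - w k‖ := (gd n k).le_opNorm _
      _ ≤ 1 * ‖z - w k‖ := mul_le_mul_of_nonneg_right (hgd1 n k) (norm_nonneg _)
      _ = ‖z - w k‖ := one_mul _
      _ ≤ ‖z‖ + ‖w k‖ := norm_sub_le _ _
    rcases eq_or_ne (w n) (w k) with h | h
    · simp only [hℓdef, h, sub_self, norm_zero, Complex.ofReal_zero, div_zero, map_zero]
      positivity
    · have hpos : 0 < ‖w n - w k‖ := norm_pos_iff.2 (sub_ne_zero.2 h)
      simp only [hℓdef, norm_div, Complex.norm_real, Real.norm_eq_abs,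
        abs_of_nonneg (norm_nonneg (w n - w k))]
      exact div_le_div_of_nonneg_right h1 hpos.le
  have hφ_self : ∀ n, φ n (w n) = 1 := by
    intro n
    by_cases h : w n = 0
    · simp [hφdef, h]
    · simp only [hφdef, h, if_false, hφd2 n h]
      exact div_self (by simpa [Complex.ofReal_eq_zero, norm_eq_zero] using h)
  have hφ_bound : ∀ n z, w n ≠ 0 → ‖φ n z‖ ≤ ‖z‖ / ‖w n‖ := by
    intro n z h
    have hpos : 0 < ‖w n‖ := norm_pos_iff.2 h
    simp only [hφdef, h, if_false, norm_div, Complex.norm_real, Real.norm_eq_abs,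
      abs_of_nonneg (norm_nonneg (w n))]
    refine div_le_div_of_nonneg_right ?_ hpos.le
    calc ‖φd n z‖ ≤ ‖φd n‖ * ‖z‖ := (φd n).le_opNorm _
    _ ≤ 1 * ‖z‖ := mul_le_mul_of_nonneg_right (hφd1 n) (norm_nonneg _)
    _ = ‖z‖ := one_mul _
  -- the bump functions
  set bump : ℕ → ℕ → E → ℂ :=
    fun n M z => (∏ k ∈ Finset.range n, ℓ n k z) * (φ n z)^M with hbumpdef
  have hbumpdiff : ∀ n M, Differentiable ℂ (bump n M) := by
    intro n M
    simp only [hbumpdef]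
    have h1 : Differentiable ℂ fun z => ∏ k ∈ Finset.range n, ℓ n k z :=
      differentiable_finset_prod _ _ (fun k _ => hℓdiff n k)
    have h2 : Differentiable ℂ fun z => (φ n z)^M := (hφdiff n).pow M
    exact h1.mul h2
  have hbump_self : ∀ n M, bump n M (w n) = 1 := by
    intro n M
    simp only [hbumpdef]
    rw [Finset.prod_congr rfl (fun k hk => hℓ_self n k (Finset.mem_range.1 hk)),
      Finset.prod_const_one, hφ_self n, one_pow, one_mul]
  have hbump_zero : ∀ n M k, k < n → bump n M (w k) = 0 := by
    intro n M k hk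
    simp only [hbumpdef]
    rw [Finset.prod_eq_zero (Finset.mem_range.2 hk) (hℓ_zero n k), zero_mul]
  -- radius
  set Rn : ℕ → ℝ := fun n => min (n : ℝ) (‖w n‖ / 2) with hRndef
  have hRn_nonneg : ∀ n, 0 ≤ Rn n := fun n => le_min (Nat.cast_nonneg n) (by positivity)
  -- existence of suitable exponent
  have exM : ∀ (n : ℕ) (c : ℂ), ∃ M : ℕ,
      ∀ z : E, ‖z‖ ≤ Rn n → w n ≠ 0 → ‖c * bump n M z‖ ≤ (1/2)^n := by
    intro n c
    by_cases h : w n = 0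
    · exact ⟨0, fun z _ h' => absurd h h'⟩
    have hwpos : 0 < ‖w n‖ := norm_pos_iff.2 h
    set A : ℝ := ‖c‖ * ∏ k ∈ Finset.range n, ((Rn n + ‖w k‖) / ‖w n - w k‖) with hA
    have hA0 : 0 ≤ A := by
      apply mul_nonneg (norm_nonneg c)
      apply Finset.prod_nonneg
      intro k _
      exact div_nonneg (add_nonneg (hRn_nonneg n) (norm_nonneg _)) (norm_nonneg _)
    have htend : Filter.Tendsto (fun M : ℕ => A * (1/2:ℝ)^M) Filter.atTop (nhds 0) := by
      have := tendsto_pow_atTop_nhds_zero_of_lt_one (by norm_num : (0:ℝ) ≤ 1/2) (by norm_num)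
      simpa using this.const_mul A
    have hev : ∀ᶠ M in Filter.atTop, A * (1/2:ℝ)^M < (1/2)^n :=
      htend.eventually_lt_const (by positivity)
    obtain ⟨M, hM⟩ := hev.exists
    refine ⟨M, fun z hz _ => ?_⟩
    have hφb : ‖φ n z‖ ≤ 1/2 := by
      calc ‖φ n z‖ ≤ ‖z‖ / ‖w n‖ := hφ_bound n z h
      _ ≤ (‖w n‖ / 2) / ‖w n‖ := by
          exact div_le_div_of_nonneg_right (hz.trans (min_le_right _ _)) hwpos.le
      _ = 1/2 := by field_simp
    have hprodb : ‖∏ k ∈ Finset.range n, ℓ n k z‖ ≤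
        ∏ k ∈ Finset.range n, ((Rn n + ‖w k‖) / ‖w n - w k‖) := by
      rw [norm_prod]
      apply Finset.prod_le_prod (fun k _ => norm_nonneg _)
      intro k _
      refine (hℓ_bound n k z).trans ?_
      rcases eq_or_ne (w n) (w k) with hh | hh
      · simp [hh]
      · exact div_le_div_of_nonneg_right (by linarith [hz]) (norm_nonneg _)
    calc ‖c * bump n M z‖ = ‖c‖ * (‖∏ k ∈ Finset.range n, ℓ n k z‖ * ‖φ n z‖^M) := by
          simp [hbumpdef, norm_mul, norm_prod, norm_pow]
    _ ≤ ‖c‖ * ((∏ k ∈ Finset.range n, ((Rn n + ‖w k‖) / ‖w n - w k‖)) * (1/2)^M) := by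
          apply mul_le_mul_of_nonneg_left ?_ (norm_nonneg c)
          apply mul_le_mul hprodb (pow_le_pow_left₀ (norm_nonneg _) hφb M)
            (by positivity) (Finset.prod_nonneg ?_)
          intro k _
          have := hRn_nonneg n
          apply div_nonneg (by positivity) (norm_nonneg _)
    _ = A * (1/2)^M := by ring
    _ ≤ (1/2)^n := le_of_lt hM
  choose Mch hMch using exM
  -- recursive construction of partial interpolants
  set F : ℕ → E → ℂ := fun n => Nat.rec (motive := fun _ => E → ℂ) (fun _ => 0)
    (fun n Fn => fun z => Fn z + (v n - Fn (w n)) * bump n (Mch n (v n - Fn (w n))) z) n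
    with hFdef
  have hstep : ∀ n z, F (n+1) z
      = F n z + (v n - F n (w n)) * bump n (Mch n (v n - F n (w n))) z := fun n z => rfl
  have hFdiff : ∀ n, Differentiable ℂ (F n) := by
    intro n
    induction n with
    | zero => exact differentiable_const 0
    | succ n ih =>
        have : F (n+1) = fun z => F n z + (v n - F n (w n)) *
            bump n (Mch n (v n - F n (w n))) z := funext fun z => hstep n z
        rw [this]
        exact ih.add ((hbumpdiff _ _).const_mul _)
  have hFval : ∀ j n, j < n → F n (w j) = v j := by
    intro j n
    induction n with
    | zero => intro h; exact absurd h (Nat.not_lt_zero j)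
    | succ n ih =>
        intro h
        rcases Nat.lt_succ_iff_lt_or_eq.1 h with h' | rfl
        · rw [hstep, hbump_zero n _ j h', mul_zero, add_zero, ih h']
        · rw [hstep, hbump_self]; ring
  -- the correction terms
  set g : ℕ → E → ℂ := fun n z => F (n+1) z - F n z with hgdef
  have hgeq : ∀ n z, g n z = (v n - F n (w n)) * bump n (Mch n (v n - F n (w n))) z := by
    intro n z; rw [hgdef]; simp only []; rw [hstep]; ring
  have hgdiff : ∀ n, Differentiable ℂ (g n) := fun n => (hFdiff (n+1)).sub (hFdiff n)
  have hb : ∀ r : ℝ, 0 < r → ∃ n₀ : ℕ, ∀ n, n₀ ≤ n → ∀ z : E, ‖z‖ ≤ r →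
      ‖g n z‖ ≤ (1/2)^n := by
    intro r hr
    obtain ⟨N₁, hN₁⟩ := (hdisc (2*r)).bddAbove
    refine ⟨max (N₁+1) ⌈r⌉₊, fun n hn z hz => ?_⟩
    have hn1 : N₁ + 1 ≤ n := le_trans (le_max_left _ _) hn
    have hn2 : (⌈r⌉₊ : ℕ) ≤ n := le_trans (le_max_right _ _) hn
    have hwn : 2*r < ‖w n‖ := by
      by_contra hcon
      push_neg at hcon
      have : n ∈ {j : ℕ | ‖w j‖ ≤ 2*r} := hcon
      have := hN₁ this
      omega
    have hwn0 : w n ≠ 0 := by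
      intro h0
      rw [h0, norm_zero] at hwn
      linarith
    have hRge : r ≤ Rn n := by
      apply le_min
      · exact le_trans (Nat.le_ceil r) (Nat.cast_le.2 hn2)
      · linarith
    have := hMch n (v n - F n (w n)) z (hz.trans hRge) hwn0
    rw [hgeq]
    exact this
  obtain ⟨f, hfdiff, hfsum⟩ := differentiable_tsum_of_bound hgdiff hb
  refine ⟨f, hfdiff, fun j => ?_⟩
  have h1 : ∑' n, g n (w j) = f (w j) := (hfsum (w j)).tsum_eq
  rw [← h1]
  have h2 : ∑' n, g n (w j) = ∑ n ∈ Finset.range (j+1), g n (w j) := by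
    apply tsum_eq_sum
    intro n hn
    have hjn : j < n := by
      simp only [Finset.mem_range, not_lt] at hn
      omega
    rw [hgeq, hbump_zero n _ j hjn, mul_zero]
  rw [h2]
  have h3 : ∑ n ∈ Finset.range (j+1), g n (w j) = F (j+1) (w j) - F 0 (w j) := by
    exact Finset.sum_range_sub (fun n => F n (w j)) (j+1)
  rw [h3, hFval j (j+1) (Nat.lt_succ_self j)]
  have : F 0 (w j) = 0 := rfl
  rw [this, sub_zero]
end Interp


section Poly

/-- Base-M digit uniqueness. -/
lemma digits_injective : ∀ (n : ℕ) (M : ℕ) (α β : Fin n → ℕ),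
    (∀ i, α i < M) → (∀ i, β i < M) →
    (∑ i, α i * M^(i:ℕ)) = (∑ i, β i * M^(i:ℕ)) → α = β := by
  intro n
  induction n with
  | zero => intro M α β _ _ _; funext i; exact absurd i.2 (Nat.not_lt_zero _)
  | succ n ih =>
      intro M α β hα hβ hsum
      have hM : 0 < M := Nat.pos_of_ne_zero (fun h => by subst h; exact absurd (hα 0) (by simp))
      have hform : ∀ γ : Fin (n+1) → ℕ, (∑ i, γ i * M^(i:ℕ))
          = γ 0 + M * ∑ j : Fin n, γ j.succ * M^(j:ℕ) := by
        intro γ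
        rw [Fin.sum_univ_succ]
        simp only [Fin.val_zero, pow_zero, mul_one, Fin.val_succ]
        congr 1
        rw [Finset.mul_sum]
        apply Finset.sum_congr rfl
        intro j _
        ring
      rw [hform α, hform β] at hsum
      set Sa := ∑ j : Fin n, α j.succ * M^(j:ℕ)
      set Sb := ∑ j : Fin n, β j.succ * M^(j:ℕ)
      have h0 : α 0 = β 0 := by
        have h1 : (α 0 + M * Sa) % M = α 0 := by
          rw [Nat.add_mul_mod_self_left]
          exact Nat.mod_eq_of_lt (hα 0)
        have h2 : (β 0 + M * Sb) % M = β 0 := by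
          rw [Nat.add_mul_mod_self_left]
          exact Nat.mod_eq_of_lt (hβ 0)
        rw [← h1, ← h2, hsum]
      have hS : Sa = Sb := by
        have : M * Sa = M * Sb := by omega
        exact Nat.eq_of_mul_eq_mul_left hM this
      have htail : (fun j : Fin n => α j.succ) = fun j => β j.succ :=
        ih M _ _ (fun j => hα j.succ) (fun j => hβ j.succ) hS
      funext i
      refine Fin.cases ?_ ?_ i
      · exact h0
      · intro j; exact congrFun htail j

/-- Cauchy bound for roots of a polynomial with known top coefficient. -/
lemma root_bound {Q : Polynomial ℂ} {D : ℕ} (hD : 1 ≤ D)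
    (hcD : Q.coeff D ≠ 0) (hhigh : ∀ k, D < k → Q.coeff k = 0)
    {β : ℂ} (hroot : Q.eval β = 0) :
    ‖β‖ ≤ 1 + (∑ k ∈ Finset.range D, ‖Q.coeff k‖) / ‖Q.coeff D‖ := by
  set S := ∑ k ∈ Finset.range D, ‖Q.coeff k‖ with hS
  have hcpos : 0 < ‖Q.coeff D‖ := norm_pos_iff.2 hcD
  have hSpos : 0 ≤ S := Finset.sum_nonneg fun k _ => norm_nonneg _
  by_contra hcon
  push_neg at hcon
  have hβ1 : 1 ≤ ‖β‖ := by
    have : 0 ≤ S / ‖Q.coeff D‖ := div_nonneg hSpos hcpos.le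
    linarith
  have hnd : Q.natDegree < D + 1 :=
    Nat.lt_succ_of_le (Polynomial.natDegree_le_iff_coeff_eq_zero.2 hhigh)
  have heval := Polynomial.eval_eq_sum_range' hnd β
  rw [hroot] at heval
  rw [Finset.sum_range_succ] at heval
  have hkey : Q.coeff D * β^D = -∑ k ∈ Finset.range D, Q.coeff k * β^k := by
    linear_combination heval.symm
  have h1 : ‖Q.coeff D‖ * ‖β‖^D ≤ S * ‖β‖^(D-1) := by
    calc ‖Q.coeff D‖ * ‖β‖^D = ‖Q.coeff D * β^D‖ := by rw [norm_mul, norm_pow]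
    _ = ‖∑ k ∈ Finset.range D, Q.coeff k * β^k‖ := by rw [hkey, norm_neg]
    _ ≤ ∑ k ∈ Finset.range D, ‖Q.coeff k * β^k‖ := norm_sum_le _ _
    _ ≤ ∑ k ∈ Finset.range D, ‖Q.coeff k‖ * ‖β‖^(D-1) := by
        apply Finset.sum_le_sum
        intro k hk
        rw [norm_mul, norm_pow]
        apply mul_le_mul_of_nonneg_left ?_ (norm_nonneg _)
        have hkD : k < D := Finset.mem_range.1 hk
        exact pow_le_pow_right₀ hβ1 (by omega : k ≤ D - 1)
    _ = S * ‖β‖^(D-1) := by rw [hS, ← Finset.sum_mul]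
  have hpow : ‖β‖^D = ‖β‖ * ‖β‖^(D-1) := by
    conv_lhs => rw [show D = (D-1) + 1 by omega]
    ring
  rw [hpow, ← mul_assoc] at h1
  have hpowpos : 0 < ‖β‖^(D-1) := pow_pos (by linarith) _
  have h2 : ‖Q.coeff D‖ * ‖β‖ ≤ S := le_of_mul_le_mul_right h1 hpowpos
  have h3 : ‖β‖ ≤ S / ‖Q.coeff D‖ := (le_div_iff₀ hcpos).2 (by linarith [h2, mul_comm ‖Q.coeff D‖ ‖β‖])
  linarith

/-- Evaluation of a multivariate polynomial is continuous. -/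
lemma continuous_mv_eval {m : ℕ} (φ : MvPolynomial (Fin m) ℂ) :
    Continuous (fun y : Fin m → ℂ => MvPolynomial.eval y φ) := by
  apply MvPolynomial.induction_on φ
  · intro c; simpa using continuous_const
  · intro p q hp hq; simp only [map_add]; exact hp.add hq
  · intro p i hp
    simp only [map_mul, MvPolynomial.eval_X]; exact hp.mul (continuous_apply i)

end Poly

section Shear
open MvPolynomial

/-- Power-shear structure lemma: after the substitution
`z i ↦ z i + (z 0)^(M^i)` a nonconstant polynomial becomes monic (with constant
leading coefficient) in the variable `z 0`, yielding a continuous root bound. -/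
lemma poly_shear_structure {m : ℕ} (q : MvPolynomial (Fin (m+1)) ℂ)
    (hnc : ∃ α ∈ q.support, α ≠ 0) :
    ∃ (g : ℂ → Fin m → ℂ) (B : (Fin m → ℂ) → ℝ),
      (∀ j, Differentiable ℂ (fun t => g t j)) ∧ Continuous B ∧
      ∃ r : MvPolynomial (Fin (m+1)) ℂ,
        (∀ z : Fin (m+1) → ℂ,
          eval z r = eval (Fin.cons (z 0) (fun j => Fin.tail z j + g (z 0) j)) q) ∧
        (∀ (β : ℂ) (y : Fin m → ℂ), eval (Fin.cons β y) r = 0 → ‖β‖ ≤ B y) := by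
  classical
  obtain ⟨α₀, hα₀mem, hα₀ne⟩ := hnc
  have hq : q ≠ 0 := fun h => by simp [h] at hα₀mem
  set M : ℕ := q.totalDegree + 1 with hM
  have hMpos : 0 < M := Nat.succ_pos _
  set g : ℂ → Fin m → ℂ := fun t j => t^(M^((j:ℕ)+1)) with hg
  have hgdiff : ∀ j, Differentiable ℂ (fun t => g t j) := by
    intro j
    simp only [hg]
    exact differentiable_pow _
  set sub : Fin (m+1) → MvPolynomial (Fin (m+1)) ℂ :=
    fun i => Fin.cases (X 0) (fun j => X j.succ + (X 0)^(M^((j:ℕ)+1))) i with hsub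
  set r : MvPolynomial (Fin (m+1)) ℂ := bind₁ sub q with hr
  have heval : ∀ z : Fin (m+1) → ℂ,
      eval z r = eval (Fin.cons (z 0) (fun j => Fin.tail z j + g (z 0) j)) q := by
    intro z
    have h1 : eval z r = eval (fun i => eval z (sub i)) q :=
      eval₂Hom_bind₁ (RingHom.id ℂ) z sub q
    rw [h1]
    have harg : (fun i => eval z (sub i)) = Fin.cons (z 0) (fun j => Fin.tail z j + g (z 0) j) := by
      funext i
      refine Fin.cases ?_ ?_ i
      · simp [hsub]
      · intro j
        simp only [hsub, Fin.cases_succ, map_add, map_pow, eval_X, Fin.cons_succ]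
        rfl
    rw [harg]
  -- the one-variable picture
  set T : (Fin (m+1) →₀ ℕ) → Polynomial (MvPolynomial (Fin m) ℂ) :=
    fun α => Polynomial.X^(α 0) *
      ∏ j : Fin m, (Polynomial.C (X j) + Polynomial.X^(M^((j:ℕ)+1)))^(α j.succ) with hT
  set P : Polynomial (MvPolynomial (Fin m) ℂ) := finSuccEquiv ℂ m r with hP
  have hfC : ∀ c : ℂ, finSuccEquiv ℂ m (C c) = Polynomial.C (C c) := by
    intro c
    have h := RingHom.congr_fun (finSuccEquiv_comp_C_eq_C (R := ℂ) m) c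
    calc finSuccEquiv ℂ m (C c)
        = finSuccEquiv ℂ m ((finSuccEquiv ℂ m).symm (Polynomial.C (C c))) := by
          rw [show ((finSuccEquiv ℂ m).symm (Polynomial.C (C c))) = C c from h]
    _ = Polynomial.C (C c) := (finSuccEquiv ℂ m).apply_symm_apply _
  -- expansion of P as a sum of monic pieces
  have h1 : r = ∑ α ∈ q.support, C (q.coeff α) * ∏ i : Fin (m+1), sub i ^ α i := by
    conv_lhs => rw [hr, MvPolynomial.as_sum q, map_sum]
    apply Finset.sum_congr rfl
    intro α _
    rw [bind₁_monomial]
    congr 1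
    apply Finset.prod_subset (Finset.subset_univ _)
    intro i _ hi
    rw [Finsupp.notMem_support_iff.1 hi, pow_zero]
  have hexpand : P = ∑ α ∈ q.support, Polynomial.C (C (q.coeff α)) * T α := by
    rw [hP, h1, map_sum]
    apply Finset.sum_congr rfl
    intro α _
    rw [map_mul, hfC, map_prod]
    congr 1
    rw [hT]
    simp only []
    rw [Fin.prod_univ_succ]
    refine congrArg₂ (· * ·) ?_ ?_
    · rw [map_pow]
      refine congrArg (· ^ α 0) ?_
      have : sub 0 = X 0 := rfl
      rw [this, finSuccEquiv_X_zero]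
    · apply Finset.prod_congr rfl
      intro j _
      rw [map_pow]
      refine congrArg (· ^ α j.succ) ?_
      have : sub j.succ = X j.succ + (X 0)^(M^((j:ℕ)+1)) := rfl
      rw [this, map_add, map_pow, finSuccEquiv_X_zero, finSuccEquiv_X_succ]
  -- the exponent function
  set e : (Fin (m+1) →₀ ℕ) → ℕ := fun α => ∑ i : Fin (m+1), α i * M^(i:ℕ) with he
  have hTmonic : ∀ α, (T α).Monic := by
    intro α
    rw [hT]
    apply Polynomial.Monic.mul (Polynomial.monic_X_pow _)
    apply Polynomial.monic_prod_of_monic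
    intro j _
    apply Polynomial.Monic.pow
    rw [add_comm]
    apply Polynomial.monic_X_pow_add
    refine lt_of_le_of_lt Polynomial.degree_C_le ?_
    exact_mod_cast pow_pos hMpos ((j:ℕ)+1)
  have hfactdeg : ∀ j : Fin m,
      (Polynomial.C (X j : MvPolynomial (Fin m) ℂ)
        + Polynomial.X^(M^((j:ℕ)+1))).natDegree = M^((j:ℕ)+1) := by
    intro j
    have hlt : (Polynomial.C (X j : MvPolynomial (Fin m) ℂ)).degree
        < (Polynomial.X^(M^((j:ℕ)+1)) : Polynomial (MvPolynomial (Fin m) ℂ)).degree := by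
      rw [Polynomial.degree_X_pow]
      refine lt_of_le_of_lt Polynomial.degree_C_le ?_
      exact_mod_cast pow_pos hMpos ((j:ℕ)+1)
    have hdeg : (Polynomial.C (X j : MvPolynomial (Fin m) ℂ)
        + Polynomial.X^(M^((j:ℕ)+1))).degree = ((M^((j:ℕ)+1) : ℕ) : WithBot ℕ) := by
      rw [Polynomial.degree_add_eq_right_of_degree_lt hlt, Polynomial.degree_X_pow]
    exact Polynomial.natDegree_eq_of_degree_eq_some hdeg
  have hTdeg : ∀ α, (T α).natDegree = e α := by
    intro α
    rw [hT]
    simp only []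
    rw [Polynomial.Monic.natDegree_mul (Polynomial.monic_X_pow _)
      (Polynomial.monic_prod_of_monic _ _ (fun j _ => by
        apply Polynomial.Monic.pow
        rw [add_comm]
        apply Polynomial.monic_X_pow_add
        refine lt_of_le_of_lt Polynomial.degree_C_le ?_
        exact_mod_cast pow_pos hMpos ((j:ℕ)+1)))]
    rw [Polynomial.natDegree_X_pow]
    rw [Polynomial.natDegree_prod]
    · rw [he]
      simp only []
      rw [Fin.sum_univ_succ]
      simp only [Fin.val_zero, pow_zero, mul_one, Fin.val_succ]
      congr 1
      apply Finset.sum_congr rfl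
      intro j _
      rw [Polynomial.natDegree_pow, hfactdeg j]
    · intro j _
      apply Polynomial.Monic.ne_zero
      apply Polynomial.Monic.pow
      rw [add_comm]
      apply Polynomial.monic_X_pow_add
      refine lt_of_le_of_lt Polynomial.degree_C_le ?_
      exact_mod_cast pow_pos hMpos ((j:ℕ)+1)
  -- digit bounds and injectivity of e on the support
  have hdig : ∀ α ∈ q.support, ∀ i, α i < M := by
    intro α hα i
    have h1 : α i ≤ α.sum (fun _ n => n) := by
      by_cases h : α i = 0
      · rw [h]; exact Nat.zero_le _
      · exact Finset.single_le_sum (fun _ _ => Nat.zero_le _)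
          (Finsupp.mem_support_iff.2 h)
    have h2 := le_totalDegree hα
    omega
  have heinj : ∀ α ∈ q.support, ∀ β ∈ q.support, e α = e β → α = β := by
    intro α hα β hβ hab
    have := digits_injective (m+1) M (fun i => α i) (fun i => β i)
      (fun i => hdig α hα i) (fun i => hdig β hβ i) hab
    exact DFunLike.coe_injective this
  have hsupp : q.support.Nonempty := ⟨α₀, hα₀mem⟩
  obtain ⟨αs, hαsmem, hαsmax⟩ := Finset.exists_max_image q.support e hsupp
  set D : ℕ := e αs with hD
  set c : ℂ := q.coeff αs with hc
  have hc0 : c ≠ 0 := MvPolynomial.mem_support_iff.1 hαsmem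
  have hD1 : 1 ≤ D := by
    obtain ⟨i, hi⟩ : ∃ i, α₀ i ≠ 0 := by
      by_contra hcon
      push_neg at hcon
      exact hα₀ne (Finsupp.ext hcon)
    have h1 : α₀ i * M^(i:ℕ) ≤ e α₀ := by
      simp only [he]
      exact Finset.single_le_sum (f := fun i : Fin (m+1) => α₀ i * M^(i:ℕ))
        (fun _ _ => Nat.zero_le _) (Finset.mem_univ i)
    have h2 : 1 ≤ α₀ i * M^(i:ℕ) :=
      Nat.one_le_iff_ne_zero.2 (Nat.mul_ne_zero hi (pow_pos hMpos (i:ℕ)).ne')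
    exact le_trans (le_trans h2 h1) (hαsmax α₀ hα₀mem)
  -- coefficient structure of P
  have hPD : P.coeff D = C c := by
    rw [hexpand, Polynomial.finset_sum_coeff]
    rw [Finset.sum_eq_single αs]
    · rw [Polynomial.coeff_C_mul, hD, ← hTdeg αs, (hTmonic αs).coeff_natDegree, mul_one]
    · intro α hα hne
      rw [Polynomial.coeff_C_mul, Polynomial.coeff_eq_zero_of_natDegree_lt, mul_zero]
      rw [hTdeg α]
      refine lt_of_le_of_ne (hαsmax α hα) ?_
      intro h
      exact hne (heinj α hα αs hαsmem h)
    · intro h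
      exact absurd hαsmem h
  have hPhigh : ∀ k, D < k → P.coeff k = 0 := by
    intro k hk
    rw [hexpand, Polynomial.finset_sum_coeff]
    apply Finset.sum_eq_zero
    intro α hα
    rw [Polynomial.coeff_C_mul, Polynomial.coeff_eq_zero_of_natDegree_lt, mul_zero]
    rw [hTdeg α]
    exact lt_of_le_of_lt (hαsmax α hα) hk
  -- the bound function
  set B : (Fin m → ℂ) → ℝ :=
    fun y => 1 + (∑ k ∈ Finset.range D, ‖eval y (P.coeff k)‖) / ‖c‖ with hB
  have hBcont : Continuous B := by
    rw [hB]
    apply Continuous.add continuous_const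
    apply Continuous.div_const
    apply continuous_finset_sum
    intro k _
    exact (continuous_mv_eval (P.coeff k)).norm
  refine ⟨g, B, hgdiff, hBcont, r, heval, ?_⟩
  intro β y hβ
  have hQ : Polynomial.eval β (Polynomial.map (eval y) P) = 0 := by
    rw [← eval_eq_eval_mv_eval', hβ]
  have hQD : (Polynomial.map (eval y) P).coeff D = c := by
    rw [Polynomial.coeff_map, hPD, eval_C]
  have hQhigh : ∀ k, D < k → (Polynomial.map (eval y) P).coeff k = 0 := by
    intro k hk
    rw [Polynomial.coeff_map, hPhigh k hk, map_zero]
  have := root_bound hD1 (by rw [hQD]; exact hc0) hQhigh hQ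
  rw [hQD] at this
  refine this.trans (le_of_eq ?_)
  rw [hB]
  congr 1
  congr 1
  apply Finset.sum_congr rfl
  intro k _
  rw [Polynomial.coeff_map]

end Shear


section Shears

variable {m : ℕ}

/-- The continuous linear map taking the tail. -/
noncomputable def tailCLM (m : ℕ) : (Fin (m+1) → ℂ) →L[ℂ] (Fin m → ℂ) :=
  ContinuousLinearMap.pi (fun i => ContinuousLinearMap.proj i.succ)

lemma tailCLM_apply (z : Fin (m+1) → ℂ) : tailCLM m z = Fin.tail z := rfl

lemma differentiable_cons {E : Type*} [NormedAddCommGroup E] [NormedSpace ℂ E]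
    {u : E → ℂ} {w : E → Fin m → ℂ} (hu : Differentiable ℂ u)
    (hw : ∀ i, Differentiable ℂ (fun z => w z i)) :
    Differentiable ℂ (fun z => Fin.cons (u z) (w z) : E → Fin (m+1) → ℂ) := by
  apply differentiable_pi.2
  intro i
  refine Fin.cases ?_ ?_ i
  · simpa using hu
  · intro j
    simpa using hw j

/-- Head shear `z ↦ (z₀ + f(tail z), tail z)` is an automorphism. -/
lemma isAutomorphism_head_shear (f : (Fin m → ℂ) → ℂ) (hf : Differentiable ℂ f) :
    IsAutomorphism (fun z : Fin (m+1) → ℂ => Fin.cons (z 0 + f (Fin.tail z)) (Fin.tail z)) := by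
  have htail : Differentiable ℂ (fun z : Fin (m+1) → ℂ => Fin.tail z) :=
    (tailCLM m).differentiable
  have htaili : ∀ i : Fin m, Differentiable ℂ (fun z : Fin (m+1) → ℂ => Fin.tail z i) := by
    intro i
    exact (ContinuousLinearMap.proj (R := ℂ) (φ := fun _ : Fin (m+1) => ℂ) i.succ).differentiable
  have hhead : Differentiable ℂ (fun z : Fin (m+1) → ℂ => z 0) :=
    (ContinuousLinearMap.proj (R := ℂ) (φ := fun _ : Fin (m+1) => ℂ) 0).differentiable
  have hcomp : Differentiable ℂ (fun z : Fin (m+1) → ℂ => f (Fin.tail z)) := hf.comp htail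
  constructor
  · exact differentiable_cons (hhead.add hcomp) htaili
  refine ⟨fun z => Fin.cons (z 0 - f (Fin.tail z)) (Fin.tail z), ?_, ?_, ?_⟩
  · exact differentiable_cons (hhead.sub hcomp) htaili
  · intro z
    simp only [Fin.tail_cons, Fin.cons_zero]
    rw [add_sub_cancel_right]
    exact Fin.cons_self_tail z
  · intro z
    simp only [Fin.tail_cons, Fin.cons_zero]
    rw [sub_add_cancel]
    exact Fin.cons_self_tail z

/-- Tail shear `z ↦ (z₀, tail z + g z₀)` is an automorphism. -/
lemma isAutomorphism_tail_shear (g : ℂ → Fin m → ℂ)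
    (hg : ∀ i, Differentiable ℂ (fun t => g t i)) :
    IsAutomorphism (fun z : Fin (m+1) → ℂ =>
      Fin.cons (z 0) (fun i => Fin.tail z i + g (z 0) i)) := by
  have htaili : ∀ i : Fin m, Differentiable ℂ (fun z : Fin (m+1) → ℂ => Fin.tail z i) := by
    intro i
    exact (ContinuousLinearMap.proj (R := ℂ) (φ := fun _ : Fin (m+1) => ℂ) i.succ).differentiable
  have hhead : Differentiable ℂ (fun z : Fin (m+1) → ℂ => z 0) :=
    (ContinuousLinearMap.proj (R := ℂ) (φ := fun _ : Fin (m+1) => ℂ) 0).differentiable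
  constructor
  · exact differentiable_cons hhead
      (fun i => (htaili i).add ((hg i).comp hhead))
  refine ⟨fun z => Fin.cons (z 0) (fun i => Fin.tail z i - g (z 0) i), ?_, ?_, ?_⟩
  · exact differentiable_cons hhead
      (fun i => (htaili i).sub ((hg i).comp hhead))
  · intro z
    simp only [Fin.tail_cons, Fin.cons_zero]
    have : (fun i => Fin.tail z i + g (z 0) i - g (z 0) i) = Fin.tail z := by
      funext i; ring
    rw [this]
    exact Fin.cons_self_tail z
  · intro z
    simp only [Fin.tail_cons, Fin.cons_zero]
    have : (fun i => Fin.tail z i - g (z 0) i + g (z 0) i) = Fin.tail z := by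
      funext i; ring
    rw [this]
    exact Fin.cons_self_tail z

lemma IsAutomorphism.comp {N : ℕ} {Φ Ψ : (Fin N → ℂ) → (Fin N → ℂ)}
    (hΦ : IsAutomorphism Φ) (hΨ : IsAutomorphism Ψ) : IsAutomorphism (Φ ∘ Ψ) := by
  obtain ⟨hΦd, Φi, hΦid, hΦl, hΦr⟩ := hΦ
  obtain ⟨hΨd, Ψi, hΨid, hΨl, hΨr⟩ := hΨ
  refine ⟨hΦd.comp hΨd, Ψi ∘ Φi, hΨid.comp hΦid, ?_, ?_⟩
  · intro z; simp [Function.comp, hΦl, hΨl]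
  · intro z; simp [Function.comp, hΨr, hΦr]

end Shears


/-- A discrete sequence contained in a proper algebraic subvariety of ℂ^N
is tame. -/
theorem stmt_11 {N : ℕ} (hN : 1 < N)
    (a : ℕ → (Fin N → ℂ)) (ha : DiscreteSeq a)
    (S : Set (MvPolynomial (Fin N) ℂ))
    (hproper : {z : Fin N → ℂ | ∀ p ∈ S, MvPolynomial.eval z p = 0} ≠ Set.univ)
    (haS : ∀ j, ∀ p ∈ S, MvPolynomial.eval (a j) p = 0) :
    Tame a := by
  classical
  obtain ⟨m, rfl⟩ : ∃ m, N = m + 1 := ⟨N - 1, by omega⟩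
  have hm0 : 0 < m := by omega
  obtain ⟨hainj, hafin⟩ := ha
  -- extract a nonzero polynomial vanishing on the sequence
  obtain ⟨z₀, hz₀⟩ := Set.ne_univ_iff_exists_notMem _ |>.1 hproper
  simp only [mem_setOf_eq, not_forall] at hz₀
  obtain ⟨q, hqS, hqz₀⟩ := hz₀
  have haq : ∀ j, MvPolynomial.eval (a j) q = 0 := fun j => haS j q hqS
  -- q is nonconstant
  have hnc : ∃ α ∈ q.support, α ≠ 0 := by
    by_contra hcon
    push_neg at hcon
    have hconst : ∀ z : Fin (m+1) → ℂ, MvPolynomial.eval z q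
        = ∑ α ∈ q.support, MvPolynomial.coeff α q := by
      intro z
      rw [MvPolynomial.eval_eq]
      apply Finset.sum_congr rfl
      intro α hα
      rw [hcon α hα]
      simp
    have h1 := hconst z₀
    have h2 := hconst (a 0)
    rw [haq 0] at h2
    rw [← h2] at h1
    exact hqz₀ h1
  obtain ⟨g, B, hgdiff, hBcont, r, hevalr, hroot⟩ := poly_shear_structure q hnc
  -- the inverse power shear and the transformed sequence
  set σ : (Fin (m+1) → ℂ) → (Fin (m+1) → ℂ) :=
    fun z => Fin.cons (z 0) (fun j => Fin.tail z j + g (z 0) j) with hσdef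
  set σinv : (Fin (m+1) → ℂ) → (Fin (m+1) → ℂ) :=
    fun z => Fin.cons (z 0) (fun j => Fin.tail z j - g (z 0) j) with hσinvdef
  have hσσinv : ∀ z, σ (σinv z) = z := by
    intro z
    simp only [hσdef, hσinvdef, Fin.cons_zero, Fin.tail_cons]
    have : (fun j => Fin.tail z j - g (z 0) j + g (z 0) j) = Fin.tail z := by
      funext j; ring
    rw [this]
    exact Fin.cons_self_tail z
  set b : ℕ → Fin (m+1) → ℂ := fun j => σinv (a j) with hbdef
  have hσb : ∀ j, σ (b j) = a j := fun j => hσσinv (a j)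
  have hbinj : Function.Injective b := by
    intro j l h
    apply hainj
    rw [← hσb j, ← hσb l, h]
  have hevalb : ∀ j, MvPolynomial.eval (b j) r = 0 := by
    intro j
    rw [hevalr (b j)]
    have : Fin.cons (b j 0) (fun i => Fin.tail (b j) i + g (b j 0) i) = σ (b j) := rfl
    rw [this, hσb j]
    exact haq j
  set β : ℕ → ℂ := fun j => b j 0 with hβdef
  set w : ℕ → Fin m → ℂ := fun j => Fin.tail (b j) with hwdef
  have hβB : ∀ j, ‖β j‖ ≤ B (w j) := by
    intro j
    apply hroot
    rw [show Fin.cons (β j) (w j) = b j from Fin.cons_self_tail (b j)]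
    exact hevalb j
  -- continuity of σ
  have hσcont : Continuous σ := by
    apply continuous_pi
    intro i
    refine Fin.cases ?_ ?_ i
    · simpa only [hσdef, Fin.cons_zero] using (continuous_apply (0 : Fin (m+1)))
    · intro i
      simp only [hσdef, Fin.cons_succ]
      exact ((continuous_apply i.succ).add
        (((hgdiff i).continuous).comp (continuous_apply 0)))
  -- norm-discreteness of b
  have hbfin : ∀ R : ℝ, {j : ℕ | ‖b j‖ ≤ R}.Finite := by
    intro R
    have hK : IsCompact (σ '' (closedBall 0 R)) :=
      (isCompact_closedBall (0 : Fin (m+1) → ℂ) R).image hσcont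
    apply (hafin _ hK).subset
    intro j hj
    refine ⟨b j, ?_, hσb j⟩
    simpa [mem_closedBall_zero_iff] using hj
  -- norm-discreteness of w
  have hwfin : ∀ R : ℝ, {j : ℕ | ‖w j‖ ≤ R}.Finite := by
    intro R
    rcases le_or_gt 0 R with hR | hR
    · have hcb : IsCompact (closedBall (0 : Fin m → ℂ) R) := isCompact_closedBall _ _
      obtain ⟨y₀, -, hy₀⟩ := hcb.exists_isMaxOn
        (nonempty_closedBall.2 hR) hBcont.continuousOn
      rw [isMaxOn_iff] at hy₀
      set C : ℝ := max (B y₀) R with hC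
      apply (hbfin C).subset
      intro j hj
      simp only [mem_setOf_eq] at hj ⊢
      have h0C : 0 ≤ C := le_trans (le_trans (norm_nonneg (w j)) hj) (le_max_right _ _)
      rw [pi_norm_le_iff_of_nonneg h0C]
      intro i
      refine Fin.cases ?_ ?_ i
      · calc ‖b j 0‖ = ‖β j‖ := rfl
        _ ≤ B (w j) := hβB j
        _ ≤ B y₀ := hy₀ (w j) (by simpa [mem_closedBall_zero_iff] using hj)

        _ ≤ C := le_max_left _ _
      · intro i
        calc ‖b j i.succ‖ = ‖w j i‖ := rfl
        _ ≤ ‖w j‖ := norm_le_pi_norm (w j) i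
        _ ≤ R := hj
        _ ≤ C := le_max_right _ _
    · convert Set.finite_empty
      apply Set.eq_empty_of_forall_notMem
      intro j hj
      exact absurd (le_trans (norm_nonneg _) hj) (not_le.2 hR)
  -- the set of tails is countably infinite
  have hWinf : (Set.range w).Infinite := by
    intro hfin
    obtain ⟨R, hR⟩ := (hfin.image (fun y => ‖y‖)).bddAbove
    have : {j : ℕ | ‖w j‖ ≤ R} = Set.univ := by
      apply Set.eq_univ_of_forall
      intro j
      exact hR ⟨w j, ⟨j, rfl⟩, rfl⟩
    have hfinuniv := hwfin R
    rw [this] at hfinuniv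
    exact Set.infinite_univ hfinuniv
  have hWcount : (Set.range w).Countable := Set.countable_range w
  have : Countable (Set.range w) := hWcount.to_subtype
  have : Infinite (Set.range w) := hWinf.to_subtype
  obtain ⟨den⟩ := nonempty_denumerable (Set.range w)
  set Eq : Set.range w ≃ ℕ := Denumerable.eqv (Set.range w) with hEq
  set ω : ℕ → Fin m → ℂ := fun n => (Eq.symm n : Fin m → ℂ) with hω
  have hωinj : Function.Injective ω := fun n1 n2 h =>
    Eq.symm.injective (Subtype.val_injective h)
  set idx : ℕ → ℕ := fun j => Eq ⟨w j, ⟨j, rfl⟩⟩ with hidxdef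
  have hidx : ∀ j, ω (idx j) = w j := by
    intro j
    simp only [hω, hidxdef, Equiv.symm_apply_apply]
  have hωfin : ∀ R : ℝ, {n : ℕ | ‖ω n‖ ≤ R}.Finite := by
    intro R
    have h1 : (Set.range w ∩ {y | ‖y‖ ≤ R}).Finite := by
      apply Set.Finite.subset ((hwfin R).image w)
      rintro y ⟨⟨j, rfl⟩, hy⟩
      exact ⟨j, hy, rfl⟩
    have h2 : {n : ℕ | ‖ω n‖ ≤ R} ⊆ ω ⁻¹' (Set.range w ∩ {y | ‖y‖ ≤ R}) := by
      intro n hn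
      refine ⟨(Eq.symm n).2, hn⟩
    exact (h1.preimage hωinj.injOn).subset h2
  -- choose the generic parameter t
  set BadP : ℕ × ℕ → Set ℂ := fun p => {t : ℂ | w p.1 ≠ w p.2 ∧
      β p.1 + (((B (w p.1) + ‖w p.1‖ : ℝ) : ℂ) + t * (((idx p.1 : ℕ) : ℂ)+1)⁻¹)
    = β p.2 + (((B (w p.2) + ‖w p.2‖ : ℝ) : ℂ) + t * (((idx p.2 : ℕ) : ℂ)+1)⁻¹)} with hBadP
  have hidxne : ∀ j l, w j ≠ w l → (((idx j : ℕ) : ℂ)+1)⁻¹ ≠ (((idx l : ℕ) : ℂ)+1)⁻¹ := by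
    intro j l hw h
    apply hw
    have h1 : ((idx j : ℕ) : ℂ) + 1 = ((idx l : ℕ) : ℂ) + 1 := inv_injective h
    have h2 : idx j = idx l := by
      have := add_right_cancel h1
      exact_mod_cast this
    rw [← hidx j, ← hidx l, h2]
  have hBadcount : (⋃ p, BadP p).Countable := by
    apply Set.countable_iUnion
    intro p
    apply Set.Subsingleton.countable
    intro t1 h1 t2 h2
    obtain ⟨hwne, he1⟩ := h1
    obtain ⟨-, he2⟩ := h2
    have hκ : (((idx p.1 : ℕ) : ℂ)+1)⁻¹ - (((idx p.2 : ℕ) : ℂ)+1)⁻¹ ≠ 0 :=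
      sub_ne_zero.2 (hidxne p.1 p.2 hwne)
    have hmul : (t1 - t2) * ((((idx p.1 : ℕ) : ℂ)+1)⁻¹ - (((idx p.2 : ℕ) : ℂ)+1)⁻¹) = 0 := by
      linear_combination he1 - he2
    rcases mul_eq_zero.1 hmul with h | h
    · exact sub_eq_zero.1 h
    · exact absurd h hκ
  obtain ⟨t, ht⟩ : ∃ t : ℂ, t ∉ ⋃ p, BadP p := by
    by_contra hcon
    push_neg at hcon
    exact not_countable_complex (hBadcount.mono (fun t _ => hcon t))
  -- the first interpolation
  obtain ⟨f₁, hf₁diff, hf₁⟩ := entire_interpolation ω hωinj hωfin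
    (fun n => ((B (ω n) + ‖ω n‖ : ℝ) : ℂ) + t * (((n : ℕ) : ℂ)+1)⁻¹)
  have hf₁w : ∀ j, f₁ (w j)
      = ((B (w j) + ‖w j‖ : ℝ) : ℂ) + t * (((idx j : ℕ) : ℂ)+1)⁻¹ := by
    intro j
    rw [← hidx j, hf₁ (idx j), hidx j]
  set γ : ℕ → ℂ := fun j => β j + f₁ (w j) with hγdef
  have hγinj : Function.Injective γ := by
    intro j l h
    by_cases hw : w j = w l
    · have hβeq : β j = β l := by
        have := h
        simp only [hγdef, hw] at this
        exact add_right_cancel this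
      apply hbinj
      rw [← Fin.cons_self_tail (b j), ← Fin.cons_self_tail (b l)]
      rw [show Fin.tail (b j) = w j from rfl, show Fin.tail (b l) = w l from rfl]
      rw [show b j 0 = β j from rfl, show b l 0 = β l from rfl, hβeq, hw]
    · exfalso
      apply ht
      apply Set.mem_iUnion.2 ⟨(j, l), ?_⟩
      refine ⟨hw, ?_⟩
      rw [← hf₁w j, ← hf₁w l]
      exact h
  have hnormcast : ∀ n : ℕ, ‖t * (((n : ℕ) : ℂ)+1)⁻¹‖ ≤ ‖t‖ := by
    intro n
    rw [norm_mul]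
    have h1 : ‖(((n : ℕ) : ℂ)+1)⁻¹‖ ≤ 1 := by
      rw [norm_inv]
      rw [show ((n : ℕ) : ℂ) + 1 = ((n+1 : ℕ) : ℂ) by push_cast; ring]
      rw [Complex.norm_natCast]
      rw [inv_le_one_iff₀]
      right
      exact_mod_cast Nat.succ_le_succ (Nat.zero_le n)
    calc ‖t‖ * ‖(((n : ℕ) : ℂ)+1)⁻¹‖ ≤ ‖t‖ * 1 :=
          mul_le_mul_of_nonneg_left h1 (norm_nonneg t)
    _ = ‖t‖ := mul_one _
  have hγlower : ∀ j, ‖w j‖ - ‖t‖ ≤ ‖γ j‖ := by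
    intro j
    have hBw : (0:ℝ) ≤ B (w j) := le_trans (norm_nonneg (β j)) (hβB j)
    have hcnn : (0:ℝ) ≤ B (w j) + ‖w j‖ := by positivity
    have h1 : ‖f₁ (w j)‖ ≥ (B (w j) + ‖w j‖) - ‖t‖ := by
      rw [hf₁w j]
      have h2 : ‖((B (w j) + ‖w j‖ : ℝ) : ℂ)‖ = B (w j) + ‖w j‖ := by
        rw [Complex.norm_real, Real.norm_eq_abs, abs_of_nonneg hcnn]
      have h3 := norm_sub_le
        (((B (w j) + ‖w j‖ : ℝ) : ℂ) + t * (((idx j : ℕ) : ℂ)+1)⁻¹)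
        (t * (((idx j : ℕ) : ℂ)+1)⁻¹)
      rw [add_sub_cancel_right, h2] at h3
      have h4 := hnormcast (idx j)
      linarith
    have h3 : ‖f₁ (w j)‖ ≤ ‖γ j‖ + ‖β j‖ := by
      have : f₁ (w j) = γ j - β j := by rw [hγdef]; ring
      rw [this]
      exact norm_sub_le _ _
    have h4 := hβB j
    linarith
  have hγfin : ∀ R : ℝ, {j : ℕ | ‖γ j‖ ≤ R}.Finite := by
    intro R
    apply (hwfin (R + ‖t‖)).subset
    intro j hj
    simp only [mem_setOf_eq] at hj ⊢
    linarith [hγlower j]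
  -- remaining interpolations (one variable)
  have hnatfin : ∀ R : ℝ, {j : ℕ | ‖((j : ℕ) : ℂ)‖ ≤ R}.Finite := by
    intro R
    apply (Set.finite_Iic ⌈R⌉₊).subset
    intro j hj
    simp only [mem_setOf_eq, Complex.norm_natCast] at hj
    simp only [Set.mem_Iic]
    have hjR : (j : ℝ) ≤ R := by exact_mod_cast hj
    exact_mod_cast hjR.trans (Nat.le_ceil R)
  have hnatinj : Function.Injective (fun j : ℕ => ((j : ℕ) : ℂ)) := fun j l h =>
    Nat.cast_injective h
  obtain ⟨hvec, hvecdiff, hvecval⟩ :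
      ∃ h : Fin m → ℂ → ℂ, (∀ i, Differentiable ℂ (h i)) ∧ ∀ i j, h i (γ j) = w j i := by
    have hch : ∀ i : Fin m, ∃ h : ℂ → ℂ, Differentiable ℂ h ∧ ∀ j, h (γ j) = w j i := by
      intro i
      exact entire_interpolation γ hγinj hγfin (fun j => w j i)
    choose h h1 h2 using hch
    exact ⟨h, h1, fun i j => h2 i j⟩
  obtain ⟨u, hudiff, huval⟩ := entire_interpolation γ hγinj hγfin (fun j => ((j : ℕ) : ℂ))
  obtain ⟨vf, hvfdiff, hvfval⟩ := entire_interpolation (fun j : ℕ => ((j : ℕ) : ℂ))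
    hnatinj hnatfin (fun j => γ j - ((j : ℕ) : ℂ))
  -- build the automorphism
  set A1 : (Fin (m+1) → ℂ) → (Fin (m+1) → ℂ) :=
    fun z => Fin.cons (z 0 + f₁ (Fin.tail z)) (Fin.tail z) with hA1
  set A2 : (Fin (m+1) → ℂ) → (Fin (m+1) → ℂ) :=
    fun z => Fin.cons (z 0) (fun i => Fin.tail z i + (-(hvec i (z 0)))) with hA2
  set A3 : (Fin (m+1) → ℂ) → (Fin (m+1) → ℂ) :=
    fun z => Fin.cons (z 0) (fun i => Fin.tail z i + (if (i:ℕ) = 0 then u (z 0) else 0)) with hA3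
  set A4 : (Fin (m+1) → ℂ) → (Fin (m+1) → ℂ) :=
    fun z => Fin.cons (z 0 + (-(vf (Fin.tail z ⟨0, hm0⟩)))) (Fin.tail z) with hA4
  set A5 : (Fin (m+1) → ℂ) → (Fin (m+1) → ℂ) :=
    fun z => Fin.cons (z 0) (fun i => Fin.tail z i + (if (i:ℕ) = 0 then -(z 0) else 0)) with hA5
  have hA1auto : IsAutomorphism A1 := isAutomorphism_head_shear f₁ hf₁diff
  have hA2auto : IsAutomorphism A2 :=
    isAutomorphism_tail_shear (fun s i => -(hvec i s)) (fun i => ((hvecdiff i).neg))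
  have hA3auto : IsAutomorphism A3 :=
    isAutomorphism_tail_shear (fun s i => if (i:ℕ) = 0 then u s else 0) (by
      intro i
      by_cases h : (i:ℕ) = 0
      · simpa [h] using hudiff
      · simpa [h] using differentiable_const (0:ℂ))
  have hA4auto : IsAutomorphism A4 :=
    isAutomorphism_head_shear (fun y => -(vf (y ⟨0, hm0⟩))) (by
      apply Differentiable.neg
      exact hvfdiff.comp
        (ContinuousLinearMap.proj (R := ℂ) (φ := fun _ : Fin m => ℂ) ⟨0, hm0⟩).differentiable)
  have hA5auto : IsAutomorphism A5 :=
    isAutomorphism_tail_shear (fun s i => if (i:ℕ) = 0 then -s else 0) (by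
      intro i
      by_cases h : (i:ℕ) = 0
      · simp only [h, ↓reduceIte]; exact differentiable_id.neg
      · simpa [h] using differentiable_const (0:ℂ))
  have hσinvauto : IsAutomorphism σinv := by
    have hform : σinv = fun z : Fin (m+1) → ℂ =>
        Fin.cons (z 0) (fun i => Fin.tail z i + (-(g (z 0) i))) := by
      funext z
      simp only [hσinvdef, sub_eq_add_neg]
    rw [hform]
    exact isAutomorphism_tail_shear (fun s i => -(g s i)) (fun i => (hgdiff i).neg)
  refine ⟨A5 ∘ A4 ∘ A3 ∘ A2 ∘ A1 ∘ σinv,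
    hA5auto.comp (hA4auto.comp (hA3auto.comp (hA2auto.comp (hA1auto.comp hσinvauto)))), ?_⟩
  intro j
  have st0 : σinv (a j) = b j := rfl
  have st1 : A1 (b j) = Fin.cons (γ j) (w j) := rfl
  have st2 : A2 (Fin.cons (γ j) (w j)) = Fin.cons (γ j) (fun _ => 0) := by
    simp only [hA2, Fin.cons_zero, Fin.tail_cons]
    funext i
    refine Fin.cases ?_ ?_ i
    · simp
    · intro k
      simp only [Fin.cons_succ, hvecval k j]
      ring
  have st3 : A3 (Fin.cons (γ j) (fun _ => 0)) =
      Fin.cons (γ j) (fun i => if (i:ℕ) = 0 then ((j : ℕ) : ℂ) else 0) := by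
    simp only [hA3, Fin.cons_zero, Fin.tail_cons]
    funext i
    refine Fin.cases ?_ ?_ i
    · simp
    · intro k
      simp only [Fin.cons_succ, huval j, zero_add]
  have st4 : A4 (Fin.cons (γ j) (fun i => if (i:ℕ) = 0 then ((j : ℕ) : ℂ) else 0)) =
      Fin.cons ((j : ℕ) : ℂ) (fun i => if (i:ℕ) = 0 then ((j : ℕ) : ℂ) else 0) := by
    simp only [hA4, Fin.cons_zero, Fin.tail_cons, if_true]
    congr 1
    rw [hvfval j]
    ring
  have st5 : A5 (Fin.cons ((j : ℕ) : ℂ) (fun i => if (i:ℕ) = 0 then ((j : ℕ) : ℂ) else 0)) =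
      Fin.cons ((j : ℕ) : ℂ) (fun _ => 0) := by
    simp only [hA5, Fin.cons_zero, Fin.tail_cons]
    funext i
    refine Fin.cases ?_ ?_ i
    · simp
    · intro k
      simp only [Fin.cons_succ]
      by_cases h : (k:ℕ) = 0
      · simp [h]
      · simp [h]
  have hfinal : (Fin.cons ((j : ℕ) : ℂ) (fun _ => 0) : Fin (m+1) → ℂ)
      = fun i : Fin (m+1) => if (i : ℕ) = 0 then ((j:ℕ) : ℂ) else 0 := by
    funext i
    refine Fin.cases ?_ ?_ i
    · simp
    · intro k
      simp [Fin.cons_succ]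
  simp only [Function.comp_apply, st0, st1, st2, st3, st4, st5, hfinal]
end
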